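/- arXiv:2102.07015 — 6 statements merged into one kernel-verified Lean document; each statement's English description precedes it below -/
import Mathlib

section
/- There exist universal constants C₁, C₂ ∈ (0,∞) such that for every α ∈ [0,1), every nonincreasing sequence (a_n)_{n≥1} of nonnegative reals with ∑_{n≥1} a_n² < ∞, and every real p ≥ 2, one has C₁ · R'_p ≤ R_p ≤ C₂ · R'_p, where R_p = ( (1−α) ∑_{n≥1} α^{n−1} ( p·a_n + √p · ( (1−α) ∑_{k>n} a_k² )^{1/2} )^p )^{1/p} and R'_p = p (1−α)^{1/p} ( ∑_{n≥1} α^{n−1} a_n^p )^{1/p} + √p · ( (1−α) ∑_{n≥1} a_n² )^{1/2}. -/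
open MeasureTheory ProbabilityTheory Filter Topology

private noncomputable def bfun (α : ℝ) (a : ℕ → ℝ) (n : ℕ) : ℝ :=
  Real.sqrt ((1 - α) * ∑' k, (a (n + 1 + k)) ^ 2)


private lemma tsum_tail_eq (v : ℕ → ℝ) (n : ℕ) :
    ∑' k, v (n + 1 + k) = ∑' m, if n < m then v m else 0 := by
  have hinj : Function.Injective (fun k : ℕ => n + 1 + k) := fun a b h => by
    simp only [add_right_inj] at h; exact h
  have hsupp : Function.support (fun m => if n < m then v m else 0) ⊆
      Set.range (fun k : ℕ => n + 1 + k) := by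
    intro m hm
    simp only [Function.mem_support, ne_eq, ite_eq_right_iff, not_forall] at hm
    obtain ⟨h1, -⟩ := hm
    refine ⟨m - (n + 1), ?_⟩
    show n + 1 + (m - (n + 1)) = m
    omega
  have h := hinj.tsum_eq hsupp
  rw [← h]
  apply tsum_congr
  intro k
  exact (if_pos (by omega : n < n + 1 + k)).symm

private lemma sqrt_add_le' (x y : ℝ) (hx : 0 ≤ x) (hy : 0 ≤ y) :
    Real.sqrt (x + y) ≤ Real.sqrt x + Real.sqrt y := by
  have h : x + y ≤ (Real.sqrt x + Real.sqrt y) ^ 2 := by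
    nlinarith [Real.sq_sqrt hx, Real.sq_sqrt hy, Real.sqrt_nonneg x, Real.sqrt_nonneg y]
  calc Real.sqrt (x + y) ≤ Real.sqrt ((Real.sqrt x + Real.sqrt y) ^ 2) := Real.sqrt_le_sqrt h
  _ = Real.sqrt x + Real.sqrt y := Real.sqrt_sq (by positivity)

private lemma key_id {α : ℝ} (hα0 : 0 ≤ α) (hα1 : α < 1) (u : ℕ → ℝ)
    (hu : ∀ n, 0 ≤ u n) (hsum : Summable u) :
    (1 - α) * ∑' n, u n =
      (∑' n, (1 - α) * α ^ n * ((1 - α) * ∑' k, u (n + 1 + k))) +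
        ∑' n, (1 - α) * α ^ n * u n := by
  have h1α : (0:ℝ) < 1 - α := by linarith
  set F : ℕ → ℕ → ℝ := fun n m => (1 - α) * α ^ n * ((1 - α) * (if n < m then u m else 0))
    with hF
  have hFnn : ∀ n m, 0 ≤ F n m := by
    intro n m
    have : 0 ≤ (if n < m then u m else 0) := by split <;> simp [hu m, le_refl]
    positivity
  have hite_sum : ∀ n : ℕ, Summable (fun m => if n < m then u m else 0) := by
    intro n
    apply Summable.of_nonneg_of_le _ _ hsum
    · intro m; split <;> simp [hu m, le_refl]
    · intro m; split <;> simp [hu m, le_refl]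
  have hrow : ∀ n, Summable (fun m => F n m) := by
    intro n
    simpa [hF, mul_assoc] using (((hite_sum n).mul_left (1 - α)).mul_left ((1 - α) * α ^ n))
  have hrow_sum_eq : ∀ n, ∑' m, F n m
      = (1 - α) * α ^ n * ((1 - α) * ∑' k, u (n + 1 + k)) := by
    intro n
    rw [tsum_tail_eq u n]
    simp only [hF]
    rw [tsum_mul_left, tsum_mul_left]
  have hcol : ∀ m, Summable (fun n => F n m) := by
    intro m
    apply summable_of_ne_finset_zero (s := Finset.range m)
    intro n hn
    simp only [Finset.mem_range, not_lt] at hn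
    simp [hF, if_neg (by omega : ¬ n < m)]
  have htail_le : ∀ n : ℕ, ∑' k, u (n + 1 + k) ≤ ∑' m, u m := by
    intro n
    rw [tsum_tail_eq u n]
    apply Summable.tsum_le_tsum _ (hite_sum n) hsum
    intro m; split <;> simp [hu m, le_refl]
  have hunc : Summable (Function.uncurry F) := by
    refine (summable_prod_of_nonneg (fun q => hFnn q.1 q.2)).2 ⟨fun n => hrow n, ?_⟩
    apply Summable.of_nonneg_of_le
      (fun n => tsum_nonneg (fun m => hFnn n m))
      (fun n => ?_)
      ((summable_geometric_of_lt_one hα0 hα1).mul_left ((1 - α) * ((1 - α) * ∑' m, u m)))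
    rw [hrow_sum_eq n]
    have h1 : (1 - α) * ∑' k, u (n + 1 + k) ≤ (1 - α) * ∑' m, u m :=
      mul_le_mul_of_nonneg_left (htail_le n) h1α.le
    calc (1 - α) * α ^ n * ((1 - α) * ∑' k, u (n + 1 + k))
        ≤ (1 - α) * α ^ n * ((1 - α) * ∑' m, u m) := by
          apply mul_le_mul_of_nonneg_left h1 (by positivity)
      _ = (1 - α) * ((1 - α) * ∑' m, u m) * α ^ n := by ring
  have hswap : ∑' n, ∑' m, F n m = ∑' m, ∑' n, F n m :=
    (Summable.tsum_comm' hunc hrow hcol).symm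
  have hcol_eq : ∀ m, ∑' n, F n m = (1 - α) * (1 - α ^ m) * u m := by
    intro m
    rw [tsum_eq_sum (s := Finset.range m) (by
      intro n hn
      simp only [Finset.mem_range, not_lt] at hn
      simp [hF, if_neg (by omega : ¬ n < m)])]
    have : ∀ n ∈ Finset.range m, F n m = ((1 - α) * ((1 - α) * u m)) * α ^ n := by
      intro n hn
      simp only [Finset.mem_range] at hn
      simp only [hF, if_pos hn]
      ring
    rw [Finset.sum_congr rfl this, ← Finset.mul_sum, geom_sum_eq (by
      intro hcon; rw [hcon] at hα1; exact lt_irrefl 1 hα1 : α ≠ 1)]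
    have hne : α - 1 ≠ 0 := by linarith
    field_simp
    ring
  have hsum1 : Summable (fun m => (1 - α) * (1 - α ^ m) * u m) := by
    apply Summable.of_nonneg_of_le _ _ (hsum.mul_left (1 - α))
    · intro m
      have h1 : α ^ m ≤ 1 := pow_le_one₀ hα0 hα1.le
      exact mul_nonneg (mul_nonneg h1α.le (by linarith)) (hu m)
    · intro m
      have h1 : (0:ℝ) ≤ α ^ m := pow_nonneg hα0 m
      have key : (1 - α) * (1 - α ^ m) ≤ (1 - α) * 1 :=
        mul_le_mul_of_nonneg_left (by linarith) h1α.le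
      calc (1 - α) * (1 - α ^ m) * u m ≤ ((1 - α) * 1) * u m :=
            mul_le_mul_of_nonneg_right key (hu m)
        _ = (1 - α) * u m := by ring
  have hsum2 : Summable (fun m => (1 - α) * α ^ m * u m) := by
    apply Summable.of_nonneg_of_le _ _ (hsum.mul_left (1 - α))
    · intro m
      exact mul_nonneg (mul_nonneg h1α.le (pow_nonneg hα0 m)) (hu m)
    · intro m
      have h1 : α ^ m ≤ 1 := pow_le_one₀ hα0 hα1.le
      have key : (1 - α) * α ^ m ≤ (1 - α) * 1 :=
        mul_le_mul_of_nonneg_left h1 h1α.le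
      calc (1 - α) * α ^ m * u m ≤ ((1 - α) * 1) * u m :=
            mul_le_mul_of_nonneg_right key (hu m)
        _ = (1 - α) * u m := by ring
  calc (1 - α) * ∑' n, u n = ∑' m, (1 - α) * u m := (tsum_mul_left).symm
    _ = ∑' m, ((1 - α) * (1 - α ^ m) * u m + (1 - α) * α ^ m * u m) := by
        apply tsum_congr; intro m; ring
    _ = (∑' m, (1 - α) * (1 - α ^ m) * u m) + ∑' m, (1 - α) * α ^ m * u m :=
        Summable.tsum_add hsum1 hsum2
    _ = (∑' m, ∑' n, F n m) + ∑' m, (1 - α) * α ^ m * u m := by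
        rw [tsum_congr hcol_eq]
    _ = (∑' n, ∑' m, F n m) + ∑' m, (1 - α) * α ^ m * u m := by rw [hswap]
    _ = (∑' n, (1 - α) * α ^ n * ((1 - α) * ∑' k, u (n + 1 + k)))
        + ∑' n, (1 - α) * α ^ n * u n := by rw [tsum_congr hrow_sum_eq]


private lemma jensen_tsum {w x : ℕ → ℝ} (hw : ∀ n, 0 ≤ w n) (hx : ∀ n, 0 ≤ x n)
    (hws : Summable w) (hW : ∑' n, w n = 1) {p : ℝ} (hp : 2 ≤ p)
    (hsp : Summable fun n => w n * x n ^ p) :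
    Real.sqrt (∑' n, w n * x n ^ 2) ≤ (∑' n, w n * x n ^ p) ^ (1 / p) := by
  have hp0 : (0:ℝ) < p := by linarith
  have hpne : p ≠ 0 := ne_of_gt hp0
  have hT0 : 0 ≤ ∑' n, w n * x n ^ p :=
    tsum_nonneg fun n => mul_nonneg (hw n) (Real.rpow_nonneg (hx n) p)
  rcases eq_or_lt_of_le hp with heq | hlt
  · -- p = 2
    have h2 : ∀ n, w n * x n ^ p = w n * x n ^ 2 := by
      intro n
      rw [← heq, show ((2:ℝ)) = ((2:ℕ):ℝ) by norm_num, Real.rpow_natCast]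
    rw [tsum_congr h2, ← heq, Real.sqrt_eq_rpow]
  · -- 2 < p
    set r : ℝ := p / 2 with hr
    set q : ℝ := p / (p - 2) with hq
    have hp2 : p - 2 > 0 := by linarith
    have hpq : r.HolderConjugate q := by
      refine Real.holderConjugate_iff.mpr ⟨?_, ?_⟩
      · rw [hr]; linarith
      · rw [hr, hq]
        field_simp
        ring
    set f : ℕ → ℝ := fun n => w n ^ (2 / p) * x n ^ 2 with hf
    set g : ℕ → ℝ := fun n => w n ^ (1 - 2 / p) with hg
    have hf0 : ∀ n, 0 ≤ f n := fun n =>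
      mul_nonneg (Real.rpow_nonneg (hw n) _) (sq_nonneg _)
    have hg0 : ∀ n, 0 ≤ g n := fun n => Real.rpow_nonneg (hw n) _
    have hfr : ∀ n, f n ^ r = w n * x n ^ p := by
      intro n
      rw [hf]
      rw [Real.mul_rpow (Real.rpow_nonneg (hw n) _) (sq_nonneg _)]
      congr 1
      · rw [← Real.rpow_mul (hw n)]
        rw [show 2 / p * r = 1 by rw [hr]; field_simp]
        exact Real.rpow_one _
      · rw [← Real.rpow_natCast (x n) 2, ← Real.rpow_mul (hx n)]
        congr 1
        rw [hr]
        push_cast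
        field_simp
    have hgq : ∀ n, g n ^ q = w n := by
      intro n
      rw [hg, ← Real.rpow_mul (hw n)]
      rw [show (1 - 2 / p) * q = 1 by rw [hq]; field_simp]
      exact Real.rpow_one _
    have hfg : ∀ n, f n * g n = w n * x n ^ 2 := by
      intro n
      rw [hf, hg]
      rw [show w n ^ (2/p) * x n ^ 2 * w n ^ (1 - 2/p)
        = (w n ^ (2/p) * w n ^ (1 - 2/p)) * x n ^ 2 by ring]
      congr 1
      rw [← Real.rpow_add' (hw n) (by norm_num)]
      norm_num
    have hf_sum : Summable fun n => f n ^ r := by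
      rw [show (fun n => f n ^ r) = fun n => w n * x n ^ p from funext hfr]
      exact hsp
    have hg_sum : Summable fun n => g n ^ q := by
      rw [show (fun n => g n ^ q) = w from funext hgq]
      exact hws
    have key := Real.inner_le_Lp_mul_Lq_tsum_of_nonneg hpq hf0 hg0 hf_sum hg_sum
    rw [tsum_congr hfg, tsum_congr hfr, tsum_congr hgq, hW, Real.one_rpow, mul_one] at key
    have key2 : ∑' n, w n * x n ^ 2 ≤ ((∑' n, w n * x n ^ p) ^ (1/p)) ^ (2:ℕ) := by
      refine key.trans (le_of_eq ?_)
      rw [← Real.rpow_natCast ((∑' n, w n * x n ^ p) ^ (1/p)) 2,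
        ← Real.rpow_mul hT0]
      congr 1
      rw [hr]
      push_cast
      field_simp
    calc Real.sqrt (∑' n, w n * x n ^ 2)
        ≤ Real.sqrt (((∑' n, w n * x n ^ p) ^ (1/p)) ^ (2:ℕ)) := Real.sqrt_le_sqrt key2
      _ = (∑' n, w n * x n ^ p) ^ (1/p) := by
          rw [show ((2:ℕ)) = 2 from rfl]
          exact Real.sqrt_sq (Real.rpow_nonneg hT0 _)

set_option maxHeartbeats 1000000 in
private lemma core (α : ℝ) (a : ℕ → ℝ) (hα0 : 0 ≤ α) (hα1 : α < 1)
    (ha0 : ∀ n, 0 ≤ a n) (hmono : Antitone a) (hsa2 : Summable fun n => (a n) ^ 2)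
    (p : ℝ) (hp : 2 ≤ p) :
    (p * (1 - α) ^ (1 / p) * (∑' n, α ^ n * (a n) ^ p) ^ (1 / p) +
        Real.sqrt p * Real.sqrt ((1 - α) * ∑' n, (a n) ^ 2)) ≤
      3 * ((1 - α) * ∑' n, α ^ n * (p * a n + Real.sqrt p *
        Real.sqrt ((1 - α) * ∑' k, (a (n + 1 + k)) ^ 2)) ^ p) ^ (1 / p) ∧
    ((1 - α) * ∑' n, α ^ n * (p * a n + Real.sqrt p *
        Real.sqrt ((1 - α) * ∑' k, (a (n + 1 + k)) ^ 2)) ^ p) ^ (1 / p) ≤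
      (p * (1 - α) ^ (1 / p) * (∑' n, α ^ n * (a n) ^ p) ^ (1 / p) +
        Real.sqrt p * Real.sqrt ((1 - α) * ∑' n, (a n) ^ 2)) := by
  have hp0 : (0:ℝ) < p := by linarith
  have hp1 : (1:ℝ) ≤ p := by linarith
  have hpne : p ≠ 0 := ne_of_gt hp0
  have h1α : (0:ℝ) < 1 - α := by linarith
  have hsqp : (0:ℝ) ≤ Real.sqrt p := Real.sqrt_nonneg p
  have hbeq : ∀ n : ℕ, Real.sqrt ((1 - α) * ∑' k, (a (n + 1 + k)) ^ 2) = bfun α a n :=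
    fun n => rfl
  simp only [hbeq]
  have hb0 : ∀ n, 0 ≤ bfun α a n := fun n => Real.sqrt_nonneg _
  have hgeo : Summable (fun n : ℕ => α ^ n) := summable_geometric_of_lt_one hα0 hα1
  have hws : Summable (fun n : ℕ => (1 - α) * α ^ n) := hgeo.mul_left (1 - α)
  have hW : ∑' n : ℕ, (1 - α) * α ^ n = 1 := by
    rw [tsum_mul_left, tsum_geometric_of_lt_one hα0 hα1, mul_inv_cancel₀ (ne_of_gt h1α)]
  have hw0 : ∀ n : ℕ, 0 ≤ (1 - α) * α ^ n :=
    fun n => mul_nonneg h1α.le (pow_nonneg hα0 n)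
  -- tail bounds
  have htail_sum : ∀ n : ℕ, Summable (fun k => (a (n + 1 + k)) ^ 2) := by
    intro n
    have h := (summable_nat_add_iff (f := fun m => (a m) ^ 2) (n + 1)).2 hsa2
    exact h.congr fun k => by rw [Nat.add_comm k (n + 1)]
  have htail_le : ∀ n : ℕ, ∑' k, (a (n + 1 + k)) ^ 2 ≤ ∑' m, (a m) ^ 2 := by
    intro n
    rw [tsum_tail_eq (fun m => (a m) ^ 2) n]
    apply Summable.tsum_le_tsum _ _ hsa2
    · intro m
      split
      · exact le_refl _
      · exact sq_nonneg _
    · apply Summable.of_nonneg_of_le _ _ hsa2 <;> intro m <;> split <;>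
        first | exact le_refl _ | exact sq_nonneg _
  have hbb0' : 0 ≤ (1 - α) * ∑' n, (a n) ^ 2 :=
    mul_nonneg h1α.le (tsum_nonneg fun n => sq_nonneg _)
  have hbb0 : 0 ≤ Real.sqrt ((1 - α) * ∑' n, (a n) ^ 2) := Real.sqrt_nonneg _
  have hble : ∀ n, bfun α a n ≤ Real.sqrt ((1 - α) * ∑' m, (a m) ^ 2) := by
    intro n
    apply Real.sqrt_le_sqrt
    exact mul_le_mul_of_nonneg_left (htail_le n) h1α.le
  have hbsq : ∀ n, (bfun α a n) ^ 2 = (1 - α) * ∑' k, (a (n + 1 + k)) ^ 2 := by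
    intro n
    exact Real.sq_sqrt (mul_nonneg h1α.le (tsum_nonneg fun k => sq_nonneg _))
  -- summabilities
  have hsaP : Summable (fun n => α ^ n * (a n) ^ p) := by
    apply Summable.of_nonneg_of_le _ _ (hgeo.mul_right ((a 0) ^ p))
    · intro n; exact mul_nonneg (pow_nonneg hα0 n) (Real.rpow_nonneg (ha0 n) p)
    · intro n
      exact mul_le_mul_of_nonneg_left
        (Real.rpow_le_rpow (ha0 n) (hmono (Nat.zero_le n)) hp0.le) (pow_nonneg hα0 n)
  have hsbP : Summable (fun n => α ^ n * (bfun α a n) ^ p) := by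
    apply Summable.of_nonneg_of_le _ _
      (hgeo.mul_right ((Real.sqrt ((1 - α) * ∑' m, (a m) ^ 2)) ^ p))
    · intro n; exact mul_nonneg (pow_nonneg hα0 n) (Real.rpow_nonneg (hb0 n) p)
    · intro n
      exact mul_le_mul_of_nonneg_left
        (Real.rpow_le_rpow (hb0 n) (hble n) hp0.le) (pow_nonneg hα0 n)
  have hsABP : Summable (fun n =>
      α ^ n * (p * a n + Real.sqrt p * bfun α a n) ^ p) := by
    apply Summable.of_nonneg_of_le _ _
      (hgeo.mul_right ((p * a 0 + Real.sqrt p * Real.sqrt ((1 - α) * ∑' m, (a m) ^ 2)) ^ p))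
    · intro n
      exact mul_nonneg (pow_nonneg hα0 n) (Real.rpow_nonneg
        (add_nonneg (mul_nonneg hp0.le (ha0 n)) (mul_nonneg hsqp (hb0 n))) p)
    · intro n
      apply mul_le_mul_of_nonneg_left _ (pow_nonneg hα0 n)
      apply Real.rpow_le_rpow
        (add_nonneg (mul_nonneg hp0.le (ha0 n)) (mul_nonneg hsqp (hb0 n))) _ hp0.le
      apply add_le_add
      · exact mul_le_mul_of_nonneg_left (hmono (Nat.zero_le n)) hp0.le
      · exact mul_le_mul_of_nonneg_left (hble n) hsqp
  have hwaP : Summable (fun n => (1 - α) * α ^ n * (a n) ^ p) :=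
    (hsaP.mul_left (1 - α)).congr fun n => by ring
  have hwbP : Summable (fun n => (1 - α) * α ^ n * (bfun α a n) ^ p) :=
    (hsbP.mul_left (1 - α)).congr fun n => by ring
  have hwABP : Summable (fun n =>
      (1 - α) * α ^ n * (p * a n + Real.sqrt p * bfun α a n) ^ p) :=
    (hsABP.mul_left (1 - α)).congr fun n => by ring
  -- rpow splitting helper
  have hsplit : ∀ (n : ℕ) (X : ℝ), 0 ≤ X →
      (((1 - α) * α ^ n) ^ (1 / p) * X) ^ p = (1 - α) * α ^ n * X ^ p := by
    intro n X hX
    rw [Real.mul_rpow (Real.rpow_nonneg (hw0 n) _) hX, ← Real.rpow_mul (hw0 n),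
      one_div, inv_mul_cancel₀ hpne, Real.rpow_one]
  -- Minkowski ingredients
  have hf0 : ∀ n : ℕ, 0 ≤ ((1 - α) * α ^ n) ^ (1 / p) * (p * a n) :=
    fun n => mul_nonneg (Real.rpow_nonneg (hw0 n) _) (mul_nonneg hp0.le (ha0 n))
  have hg0 : ∀ n : ℕ, 0 ≤ ((1 - α) * α ^ n) ^ (1 / p) * (Real.sqrt p * bfun α a n) :=
    fun n => mul_nonneg (Real.rpow_nonneg (hw0 n) _) (mul_nonneg hsqp (hb0 n))
  have hf_eq : ∀ n : ℕ, (((1 - α) * α ^ n) ^ (1 / p) * (p * a n)) ^ p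
      = (1 - α) * α ^ n * (p * a n) ^ p :=
    fun n => hsplit n _ (mul_nonneg hp0.le (ha0 n))
  have hg_eq : ∀ n : ℕ, (((1 - α) * α ^ n) ^ (1 / p) * (Real.sqrt p * bfun α a n)) ^ p
      = (1 - α) * α ^ n * (Real.sqrt p * bfun α a n) ^ p :=
    fun n => hsplit n _ (mul_nonneg hsqp (hb0 n))
  have hfg_eq : ∀ n : ℕ, (((1 - α) * α ^ n) ^ (1 / p) * (p * a n)
        + ((1 - α) * α ^ n) ^ (1 / p) * (Real.sqrt p * bfun α a n)) ^ p
      = (1 - α) * α ^ n * (p * a n + Real.sqrt p * bfun α a n) ^ p := by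
    intro n
    rw [← mul_add]
    exact hsplit n _ (add_nonneg (mul_nonneg hp0.le (ha0 n)) (mul_nonneg hsqp (hb0 n)))
  have hf_sum : Summable (fun n => (((1 - α) * α ^ n) ^ (1 / p) * (p * a n)) ^ p) :=
    ((hwaP.mul_left (p ^ p)).congr fun n => by
      rw [hf_eq n, Real.mul_rpow hp0.le (ha0 n)]; ring)
  have hg_sum : Summable (fun n =>
      (((1 - α) * α ^ n) ^ (1 / p) * (Real.sqrt p * bfun α a n)) ^ p) :=
    ((hwbP.mul_left ((Real.sqrt p) ^ p)).congr fun n => by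
      rw [hg_eq n, Real.mul_rpow hsqp (hb0 n)]; ring)
  have hfg_sum : Summable (fun n => (((1 - α) * α ^ n) ^ (1 / p) * (p * a n)
      + ((1 - α) * α ^ n) ^ (1 / p) * (Real.sqrt p * bfun α a n)) ^ p) :=
    hwABP.congr fun n => (hfg_eq n).symm
  have mink := Real.Lp_add_le_tsum_of_nonneg' hp1 hf0 hg0 hf_sum hg_sum
  -- identify the three sums in mink
  have hfg_sum_eq : (∑' n, (((1 - α) * α ^ n) ^ (1 / p) * (p * a n)
        + ((1 - α) * α ^ n) ^ (1 / p) * (Real.sqrt p * bfun α a n)) ^ p)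
      = (1 - α) * ∑' n, α ^ n * (p * a n + Real.sqrt p * bfun α a n) ^ p := by
    rw [← tsum_mul_left]
    exact tsum_congr fun n => by rw [hfg_eq n]; ring
  have hfs_eq : (∑' n, (((1 - α) * α ^ n) ^ (1 / p) * (p * a n)) ^ p)
      = p ^ p * ((1 - α) * ∑' n, α ^ n * (a n) ^ p) := by
    rw [← mul_assoc, ← tsum_mul_left]
    exact tsum_congr fun n => by
      rw [hf_eq n, Real.mul_rpow hp0.le (ha0 n)]; ring
  have hgs_eq : (∑' n, (((1 - α) * α ^ n) ^ (1 / p)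
        * (Real.sqrt p * bfun α a n)) ^ p)
      = (Real.sqrt p) ^ p * ∑' n, (1 - α) * α ^ n * (bfun α a n) ^ p := by
    rw [← tsum_mul_left]
    exact tsum_congr fun n => by
      rw [hg_eq n, Real.mul_rpow hsqp (hb0 n)]; ring
  -- nonnegativity of sums
  have hsa_nn : 0 ≤ ∑' n, α ^ n * (a n) ^ p :=
    tsum_nonneg fun n => mul_nonneg (pow_nonneg hα0 n) (Real.rpow_nonneg (ha0 n) p)
  have hwb_nn : 0 ≤ ∑' n, (1 - α) * α ^ n * (bfun α a n) ^ p :=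
    tsum_nonneg fun n => mul_nonneg (hw0 n) (Real.rpow_nonneg (hb0 n) p)
  have hSB_nn : 0 ≤ (1 - α) * ∑' n, α ^ n * (p * a n + Real.sqrt p * bfun α a n) ^ p :=
    mul_nonneg h1α.le (tsum_nonneg fun n => mul_nonneg (pow_nonneg hα0 n)
      (Real.rpow_nonneg (add_nonneg (mul_nonneg hp0.le (ha0 n))
        (mul_nonneg hsqp (hb0 n))) p))
  -- rpow computations
  have hppow : (p ^ p) ^ (1 / p) = p := by
    rw [← Real.rpow_mul hp0.le, mul_one_div_cancel hpne, Real.rpow_one]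
  have hsqppow : ((Real.sqrt p) ^ p) ^ (1 / p) = Real.sqrt p := by
    rw [← Real.rpow_mul hsqp, mul_one_div_cancel hpne, Real.rpow_one]
  have hfs_rpow : (∑' n, (((1 - α) * α ^ n) ^ (1 / p) * (p * a n)) ^ p) ^ (1 / p)
      = p * (1 - α) ^ (1 / p) * (∑' n, α ^ n * (a n) ^ p) ^ (1 / p) := by
    rw [hfs_eq, Real.mul_rpow (Real.rpow_nonneg hp0.le p) (mul_nonneg h1α.le hsa_nn),
      Real.mul_rpow h1α.le hsa_nn, hppow, mul_assoc]
  have hgs_rpow : (∑' n, (((1 - α) * α ^ n) ^ (1 / p)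
        * (Real.sqrt p * bfun α a n)) ^ p) ^ (1 / p)
      = Real.sqrt p * (∑' n, (1 - α) * α ^ n * (bfun α a n) ^ p) ^ (1 / p) := by
    rw [hgs_eq, Real.mul_rpow (Real.rpow_nonneg hsqp p) hwb_nn, hsqppow]
  rw [hfg_sum_eq, hfs_rpow, hgs_rpow] at mink
  -- bound (∑ w b^p)^(1/p) ≤ bb
  have hwb_le : (∑' n, (1 - α) * α ^ n * (bfun α a n) ^ p) ^ (1 / p)
      ≤ Real.sqrt ((1 - α) * ∑' m, (a m) ^ 2) := by
    have h1 : ∑' n, (1 - α) * α ^ n * (bfun α a n) ^ p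
        ≤ ∑' n : ℕ, (1 - α) * α ^ n * (Real.sqrt ((1 - α) * ∑' m, (a m) ^ 2)) ^ p := by
      apply Summable.tsum_le_tsum _ hwbP ((hws.mul_right _).congr fun n => rfl)
      intro n
      exact mul_le_mul_of_nonneg_left (Real.rpow_le_rpow (hb0 n) (hble n) hp0.le) (hw0 n)
    have h2 : ∑' n : ℕ, (1 - α) * α ^ n * (Real.sqrt ((1 - α) * ∑' m, (a m) ^ 2)) ^ p
        = (Real.sqrt ((1 - α) * ∑' m, (a m) ^ 2)) ^ p := by
      rw [tsum_mul_right, hW, one_mul]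
    calc (∑' n, (1 - α) * α ^ n * (bfun α a n) ^ p) ^ (1 / p)
        ≤ ((Real.sqrt ((1 - α) * ∑' m, (a m) ^ 2)) ^ p) ^ (1 / p) := by
          apply Real.rpow_le_rpow hwb_nn (h1.trans (le_of_eq h2)) (by positivity)
      _ = Real.sqrt ((1 - α) * ∑' m, (a m) ^ 2) := by
          rw [← Real.rpow_mul hbb0, mul_one_div_cancel hpne, Real.rpow_one]
  -- Upper bound
  have upper : ((1 - α) * ∑' n, α ^ n * (p * a n + Real.sqrt p * bfun α a n) ^ p) ^ (1 / p)
      ≤ p * (1 - α) ^ (1 / p) * (∑' n, α ^ n * (a n) ^ p) ^ (1 / p) +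
        Real.sqrt p * Real.sqrt ((1 - α) * ∑' n, (a n) ^ 2) := by
    refine mink.trans (add_le_add (le_refl _) ?_)
    exact mul_le_mul_of_nonneg_left hwb_le hsqp
  -- Lower bound pieces
  have hA_le : p * (1 - α) ^ (1 / p) * (∑' n, α ^ n * (a n) ^ p) ^ (1 / p)
      ≤ ((1 - α) * ∑' n, α ^ n * (p * a n + Real.sqrt p * bfun α a n) ^ p) ^ (1 / p) := by
    rw [← hfs_rpow]
    apply Real.rpow_le_rpow (tsum_nonneg fun n => Real.rpow_nonneg (hf0 n) p) _
      (by positivity)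
    rw [hfg_sum_eq.symm]
    apply Summable.tsum_le_tsum _ hf_sum hfg_sum
    intro n
    rw [hf_eq n, hfg_eq n]
    apply mul_le_mul_of_nonneg_left _ (hw0 n)
    apply Real.rpow_le_rpow (mul_nonneg hp0.le (ha0 n)) _ hp0.le
    exact le_add_of_nonneg_right (mul_nonneg hsqp (hb0 n))
  have hB_le : Real.sqrt p * (∑' n, (1 - α) * α ^ n * (bfun α a n) ^ p) ^ (1 / p)
      ≤ ((1 - α) * ∑' n, α ^ n * (p * a n + Real.sqrt p * bfun α a n) ^ p) ^ (1 / p) := by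
    rw [← hgs_rpow]
    apply Real.rpow_le_rpow (tsum_nonneg fun n => Real.rpow_nonneg (hg0 n) p) _
      (by positivity)
    rw [hfg_sum_eq.symm]
    apply Summable.tsum_le_tsum _ hg_sum hfg_sum
    intro n
    rw [hg_eq n, hfg_eq n]
    apply mul_le_mul_of_nonneg_left _ (hw0 n)
    apply Real.rpow_le_rpow (mul_nonneg hsqp (hb0 n)) _ hp0.le
    exact le_add_of_nonneg_left (mul_nonneg hp0.le (ha0 n))
  -- key identity
  have hkey : (1 - α) * ∑' n, (a n) ^ 2 =
      (∑' n, (1 - α) * α ^ n * (bfun α a n) ^ 2) + ∑' n, (1 - α) * α ^ n * (a n) ^ 2 := by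
    have h := key_id hα0 hα1 (fun n => (a n) ^ 2) (fun n => sq_nonneg _) hsa2
    rw [h]
    congr 1
    exact tsum_congr fun n => by rw [hbsq n]
  -- Jensen applications
  have hwa2_nn : 0 ≤ ∑' n, (1 - α) * α ^ n * (a n) ^ 2 :=
    tsum_nonneg fun n => mul_nonneg (hw0 n) (sq_nonneg _)
  have hwb2_nn : 0 ≤ ∑' n, (1 - α) * α ^ n * (bfun α a n) ^ 2 :=
    tsum_nonneg fun n => mul_nonneg (hw0 n) (sq_nonneg _)
  have hJa : Real.sqrt (∑' n, (1 - α) * α ^ n * (a n) ^ 2)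
      ≤ (∑' n, (1 - α) * α ^ n * (a n) ^ p) ^ (1 / p) :=
    jensen_tsum hw0 ha0 hws hW hp hwaP
  have hJb : Real.sqrt (∑' n, (1 - α) * α ^ n * (bfun α a n) ^ 2)
      ≤ (∑' n, (1 - α) * α ^ n * (bfun α a n) ^ p) ^ (1 / p) :=
    jensen_tsum hw0 hb0 hws hW hp hwbP
  -- relate (∑ w a^p)^(1/p) to the first term
  have hwa_rpow : (∑' n, (1 - α) * α ^ n * (a n) ^ p) ^ (1 / p)
      = (1 - α) ^ (1 / p) * (∑' n, α ^ n * (a n) ^ p) ^ (1 / p) := by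
    have h1 : ∑' n, (1 - α) * α ^ n * (a n) ^ p = (1 - α) * ∑' n, α ^ n * (a n) ^ p := by
      rw [← tsum_mul_left]
      exact tsum_congr fun n => by ring
    rw [h1, Real.mul_rpow h1α.le hsa_nn]
  -- sqrt p ≤ p
  have hsqlep : Real.sqrt p ≤ p := by
    nlinarith [Real.sq_sqrt hp0.le, Real.sqrt_nonneg p, sq_nonneg (Real.sqrt p - 1)]
  -- chaining the lower bound for sqrt p * bb
  have hbb_le : Real.sqrt ((1 - α) * ∑' n, (a n) ^ 2)
      ≤ Real.sqrt (∑' n, (1 - α) * α ^ n * (bfun α a n) ^ 2)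
        + Real.sqrt (∑' n, (1 - α) * α ^ n * (a n) ^ 2) := by
    rw [hkey]
    exact sqrt_add_le' _ _ hwb2_nn hwa2_nn
  have hwa_nn' : 0 ≤ (∑' n, (1 - α) * α ^ n * (a n) ^ p) ^ (1 / p) :=
    Real.rpow_nonneg (tsum_nonneg fun n => mul_nonneg (hw0 n)
      (Real.rpow_nonneg (ha0 n) p)) _
  have step1 : Real.sqrt p * Real.sqrt ((1 - α) * ∑' n, (a n) ^ 2)
      ≤ Real.sqrt p * (∑' n, (1 - α) * α ^ n * (bfun α a n) ^ p) ^ (1 / p)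
        + p * ((1 - α) ^ (1 / p) * (∑' n, α ^ n * (a n) ^ p) ^ (1 / p)) := by
    have h1 := mul_le_mul_of_nonneg_left hbb_le hsqp
    have h2 := mul_le_mul_of_nonneg_left hJb hsqp
    have h3 := mul_le_mul_of_nonneg_left hJa hsqp
    have h4 : Real.sqrt p * (∑' n, (1 - α) * α ^ n * (a n) ^ p) ^ (1 / p)
        ≤ p * (∑' n, (1 - α) * α ^ n * (a n) ^ p) ^ (1 / p) :=
      mul_le_mul_of_nonneg_right hsqlep hwa_nn'
    rw [hwa_rpow] at h3 h4
    rw [mul_add] at h1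
    linarith [h1, h2, h3, h4]
  constructor
  · -- lower bound
    have h5 : p * ((1 - α) ^ (1 / p) * (∑' n, α ^ n * (a n) ^ p) ^ (1 / p))
        = p * (1 - α) ^ (1 / p) * (∑' n, α ^ n * (a n) ^ p) ^ (1 / p) := by ring
    rw [h5] at step1
    linarith [hA_le, hB_le, step1]
  · exact upper


theorem stmt2 :
    ∃ C₁ C₂ : ℝ, 0 < C₁ ∧ 0 < C₂ ∧
    ∀ (α : ℝ) (a : ℕ → ℝ),
      0 ≤ α → α < 1 → (∀ n, 0 ≤ a n) → Antitone a →
      Summable (fun n => (a n) ^ 2) →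
      ∀ p : ℝ, 2 ≤ p →
        C₁ * (p * (1 - α) ^ (1 / p) * (∑' n, α ^ n * (a n) ^ p) ^ (1 / p) + Real.sqrt p * Real.sqrt ((1 - α) * ∑' n, (a n) ^ 2)) ≤ ((1 - α) * ∑' n, α ^ n * (p * a n + Real.sqrt p * Real.sqrt ((1 - α) * ∑' k, (a (n + 1 + k)) ^ 2)) ^ p) ^ (1 / p) ∧
        ((1 - α) * ∑' n, α ^ n * (p * a n + Real.sqrt p * Real.sqrt ((1 - α) * ∑' k, (a (n + 1 + k)) ^ 2)) ^ p) ^ (1 / p) ≤ C₂ * (p * (1 - α) ^ (1 / p) * (∑' n, α ^ n * (a n) ^ p) ^ (1 / p) + Real.sqrt p * Real.sqrt ((1 - α) * ∑' n, (a n) ^ 2)) := by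
  refine ⟨1/3, 1, by norm_num, by norm_num, ?_⟩
  intro α a hα0 hα1 ha0 hmono hsa2 p hp
  obtain ⟨h1, h2⟩ := core α a hα0 hα1 ha0 hmono hsa2 p hp
  constructor
  · linarith
  · linarith
end

section
/- There exist universal constants C₁, C₂ ∈ (0,∞) with the following property. Assume ∑_{n≥1} a_n² < ∞. Then for every n ≥ 1 and every real p ≥ 2, C₁ · ( p·a_n + √p · ( (1−α) ∑_{k>n} a_k² )^{1/2} ) ≤ ( 𝔼[ ( p·a_n + √p · ( ∑_{k>n} κ_k a_k² )^{1/2} )^p ] )^{1/p} ≤ C₂ · ( p·a_n + √p · ( (1−α) ∑_{k>n} a_k² )^{1/2} ). -/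
open MeasureTheory ProbabilityTheory Filter Topology

set_option linter.unusedSectionVars false

lemma my_integrable_of_bounds {Ω : Type*} [MeasurableSpace Ω] {P : Measure Ω}
    [IsProbabilityMeasure P] {f : Ω → ℝ} (hf : Measurable f) {C : ℝ}
    (h0 : ∀ ω, 0 ≤ f ω) (hC : ∀ ω, f ω ≤ C) : Integrable f P :=
  ⟨hf.aestronglyMeasurable, HasFiniteIntegral.of_bounded (C := C)
    (ae_of_all _ fun ω => by rw [Real.norm_eq_abs, abs_of_nonneg (h0 ω)]; exact hC ω)⟩

lemma my_sqrt_add_le {x y : ℝ} (hx : 0 ≤ x) (hy : 0 ≤ y) :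
    Real.sqrt (x + y) ≤ Real.sqrt x + Real.sqrt y := by
  have h : x + y ≤ (Real.sqrt x + Real.sqrt y) ^ 2 := by
    have hx' := Real.sq_sqrt hx
    have hy' := Real.sq_sqrt hy
    have := mul_nonneg (Real.sqrt_nonneg x) (Real.sqrt_nonneg y)
    nlinarith
  calc Real.sqrt (x + y) ≤ Real.sqrt ((Real.sqrt x + Real.sqrt y) ^ 2) := Real.sqrt_le_sqrt h
  _ = Real.sqrt x + Real.sqrt y := Real.sqrt_sq (by positivity)

lemma my_iIndepFun_comp_inj {Ω : Type*} [MeasurableSpace Ω] {P : Measure Ω}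
    {ι ι' : Type*} {β : Type*} [mβ : MeasurableSpace β]
    {f : ι → Ω → β} (h : iIndepFun f P) {e : ι' → ι}
    (he : Function.Injective e) :
    iIndepFun (fun i => f (e i)) P := by
  classical
  rw [iIndepFun_iff_measure_inter_preimage_eq_mul] at h ⊢
  intro S sets hsets
  have hmeas : ∀ j ∈ S.image e,
      MeasurableSet (Function.extend e sets (fun _ => Set.univ) j) := by
    intro j hj
    rcases Finset.mem_image.mp hj with ⟨i, hi, rfl⟩
    rw [he.extend_apply]
    exact hsets i hi
  have key := h (S.image e) hmeas
  have h1 : (⋂ j ∈ S.image e, f j ⁻¹' Function.extend e sets (fun _ => Set.univ) j)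
      = ⋂ i ∈ S, f (e i) ⁻¹' sets i := by
    rw [Finset.set_biInter_finset_image]
    exact Set.iInter₂_congr fun i _ => by rw [he.extend_apply]
  rw [h1] at key
  rw [key, Finset.prod_image fun i _ j _ hij => he hij]
  exact Finset.prod_congr rfl fun i _ => by rw [he.extend_apply]

lemma my_moment_bound {Ω : Type*} [MeasurableSpace Ω] {P : Measure Ω}
    [IsProbabilityMeasure P] (X : ℕ → Ω → ℝ) {b : ℝ} (hb : 0 ≤ b)
    (hmeas : ∀ i, Measurable (X i))
    (hind : iIndepFun X P)
    (h0 : ∀ i ω, 0 ≤ X i ω) (h1 : ∀ i ω, X i ω ≤ b) :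
    ∀ (m : ℕ) (s : Finset ℕ),
      ∫ ω, (∑ i ∈ s, X i ω + b) ^ m ∂P ≤ ((∑ i ∈ s, ∫ ω, X i ω ∂P) + m * b) ^ m := by
  -- auxiliary integrability facts
  have hsum_meas : ∀ t : Finset ℕ, Measurable (fun ω => ∑ i ∈ t, X i ω) := fun t =>
    Finset.measurable_sum t fun i _ => hmeas i
  have hsum_nonneg : ∀ (t : Finset ℕ) (ω), 0 ≤ ∑ i ∈ t, X i ω := fun t ω =>
    Finset.sum_nonneg fun i _ => h0 i ω
  have hsum_le : ∀ (t : Finset ℕ) (ω), ∑ i ∈ t, X i ω ≤ t.card * b := fun t ω => by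
    calc ∑ i ∈ t, X i ω ≤ ∑ _i ∈ t, b := Finset.sum_le_sum fun i _ => h1 i ω
    _ = t.card * b := by rw [Finset.sum_const, nsmul_eq_mul]
  have int_pow : ∀ (t : Finset ℕ) (c : ℝ), 0 ≤ c → ∀ k : ℕ,
      Integrable (fun ω => (∑ i ∈ t, X i ω + c) ^ k) P := by
    intro t c hc k
    refine my_integrable_of_bounds (((hsum_meas t).add_const c).pow_const k)
      (C := (t.card * b + c) ^ k)
      (fun ω => pow_nonneg (by linarith [hsum_nonneg t ω]) k) fun ω => ?_
    exact pow_le_pow_left₀ (by linarith [hsum_nonneg t ω]) (by linarith [hsum_le t ω]) k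
  have int_mul_pow : ∀ (j : ℕ) (t : Finset ℕ) (c : ℝ), 0 ≤ c → ∀ k : ℕ,
      Integrable (fun ω => X j ω * (∑ i ∈ t, X i ω + c) ^ k) P := by
    intro j t c hc k
    refine my_integrable_of_bounds ((hmeas j).mul (((hsum_meas t).add_const c).pow_const k))
      (C := b * (t.card * b + c) ^ k)
      (fun ω => mul_nonneg (h0 j ω) (pow_nonneg (by linarith [hsum_nonneg t ω]) k)) fun ω => ?_
    have h2 : (∑ i ∈ t, X i ω + c) ^ k ≤ (t.card * b + c) ^ k :=
      pow_le_pow_left₀ (by linarith [hsum_nonneg t ω]) (by linarith [hsum_le t ω]) k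
    exact mul_le_mul (h1 j ω) h2 (pow_nonneg (by linarith [hsum_nonneg t ω]) k) hb
  intro m
  induction m using Nat.strong_induction_on with
  | _ m IH =>
    intro s
    match m with
    | 0 => simp
    | Nat.succ k =>
      set μ : ℝ := ∑ i ∈ s, ∫ ω, X i ω ∂P with hμdef
      have hμ0 : 0 ≤ μ := Finset.sum_nonneg fun i _ => integral_nonneg (h0 i)
      set K : ℝ := μ + (k + 1 : ℕ) * b with hKdef
      have hKk : 0 ≤ μ + k * b := by positivity
      have hμkK : μ + k * b ≤ K := by
        rw [hKdef]; push_cast; nlinarith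
      -- split the integral
      have hsplit : ∫ ω, (∑ i ∈ s, X i ω + b) ^ (k+1) ∂P
          = (∫ ω, (∑ i ∈ s, X i ω) * (∑ i ∈ s, X i ω + b) ^ k ∂P)
            + b * ∫ ω, (∑ i ∈ s, X i ω + b) ^ k ∂P := by
        rw [← integral_const_mul, ← integral_add]
        · congr 1; funext ω; ring
        · exact (int_pow s b hb (k+1)).mono' ((hsum_meas s).mul
            (((hsum_meas s).add_const b).pow_const k)).aestronglyMeasurable
            (ae_of_all _ fun ω => by
              rw [Real.norm_eq_abs, abs_of_nonneg (mul_nonneg (hsum_nonneg s ω)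
                (pow_nonneg (by linarith [hsum_nonneg s ω]) k))]
              calc (∑ i ∈ s, X i ω) * (∑ i ∈ s, X i ω + b) ^ k
                  ≤ (∑ i ∈ s, X i ω + b) * (∑ i ∈ s, X i ω + b) ^ k := by
                    have := hsum_nonneg s ω
                    have : (0:ℝ) ≤ (∑ i ∈ s, X i ω + b) ^ k := by positivity
                    nlinarith [hsum_nonneg s ω]
                _ = (∑ i ∈ s, X i ω + b) ^ (k+1) := by ring)
        · exact (Integrable.const_mul (int_pow s b hb k) b).congr (ae_of_all _ fun ω => rfl)
      rw [hsplit]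
      have intXj : ∀ j, Integrable (X j) P := fun j =>
        my_integrable_of_bounds (hmeas j) (h0 j) (h1 j)
      have hB : ∫ ω, (∑ i ∈ s, X i ω + b) ^ k ∂P ≤ (μ + (k:ℝ) * b) ^ k := IH k (Nat.lt_succ_self k) s
      have hterm : ∀ j ∈ s, ∫ ω, X j ω * (∑ i ∈ s, X i ω + b) ^ k ∂P
          ≤ (∫ ω, X j ω ∂P) * K ^ k := by
        intro j hj
        have hptr : ∀ ω, X j ω * (∑ i ∈ s, X i ω + b) ^ k
            ≤ X j ω * (∑ i ∈ s.erase j, X i ω + 2*b) ^ k := by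
          intro ω
          have hsum_eq : ∑ i ∈ s, X i ω = X j ω + ∑ i ∈ s.erase j, X i ω :=
            (Finset.add_sum_erase s (fun i => X i ω) hj).symm
          refine mul_le_mul_of_nonneg_left
            (pow_le_pow_left₀ (by linarith [hsum_nonneg s ω]) ?_ k) (h0 j ω)
          rw [hsum_eq]; linarith [h1 j ω]
        have hstep1 : ∫ ω, X j ω * (∑ i ∈ s, X i ω + b) ^ k ∂P
            ≤ ∫ ω, X j ω * (∑ i ∈ s.erase j, X i ω + 2*b) ^ k ∂P :=
          integral_mono (int_mul_pow j s b hb k)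
            (int_mul_pow j (s.erase j) (2*b) (by linarith) k) hptr
        have hindep : IndepFun (fun ω => ∑ i ∈ s.erase j, X i ω) (X j) P := by
          have h' := hind.indepFun_finset_sum_of_notMem hmeas (Finset.notMem_erase j s)
          have hfn : (fun ω => ∑ i ∈ s.erase j, X i ω) = ∑ i ∈ s.erase j, X i := by
            funext ω; simp
          rw [hfn]; exact h'
        have hcomp : IndepFun (fun ω => (∑ i ∈ s.erase j, X i ω + 2*b) ^ k) (X j) P :=
          hindep.comp ((measurable_id.add_const (2*b)).pow_const k) measurable_id
        have hmul : ∫ ω, X j ω * (∑ i ∈ s.erase j, X i ω + 2*b) ^ k ∂P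
            = (∫ ω, (∑ i ∈ s.erase j, X i ω + 2*b) ^ k ∂P) * ∫ ω, X j ω ∂P := by
          have h2 := hcomp.integral_mul_eq_mul_integral
            (int_pow (s.erase j) (2*b) (by linarith) k).aestronglyMeasurable (intXj j).aestronglyMeasurable
          have h3 : ∫ ω, X j ω * (∑ i ∈ s.erase j, X i ω + 2*b) ^ k ∂P
              = integral P ((fun ω => (∑ i ∈ s.erase j, X i ω + 2*b) ^ k) * X j) := by
            congr 1; funext ω; simp [Pi.mul_apply, mul_comm]
          rw [h3, h2]
        have hexp : ∫ ω, (∑ i ∈ s.erase j, X i ω + 2*b) ^ k ∂P ≤ K ^ k := by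
          have hμ' : (∑ i ∈ s.erase j, ∫ ω, X i ω ∂P) ≤ μ :=
            Finset.sum_le_sum_of_subset_of_nonneg (Finset.erase_subset j s)
              (fun i _ _ => integral_nonneg (h0 i))
          have hμ'0 : 0 ≤ ∑ i ∈ s.erase j, ∫ ω, X i ω ∂P :=
            Finset.sum_nonneg fun i _ => integral_nonneg (h0 i)
          have hrw : (fun ω => (∑ i ∈ s.erase j, X i ω + 2*b) ^ k)
              = fun ω => ∑ i ∈ Finset.range (k+1),
                  (∑ l ∈ s.erase j, X l ω + b) ^ i * b ^ (k - i) * (k.choose i) := by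
            funext ω
            rw [show ∑ l ∈ s.erase j, X l ω + 2*b = (∑ l ∈ s.erase j, X l ω + b) + b by ring,
              add_pow]
          rw [hrw, integral_finset_sum _ (fun i _ =>
            (((int_pow (s.erase j) b hb i).mul_const (b ^ (k - i))).mul_const _))]
          have hbound : ∀ i ∈ Finset.range (k+1),
              ∫ ω, (∑ l ∈ s.erase j, X l ω + b) ^ i * b ^ (k - i) * (k.choose i) ∂P
              ≤ (μ + (k:ℝ)*b) ^ i * b ^ (k - i) * (k.choose i) := by
            intro i hi
            have hik : i ≤ k := Nat.lt_succ_iff.mp (Finset.mem_range.mp hi)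
            rw [integral_mul_const, integral_mul_const]
            have hIH := IH i (Nat.lt_succ_of_le hik) (s.erase j)
            have h4 : ((∑ l ∈ s.erase j, ∫ ω, X l ω ∂P) + (i:ℝ)*b) ^ i ≤ (μ + (k:ℝ)*b) ^ i := by
              refine pow_le_pow_left₀ (by positivity) ?_ i
              have : (i:ℝ) ≤ (k:ℝ) := Nat.cast_le.mpr hik
              nlinarith
            have h5 : (0:ℝ) ≤ b ^ (k - i) * (k.choose i) := by positivity
            have := le_trans hIH h4
            exact mul_le_mul_of_nonneg_right (mul_le_mul_of_nonneg_right this (by positivity))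
              (by positivity)
          calc ∑ i ∈ Finset.range (k+1),
              ∫ ω, (∑ l ∈ s.erase j, X l ω + b) ^ i * b ^ (k - i) * (k.choose i) ∂P
              ≤ ∑ i ∈ Finset.range (k+1), (μ + (k:ℝ)*b) ^ i * b ^ (k - i) * (k.choose i) :=
                Finset.sum_le_sum hbound
            _ = ((μ + (k:ℝ)*b) + b) ^ k := (add_pow _ _ _).symm
            _ = K ^ k := by rw [hKdef]; push_cast; ring_nf
        calc ∫ ω, X j ω * (∑ i ∈ s, X i ω + b) ^ k ∂P
            ≤ ∫ ω, X j ω * (∑ i ∈ s.erase j, X i ω + 2*b) ^ k ∂P := hstep1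
          _ = (∫ ω, (∑ i ∈ s.erase j, X i ω + 2*b) ^ k ∂P) * ∫ ω, X j ω ∂P := hmul
          _ ≤ K ^ k * ∫ ω, X j ω ∂P :=
              mul_le_mul_of_nonneg_right hexp (integral_nonneg (h0 j))
          _ = (∫ ω, X j ω ∂P) * K ^ k := by ring
      have hA : ∫ ω, (∑ i ∈ s, X i ω) * (∑ i ∈ s, X i ω + b) ^ k ∂P ≤ μ * K ^ k := by
        have heq : ∫ ω, (∑ i ∈ s, X i ω) * (∑ i ∈ s, X i ω + b) ^ k ∂P
            = ∑ j ∈ s, ∫ ω, X j ω * (∑ i ∈ s, X i ω + b) ^ k ∂P := by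
          rw [← integral_finset_sum s (fun j _ => int_mul_pow j s b hb k)]
          congr 1; funext ω; rw [← Finset.sum_mul]
        rw [heq]
        calc ∑ j ∈ s, ∫ ω, X j ω * (∑ i ∈ s, X i ω + b) ^ k ∂P
            ≤ ∑ j ∈ s, (∫ ω, X j ω ∂P) * K ^ k := Finset.sum_le_sum hterm
          _ = μ * K ^ k := by rw [← Finset.sum_mul]
      have hK0 : (0:ℝ) ≤ K := by rw [hKdef]; positivity
      have hBK : (μ + (k:ℝ)*b) ^ k ≤ K ^ k := pow_le_pow_left₀ hKk hμkK k
      calc (∫ ω, (∑ i ∈ s, X i ω) * (∑ i ∈ s, X i ω + b) ^ k ∂P)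
            + b * ∫ ω, (∑ i ∈ s, X i ω + b) ^ k ∂P
          ≤ μ * K ^ k + b * (μ + (k:ℝ)*b) ^ k :=
            add_le_add hA (mul_le_mul_of_nonneg_left hB hb)
        _ ≤ μ * K ^ k + b * K ^ k :=
            add_le_add_right (mul_le_mul_of_nonneg_left hBK hb) _
        _ = (μ + b) * K ^ k := by ring
        _ ≤ K * K ^ k := mul_le_mul_of_nonneg_right
            (by rw [hKdef]; push_cast; nlinarith) (pow_nonneg hK0 k)
        _ = K ^ (k+1) := by ring

/-- Monotonicity of normalized rpow-moments on a probability space, for bounded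
nonnegative functions. -/
lemma my_integral_rpow_comp {Ω : Type*} [MeasurableSpace Ω] {P : Measure Ω}
    [IsProbabilityMeasure P] {f : Ω → ℝ} (hf : Measurable f) {T : ℝ} (h0 : ∀ ω, 0 ≤ f ω)
    (hT : ∀ ω, f ω ≤ T) {q r : ℝ} (hq : 0 < q) (hqr : q ≤ r) :
    (∫ ω, (f ω) ^ q ∂P) ^ q⁻¹ ≤ (∫ ω, (f ω) ^ r ∂P) ^ r⁻¹ := by
  have hr : 0 < r := lt_of_lt_of_le hq hqr
  have hftop : MemLp f ⊤ P := memLp_top_of_bound hf.aestronglyMeasurable T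
    (ae_of_all _ fun ω => by rw [Real.norm_eq_abs, abs_of_nonneg (h0 ω)]; exact hT ω)
  have hfq : MemLp f (ENNReal.ofReal q) P := hftop.mono_exponent le_top
  have hfr : MemLp f (ENNReal.ofReal r) P := hftop.mono_exponent le_top
  have hcomp := eLpNorm_le_eLpNorm_of_exponent_le (μ := P)
    (ENNReal.ofReal_le_ofReal hqr) hf.aestronglyMeasurable
  rw [hfq.eLpNorm_eq_integral_rpow_norm (by simp [hq]) ENNReal.ofReal_ne_top,
    hfr.eLpNorm_eq_integral_rpow_norm (by simp [hr]) ENNReal.ofReal_ne_top,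
    ENNReal.toReal_ofReal hq.le, ENNReal.toReal_ofReal hr.le] at hcomp
  have hnorm : ∀ (z : ℝ) ω, ‖f ω‖ ^ z = f ω ^ z := fun z ω => by
    rw [Real.norm_eq_abs, abs_of_nonneg (h0 ω)]
  simp_rw [hnorm] at hcomp
  exact (ENNReal.ofReal_le_ofReal_iff (Real.rpow_nonneg (integral_nonneg
    (fun ω => Real.rpow_nonneg (h0 ω) r)) _)).mp hcomp

lemma my_tsum_meas {Ω : Type*} [MeasurableSpace Ω] (X : ℕ → Ω → ℝ) {c : ℕ → ℝ}
    (hmeas : ∀ i, Measurable (X i)) (h0 : ∀ i ω, 0 ≤ X i ω)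
    (hXc : ∀ i ω, X i ω ≤ c i) (hcs : Summable c) :
    Measurable (fun ω => ∑' i, X i ω) := by
  have hsummable : ∀ ω, Summable fun i => X i ω := fun ω =>
    Summable.of_nonneg_of_le (fun i => h0 i ω) (fun i => hXc i ω) hcs
  have heq : (fun ω => ∑' i, X i ω) = fun ω => (∑' i, ENNReal.ofReal (X i ω)).toReal := by
    funext ω
    rw [← ENNReal.ofReal_tsum_of_nonneg (fun i => h0 i ω) (hsummable ω),
      ENNReal.toReal_ofReal (tsum_nonneg fun i => h0 i ω)]
  rw [heq]
  exact (Measurable.ennreal_tsum fun i => (hmeas i).ennreal_ofReal).ennreal_toReal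

lemma my_tsum_moment_bound {Ω : Type*} [MeasurableSpace Ω] {P : Measure Ω}
    [IsProbabilityMeasure P] (X : ℕ → Ω → ℝ) {b μbar : ℝ} (hb : 0 ≤ b) (hμ0 : 0 ≤ μbar)
    (hmeas : ∀ i, Measurable (X i))
    (hind : iIndepFun X P)
    (h0 : ∀ i ω, 0 ≤ X i ω) (h1 : ∀ i ω, X i ω ≤ b)
    {c : ℕ → ℝ} (hc0 : ∀ i, 0 ≤ c i) (hcs : Summable c) (hXc : ∀ i ω, X i ω ≤ c i)
    (hμ : ∀ s : Finset ℕ, ∑ i ∈ s, ∫ ω, X i ω ∂P ≤ μbar)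
    {q : ℝ} (hq : 1 ≤ q) :
    ∫ ω, (∑' i, X i ω) ^ q ∂P ≤ (2 * (μbar + q * b)) ^ q := by
  have hq0 : (0:ℝ) < q := lt_of_lt_of_le one_pos hq
  set T := ∑' i, c i with hTdef
  have hT0 : 0 ≤ T := tsum_nonneg hc0
  have hsummable : ∀ ω, Summable fun i => X i ω := fun ω =>
    Summable.of_nonneg_of_le (fun i => h0 i ω) (fun i => hXc i ω) hcs
  have hS0 : ∀ ω, 0 ≤ ∑' i, X i ω := fun ω => tsum_nonneg fun i => h0 i ω
  have hST : ∀ ω, (∑' i, X i ω) ≤ T := fun ω =>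
    Summable.tsum_le_tsum (fun i => hXc i ω) (hsummable ω) hcs
  have hSmeas : Measurable (fun ω => ∑' i, X i ω) := my_tsum_meas X hmeas h0 hXc hcs
  have hps : ∀ (j : ℕ) (ω), 0 ≤ ∑ i ∈ Finset.range j, X i ω := fun j ω =>
    Finset.sum_nonneg fun i _ => h0 i ω
  have hpsT : ∀ (j : ℕ) (ω), ∑ i ∈ Finset.range j, X i ω ≤ T := fun j ω =>
    le_trans (Summable.sum_le_tsum _ (fun i _ => h0 i ω) (hsummable ω)) (hST ω)
  have hnat : ∀ m : ℕ, ∫ ω, (∑' i, X i ω) ^ m ∂P ≤ (μbar + m * b) ^ m := by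
    intro m
    have hpartial : ∀ j : ℕ,
        ∫ ω, (∑ i ∈ Finset.range j, X i ω) ^ m ∂P ≤ (μbar + m * b) ^ m := by
      intro j
      have hint1 : Integrable (fun ω => (∑ i ∈ Finset.range j, X i ω) ^ m) P :=
        my_integrable_of_bounds
          ((Finset.measurable_sum _ fun i _ => hmeas i).pow_const m) (C := T ^ m)
          (fun ω => pow_nonneg (hps j ω) m)
          (fun ω => pow_le_pow_left₀ (hps j ω) (hpsT j ω) m)
      have hint2 : Integrable (fun ω => (∑ i ∈ Finset.range j, X i ω + b) ^ m) P :=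
        my_integrable_of_bounds
          (((Finset.measurable_sum _ fun i _ => hmeas i).add_const b).pow_const m)
          (C := (T + b) ^ m)
          (fun ω => pow_nonneg (by linarith [hps j ω]) m)
          (fun ω => pow_le_pow_left₀ (by linarith [hps j ω]) (by linarith [hpsT j ω]) m)
      calc ∫ ω, (∑ i ∈ Finset.range j, X i ω) ^ m ∂P
          ≤ ∫ ω, (∑ i ∈ Finset.range j, X i ω + b) ^ m ∂P :=
            integral_mono hint1 hint2 fun ω =>
              pow_le_pow_left₀ (hps j ω) (by linarith) m
        _ ≤ ((∑ i ∈ Finset.range j, ∫ ω, X i ω ∂P) + m * b) ^ m :=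
            my_moment_bound X hb hmeas hind h0 h1 m (Finset.range j)
        _ ≤ (μbar + m * b) ^ m := by
            refine pow_le_pow_left₀ ?_ ?_ m
            · have : 0 ≤ ∑ i ∈ Finset.range j, ∫ ω, X i ω ∂P :=
                Finset.sum_nonneg fun i _ => integral_nonneg (h0 i)
              positivity
            · have := hμ (Finset.range j); linarith
    have htends : Tendsto (fun j => ∫ ω, (∑ i ∈ Finset.range j, X i ω) ^ m ∂P) atTop
        (𝓝 (∫ ω, (∑' i, X i ω) ^ m ∂P)) := by
      refine tendsto_integral_of_dominated_convergence (fun _ => T ^ m)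
        (fun j => ((Finset.measurable_sum _ fun i _ => hmeas i).pow_const m).aestronglyMeasurable)
        (integrable_const _) (fun j => ae_of_all _ fun ω => ?_) (ae_of_all _ fun ω => ?_)
      · rw [Real.norm_eq_abs, abs_of_nonneg (pow_nonneg (hps j ω) m)]
        exact pow_le_pow_left₀ (hps j ω) (hpsT j ω) m
      · exact ((hsummable ω).hasSum.tendsto_sum_nat).pow m
    exact le_of_tendsto htends (Filter.Eventually.of_forall hpartial)
  set m := ⌈q⌉₊ with hmdef
  have hm0 : 0 < m := Nat.ceil_pos.mpr hq0
  have hqm : q ≤ (m:ℝ) := Nat.le_ceil q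
  have hmq1 : (m:ℝ) ≤ q + 1 := le_of_lt (Nat.ceil_lt_add_one hq0.le)
  have hm0' : (0:ℝ) < m := lt_of_lt_of_le hq0 hqm
  have hcomp := my_integral_rpow_comp (P := P) hSmeas hS0 hST hq0 hqm
  have hmm : ∫ ω, (∑' i, X i ω) ^ ((m:ℕ):ℝ) ∂P = ∫ ω, (∑' i, X i ω) ^ (m:ℕ) ∂P := by
    refine integral_congr_ae (ae_of_all _ fun ω => ?_)
    exact Real.rpow_natCast _ m
  rw [hmm] at hcomp
  have hA0 : 0 ≤ ∫ ω, (∑' i, X i ω) ^ q ∂P :=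
    integral_nonneg fun ω => Real.rpow_nonneg (hS0 ω) q
  have hBm : ∫ ω, (∑' i, X i ω) ^ (m:ℕ) ∂P ≤ (μbar + m * b) ^ (m:ℕ) := hnat m
  have hBm0 : 0 ≤ ∫ ω, (∑' i, X i ω) ^ (m:ℕ) ∂P :=
    integral_nonneg fun ω => pow_nonneg (hS0 ω) m
  have hKm0 : (0:ℝ) ≤ μbar + m * b := by positivity
  have hstep : (∫ ω, (∑' i, X i ω) ^ (m:ℕ) ∂P) ^ ((m:ℝ))⁻¹ ≤ μbar + m * b := by
    calc (∫ ω, (∑' i, X i ω) ^ (m:ℕ) ∂P) ^ ((m:ℝ))⁻¹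
        ≤ ((μbar + m * b) ^ (m:ℕ)) ^ ((m:ℝ))⁻¹ :=
          Real.rpow_le_rpow hBm0 hBm (by positivity)
      _ = μbar + m * b := by
          rw [← Real.rpow_natCast (μbar + m * b) m, ← Real.rpow_mul hKm0,
            mul_inv_cancel₀ (ne_of_gt hm0'), Real.rpow_one]
  have hfinal : (∫ ω, (∑' i, X i ω) ^ q ∂P) ^ q⁻¹ ≤ 2 * (μbar + q * b) := by
    calc (∫ ω, (∑' i, X i ω) ^ q ∂P) ^ q⁻¹ ≤ μbar + m * b := le_trans hcomp hstep
      _ ≤ 2 * (μbar + q * b) := by nlinarith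
  calc ∫ ω, (∑' i, X i ω) ^ q ∂P
      = ((∫ ω, (∑' i, X i ω) ^ q ∂P) ^ q⁻¹) ^ q := by
        rw [← Real.rpow_mul hA0, inv_mul_cancel₀ (ne_of_gt hq0), Real.rpow_one]
    _ ≤ (2 * (μbar + q * b)) ^ q :=
        Real.rpow_le_rpow (Real.rpow_nonneg hA0 _) hfinal hq0.le

lemma my_main_aux {Ω : Type*} [MeasurableSpace Ω] {P : Measure Ω}
    [IsProbabilityMeasure P] (X : ℕ → Ω → ℝ) (c : ℕ → ℝ) (β bA bB : ℝ)
    (hmeas : ∀ i, Measurable (X i)) (hind : iIndepFun X P)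
    (h0 : ∀ i ω, 0 ≤ X i ω) (hXc : ∀ i ω, X i ω ≤ c i)
    (hc0 : ∀ i, 0 ≤ c i) (hcs : Summable c) (hcb : ∀ i, c i ≤ bB ^ 2)
    (hEX : ∀ i, ∫ ω, X i ω ∂P = β * c i) (hβ0 : 0 ≤ β)
    (hbB0 : 0 ≤ bB) (hbA : 0 ≤ bA) (hBA : bB ≤ bA)
    {p : ℝ} (hp : 2 ≤ p) :
    (1/2) * (p * bA + Real.sqrt p * Real.sqrt (β * ∑' k, c k))
      ≤ (∫ ω, (p * bA + Real.sqrt p * Real.sqrt (∑' k, X k ω)) ^ p ∂P) ^ (1/p) ∧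
    (∫ ω, (p * bA + Real.sqrt p * Real.sqrt (∑' k, X k ω)) ^ p ∂P) ^ (1/p)
      ≤ 8 * (p * bA + Real.sqrt p * Real.sqrt (β * ∑' k, c k)) := by
  have hp0 : (0:ℝ) < p := by linarith
  have hq1 : (1:ℝ) ≤ p/2 := by linarith
  have hq0 : (0:ℝ) < p/2 := by linarith
  set T := ∑' k, c k with hTdef
  have hT0 : 0 ≤ T := tsum_nonneg hc0
  have hb0 : (0:ℝ) ≤ bB ^ 2 := sq_nonneg bB
  have hXb : ∀ i ω, X i ω ≤ bB ^ 2 := fun i ω => le_trans (hXc i ω) (hcb i)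
  have hμ0 : 0 ≤ β * T := mul_nonneg hβ0 hT0
  have hμs : ∀ s : Finset ℕ, ∑ i ∈ s, ∫ ω, X i ω ∂P ≤ β * T := by
    intro s
    calc ∑ i ∈ s, ∫ ω, X i ω ∂P = ∑ i ∈ s, β * c i :=
        Finset.sum_congr rfl fun i _ => hEX i
      _ = β * ∑ i ∈ s, c i := by rw [Finset.mul_sum]
      _ ≤ β * T := mul_le_mul_of_nonneg_left (Summable.sum_le_tsum s (fun i _ => hc0 i) hcs) hβ0
  have hsummable : ∀ ω, Summable fun i => X i ω := fun ω =>
    Summable.of_nonneg_of_le (fun i => h0 i ω) (fun i => hXc i ω) hcs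
  have hS0 : ∀ ω, 0 ≤ ∑' i, X i ω := fun ω => tsum_nonneg fun i => h0 i ω
  have hST : ∀ ω, (∑' i, X i ω) ≤ T := fun ω =>
    Summable.tsum_le_tsum (fun i => hXc i ω) (hsummable ω) hcs
  have hSmeas : Measurable (fun ω => ∑' i, X i ω) := my_tsum_meas X hmeas h0 hXc hcs
  -- mean of S
  have hES : ∫ ω, (∑' i, X i ω) ∂P = β * T := by
    rw [integral_tsum (fun i => (hmeas i).aestronglyMeasurable) ?_]
    · rw [show (fun i => ∫ ω, X i ω ∂P) = fun i => β * c i from funext fun i => hEX i]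
      exact tsum_mul_left
    · have hbound : ∀ i, ∫⁻ ω, ‖X i ω‖ₑ ∂P ≤ ENNReal.ofReal (c i) := by
        intro i
        have h1 : ∫⁻ ω, ‖X i ω‖ₑ ∂P ≤ ∫⁻ (_ : Ω), ENNReal.ofReal (c i) ∂P := by
          refine lintegral_mono fun ω => ?_
          rw [← ofReal_norm, Real.norm_eq_abs, abs_of_nonneg (h0 i ω)]
          exact ENNReal.ofReal_le_ofReal (hXc i ω)
        simpa using h1
      refine ne_of_lt (lt_of_le_of_lt (ENNReal.tsum_le_tsum hbound) ?_)
      rw [← ENNReal.ofReal_tsum_of_nonneg hc0 hcs]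
      exact ENNReal.ofReal_lt_top
  -- the integrand
  have hZ0 : ∀ ω, (0:ℝ) ≤ p * bA + Real.sqrt p * Real.sqrt (∑' k, X k ω) := fun ω => by
    have := Real.sqrt_nonneg p
    have := Real.sqrt_nonneg (∑' k, X k ω)
    nlinarith
  have hZM : ∀ ω, p * bA + Real.sqrt p * Real.sqrt (∑' k, X k ω)
      ≤ p * bA + Real.sqrt p * Real.sqrt T := fun ω => by
    have := Real.sqrt_le_sqrt (hST ω)
    nlinarith [Real.sqrt_nonneg p]
  have hZmeas : Measurable (fun ω => p * bA + Real.sqrt p * Real.sqrt (∑' k, X k ω)) :=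
    measurable_const.add (measurable_const.mul hSmeas.sqrt)
  have hint : Integrable (fun ω =>
      (p * bA + Real.sqrt p * Real.sqrt (∑' k, X k ω)) ^ p) P :=
    my_integrable_of_bounds
      ((Real.continuous_rpow_const hp0.le).measurable.comp hZmeas)
      (C := (p * bA + Real.sqrt p * Real.sqrt T) ^ p)
      (fun ω => Real.rpow_nonneg (hZ0 ω) p)
      (fun ω => Real.rpow_le_rpow (hZ0 ω) (hZM ω) hp0.le)
  set A := ∫ ω, (p * bA + Real.sqrt p * Real.sqrt (∑' k, X k ω)) ^ p ∂P with hAdef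
  have hA0 : 0 ≤ A := integral_nonneg fun ω => Real.rpow_nonneg (hZ0 ω) p
  have hpbA0 : 0 ≤ p * bA := by positivity
  -- (√p √S)^p = p^{p/2} S^{p/2}
  have hYp : ∀ ω, (Real.sqrt p * Real.sqrt (∑' k, X k ω)) ^ p
      = p ^ (p/2) * (∑' k, X k ω) ^ (p/2) := fun ω => by
    rw [Real.mul_rpow (Real.sqrt_nonneg p) (Real.sqrt_nonneg _),
      Real.rpow_div_two_eq_sqrt p hp0.le, Real.rpow_div_two_eq_sqrt p (hS0 ω)]
  have hintYp : Integrable (fun ω => (Real.sqrt p * Real.sqrt (∑' k, X k ω)) ^ p) P :=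
    my_integrable_of_bounds
      ((Real.continuous_rpow_const hp0.le).measurable.comp
        (measurable_const.mul hSmeas.sqrt))
      (C := (Real.sqrt p * Real.sqrt T) ^ p)
      (fun ω => Real.rpow_nonneg (by positivity) p)
      (fun ω => Real.rpow_le_rpow (by positivity)
        (mul_le_mul_of_nonneg_left (Real.sqrt_le_sqrt (hST ω)) (Real.sqrt_nonneg p)) hp0.le)
  -- LOWER BOUND part 1
  have hlow1 : p * bA ≤ A ^ (1/p) := by
    have h1 : (p * bA) ^ p ≤ A := by
      have hmono := integral_mono (μ := P) (integrable_const ((p * bA) ^ p)) hint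
        (fun ω => Real.rpow_le_rpow hpbA0
          (le_add_of_nonneg_right (by positivity)) hp0.le)
      simpa using hmono
    have e1 : p * bA = ((p * bA) ^ p) ^ (1/p) := by
      rw [← Real.rpow_mul hpbA0, mul_one_div_cancel hp0.ne', Real.rpow_one]
    rw [e1]
    exact Real.rpow_le_rpow (Real.rpow_nonneg hpbA0 p) h1 (by positivity)
  -- LOWER BOUND part 2
  have hlow2 : Real.sqrt p * Real.sqrt (β * T) ≤ A ^ (1/p) := by
    have hI0 : 0 ≤ ∫ ω, (∑' k, X k ω) ^ (p/2) ∂P :=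
      integral_nonneg fun ω => Real.rpow_nonneg (hS0 ω) _
    have hjensen : β * T ≤ (∫ ω, (∑' k, X k ω) ^ (p/2) ∂P) ^ (p/2)⁻¹ := by
      have hcmp := my_integral_rpow_comp (P := P) hSmeas hS0 hST one_pos hq1
      simp only [Real.rpow_one, inv_one] at hcmp
      rwa [hES] at hcmp
    have hSq_lb : (β * T) ^ (p/2) ≤ ∫ ω, (∑' k, X k ω) ^ (p/2) ∂P := by
      calc (β * T) ^ (p/2)
          ≤ ((∫ ω, (∑' k, X k ω) ^ (p/2) ∂P) ^ (p/2)⁻¹) ^ (p/2) :=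
            Real.rpow_le_rpow hμ0 hjensen hq0.le
        _ = ∫ ω, (∑' k, X k ω) ^ (p/2) ∂P := by
            rw [← Real.rpow_mul hI0, inv_mul_cancel₀ hq0.ne', Real.rpow_one]
    have h2 : (p * (β * T)) ^ (p/2) ≤ A := by
      rw [Real.mul_rpow hp0.le hμ0]
      calc p ^ (p/2) * (β * T) ^ (p/2)
          ≤ p ^ (p/2) * ∫ ω, (∑' k, X k ω) ^ (p/2) ∂P :=
            mul_le_mul_of_nonneg_left hSq_lb (Real.rpow_nonneg hp0.le _)
        _ = ∫ ω, (Real.sqrt p * Real.sqrt (∑' k, X k ω)) ^ p ∂P := by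
            rw [← integral_const_mul]
            exact integral_congr_ae (ae_of_all _ fun ω => (hYp ω).symm)
        _ ≤ A := integral_mono hintYp hint fun ω =>
            Real.rpow_le_rpow (by positivity) (le_add_of_nonneg_left hpbA0) hp0.le
    have e2 : Real.sqrt p * Real.sqrt (β * T) = ((p * (β * T)) ^ (p/2)) ^ (1/p) := by
      rw [← Real.sqrt_mul hp0.le, Real.sqrt_eq_rpow,
        ← Real.rpow_mul (mul_nonneg hp0.le hμ0)]
      congr 1
      field_simp
    rw [e2]
    exact Real.rpow_le_rpow
      (Real.rpow_nonneg (mul_nonneg hp0.le hμ0) _) h2 (by positivity)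
  constructor
  · linarith
  -- UPPER BOUND
  · have hup_pt : ∀ ω, (p * bA + Real.sqrt p * Real.sqrt (∑' k, X k ω)) ^ p
        ≤ 2 ^ p * ((p * bA) ^ p + (Real.sqrt p * Real.sqrt (∑' k, X k ω)) ^ p) := by
      intro ω
      have hv0 : (0:ℝ) ≤ Real.sqrt p * Real.sqrt (∑' k, X k ω) := by positivity
      have hmax0 : (0:ℝ) ≤ max (p * bA) (Real.sqrt p * Real.sqrt (∑' k, X k ω)) :=
        le_trans hpbA0 (le_max_left _ _)
      calc (p * bA + Real.sqrt p * Real.sqrt (∑' k, X k ω)) ^ p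
          ≤ (2 * max (p * bA) (Real.sqrt p * Real.sqrt (∑' k, X k ω))) ^ p := by
            refine Real.rpow_le_rpow (hZ0 ω) ?_ hp0.le
            have := le_max_left (p * bA) (Real.sqrt p * Real.sqrt (∑' k, X k ω))
            have := le_max_right (p * bA) (Real.sqrt p * Real.sqrt (∑' k, X k ω))
            linarith
        _ = 2 ^ p * (max (p * bA) (Real.sqrt p * Real.sqrt (∑' k, X k ω))) ^ p :=
            Real.mul_rpow (by norm_num) hmax0
        _ ≤ 2 ^ p * ((p * bA) ^ p + (Real.sqrt p * Real.sqrt (∑' k, X k ω)) ^ p) := by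
            refine mul_le_mul_of_nonneg_left ?_ (Real.rpow_nonneg (by norm_num) p)
            rcases max_cases (p * bA) (Real.sqrt p * Real.sqrt (∑' k, X k ω)) with
              ⟨hmx, _⟩ | ⟨hmx, _⟩ <;> rw [hmx]
            · linarith [Real.rpow_nonneg hv0 p]
            · linarith [Real.rpow_nonneg hpbA0 p]
    have hmoment : ∫ ω, (∑' i, X i ω) ^ (p/2) ∂P
        ≤ (2 * (β * T + (p/2) * bB ^ 2)) ^ (p/2) :=
      my_tsum_moment_bound X hb0 hμ0 hmeas hind h0 hXb hc0 hcs hXc hμs hq1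
    set D := 2 * (β * T + (p/2) * bB ^ 2) with hDdef
    have hD0 : 0 ≤ D := by rw [hDdef]; positivity
    have hup1 : A ≤ 2 ^ p * ((p * bA) ^ p + (p * D) ^ (p/2)) := by
      calc A ≤ ∫ ω, 2 ^ p * ((p * bA) ^ p
              + (Real.sqrt p * Real.sqrt (∑' k, X k ω)) ^ p) ∂P :=
            integral_mono hint (((integrable_const _).add hintYp).const_mul _) hup_pt
        _ = 2 ^ p * ((p * bA) ^ p + p ^ (p/2) * ∫ ω, (∑' k, X k ω) ^ (p/2) ∂P) := by
            rw [integral_const_mul, integral_add (integrable_const _) hintYp, integral_const]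
            simp only [measure_univ, probReal_univ, ENNReal.toReal_one, one_smul]
            congr 2
            rw [← integral_const_mul]
            exact integral_congr_ae (ae_of_all _ fun ω => hYp ω)
        _ ≤ 2 ^ p * ((p * bA) ^ p + p ^ (p/2) * D ^ (p/2)) := by
            refine mul_le_mul_of_nonneg_left (add_le_add_right ?_ _)
              (Real.rpow_nonneg (by norm_num) p)
            exact mul_le_mul_of_nonneg_left hmoment (Real.rpow_nonneg hp0.le _)
        _ = 2 ^ p * ((p * bA) ^ p + (p * D) ^ (p/2)) := by
            rw [Real.mul_rpow hp0.le hD0]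
    have hsplit : ∀ u v : ℝ, 0 ≤ u → 0 ≤ v →
        (u + v) ^ (1/p) ≤ 2 * (u ^ (1/p) + v ^ (1/p)) := by
      intro u v hu hv
      have h1p0 : (0:ℝ) < 1/p := by positivity
      have h1p1 : (1:ℝ)/p ≤ 1 := by
        rw [div_le_one hp0]; linarith
      have hmax0 : (0:ℝ) ≤ max u v := le_trans hu (le_max_left _ _)
      calc (u + v) ^ (1/p) ≤ (2 * max u v) ^ (1/p) := by
            refine Real.rpow_le_rpow (by linarith) ?_ h1p0.le
            have := le_max_left u v; have := le_max_right u v; linarith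
        _ = 2 ^ (1/p) * (max u v) ^ (1/p) := Real.mul_rpow (by norm_num) hmax0
        _ ≤ 2 * (max u v) ^ (1/p) := by
            refine mul_le_mul_of_nonneg_right ?_ (Real.rpow_nonneg hmax0 _)
            calc (2:ℝ) ^ (1/p) ≤ 2 ^ (1:ℝ) :=
                Real.rpow_le_rpow_of_exponent_le one_le_two h1p1
              _ = 2 := Real.rpow_one 2
        _ ≤ 2 * (u ^ (1/p) + v ^ (1/p)) := by
            refine mul_le_mul_of_nonneg_left ?_ (by norm_num)
            rcases max_cases u v with ⟨hmx, _⟩ | ⟨hmx, _⟩ <;> rw [hmx]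
            · linarith [Real.rpow_nonneg hv (1/p)]
            · linarith [Real.rpow_nonneg hu (1/p)]
    have hu1 : ((p * bA) ^ p) ^ (1/p) = p * bA := by
      rw [← Real.rpow_mul hpbA0, mul_one_div_cancel hp0.ne', Real.rpow_one]
    have hv1 : ((p * D) ^ (p/2)) ^ (1/p) = Real.sqrt (p * D) := by
      rw [← Real.rpow_mul (mul_nonneg hp0.le hD0), Real.sqrt_eq_rpow]
      congr 1
      field_simp
    have hsqrtD : Real.sqrt (p * D) ≤ Real.sqrt 2 * (Real.sqrt p * Real.sqrt (β * T)) + p * bB := by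
      have hpd : p * D = 2 * (p * (β * T)) + (p * bB) ^ 2 := by rw [hDdef]; ring
      calc Real.sqrt (p * D) = Real.sqrt (2 * (p * (β * T)) + (p * bB) ^ 2) := by rw [hpd]
        _ ≤ Real.sqrt (2 * (p * (β * T))) + Real.sqrt ((p * bB) ^ 2) :=
            my_sqrt_add_le (by positivity) (sq_nonneg _)
        _ = Real.sqrt 2 * (Real.sqrt p * Real.sqrt (β * T)) + p * bB := by
            rw [Real.sqrt_sq (by positivity), Real.sqrt_mul (by norm_num),
              Real.sqrt_mul hp0.le]
    have hAfinal : A ^ (1/p) ≤ 2 * ((p * bA) ^ p + (p * D) ^ (p/2)) ^ (1/p) := by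
      calc A ^ (1/p) ≤ (2 ^ p * ((p * bA) ^ p + (p * D) ^ (p/2))) ^ (1/p) :=
          Real.rpow_le_rpow hA0 hup1 (by positivity)
        _ = (2 ^ p) ^ (1/p) * ((p * bA) ^ p + (p * D) ^ (p/2)) ^ (1/p) :=
          Real.mul_rpow (Real.rpow_nonneg (by norm_num) p)
            (by positivity)
        _ = 2 * ((p * bA) ^ p + (p * D) ^ (p/2)) ^ (1/p) := by
          rw [← Real.rpow_mul (by norm_num : (0:ℝ) ≤ 2),
            mul_one_div_cancel hp0.ne', Real.rpow_one]
    have hs2 : Real.sqrt 2 ≤ 2 := by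
      nlinarith [Real.sq_sqrt (show (0:ℝ) ≤ 2 by norm_num), Real.sqrt_nonneg 2]
    have hss0 : 0 ≤ Real.sqrt p * Real.sqrt (β * T) := by positivity
    calc A ^ (1/p) ≤ 2 * ((p * bA) ^ p + (p * D) ^ (p/2)) ^ (1/p) := hAfinal
      _ ≤ 2 * (2 * (((p * bA) ^ p) ^ (1/p) + ((p * D) ^ (p/2)) ^ (1/p))) := by
          refine mul_le_mul_of_nonneg_left
            (hsplit _ _ (Real.rpow_nonneg hpbA0 p) (Real.rpow_nonneg (by positivity) _)) (by norm_num)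
      _ = 4 * (p * bA + Real.sqrt (p * D)) := by rw [hu1, hv1]; ring
      _ ≤ 4 * (p * bA + (Real.sqrt 2 * (Real.sqrt p * Real.sqrt (β * T)) + p * bB)) := by
          refine mul_le_mul_of_nonneg_left (by linarith) (by norm_num)
      _ ≤ 8 * (p * bA + Real.sqrt p * Real.sqrt (β * T)) := by
          have h1 : Real.sqrt 2 * (Real.sqrt p * Real.sqrt (β * T))
              ≤ 2 * (Real.sqrt p * Real.sqrt (β * T)) :=
            mul_le_mul_of_nonneg_right hs2 hss0
          have h2 : p * bB ≤ p * bA := mul_le_mul_of_nonneg_left hBA hp0.le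
          linarith

lemma my_integral_bernoulli {Ω : Type*} [MeasurableSpace Ω] {P : Measure Ω}
    [IsProbabilityMeasure P] {κ : Ω → ℝ} (hκ : Measurable κ) {α : ℝ}
    (hα0 : 0 ≤ α) (hα1 : α ≤ 1)
    (hvals : ∀ ω, κ ω = 0 ∨ κ ω = 1) (hPκ : P {ω | κ ω = 0} = ENNReal.ofReal α) :
    ∫ ω, κ ω ∂P = 1 - α := by
  have hms : MeasurableSet {ω | κ ω = 1} := hκ (measurableSet_singleton 1)
  have hms0 : MeasurableSet {ω | κ ω = 0} := hκ (measurableSet_singleton 0)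
  have hset : {ω | κ ω = 1} = {ω | κ ω = 0}ᶜ := by
    ext ω
    simp only [Set.mem_setOf_eq, Set.mem_compl_iff]
    rcases hvals ω with h | h <;> simp [h]
  have hindic : κ = Set.indicator {ω | κ ω = 1} (fun _ => (1:ℝ)) := by
    funext ω
    rcases hvals ω with h | h
    · rw [h, Set.indicator_of_notMem (by simp [Set.mem_setOf_eq, h])]
    · rw [h, Set.indicator_of_mem (by simp [Set.mem_setOf_eq, h])]
  rw [hindic, integral_indicator_const (1:ℝ) hms, measureReal_def, hset,
    measure_compl hms0 (measure_ne_top P _), hPκ, measure_univ,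
    ENNReal.toReal_sub_of_le (ENNReal.ofReal_le_one.mpr hα1) ENNReal.one_ne_top]
  simp [ENNReal.toReal_ofReal hα0]

theorem stmt3 :
    ∃ C₁ C₂ : ℝ, 0 < C₁ ∧ 0 < C₂ ∧
    ∀ (Ω : Type) (_mΩ : MeasurableSpace Ω) (P : Measure Ω),
      IsProbabilityMeasure P →
      ∀ (α : ℝ) (κ θ : ℕ → Ω → ℝ) (a : ℕ → ℝ),
        0 ≤ α → α < 1 →
        (∀ n, Measurable (κ n)) →
        (∀ n, Measurable (θ n)) →
        iIndepFun (Sum.elim κ θ) P →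
        (∀ n ω, κ n ω = 0 ∨ κ n ω = 1) →
        (∀ n, P {ω | κ n ω = 0} = ENNReal.ofReal α) →
        (∀ n t, 0 ≤ t → P {ω | t < θ n ω} = ENNReal.ofReal (Real.exp (-t))) →
        (∀ n, 0 ≤ a n) → Antitone a →
        Summable (fun n => (a n) ^ 2) →
        ∀ (n : ℕ) (p : ℝ), 2 ≤ p →
          C₁ * (p * a n + Real.sqrt p * Real.sqrt ((1 - α) * ∑' k, (a (n + 1 + k)) ^ 2)) ≤ (∫ ω, (p * a n + Real.sqrt p * Real.sqrt (∑' k, κ (n + 1 + k) ω * (a (n + 1 + k)) ^ 2)) ^ p ∂P) ^ (1 / p) ∧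
          (∫ ω, (p * a n + Real.sqrt p * Real.sqrt (∑' k, κ (n + 1 + k) ω * (a (n + 1 + k)) ^ 2)) ^ p ∂P) ^ (1 / p) ≤ C₂ * (p * a n + Real.sqrt p * Real.sqrt ((1 - α) * ∑' k, (a (n + 1 + k)) ^ 2)) := by
  refine ⟨1/2, 8, by norm_num, by norm_num, ?_⟩
  intro Ω mΩ P hP α κ θ a hα0 hα1 hκm hθm hind hvals hκP hθP ha0 hamono hsum n p hp
  have hκ0 : ∀ j ω, 0 ≤ κ j ω := by
    intro j ω; rcases hvals j ω with h | h <;> rw [h] <;> norm_num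
  have hκ1 : ∀ j ω, κ j ω ≤ 1 := by
    intro j ω; rcases hvals j ω with h | h <;> rw [h] <;> norm_num
  have hindκ : iIndepFun
      (fun i : ℕ => κ (n + 1 + i)) P :=
    my_iIndepFun_comp_inj hind
      (e := fun i : ℕ => (Sum.inl (n + 1 + i) : ℕ ⊕ ℕ))
      (fun i j hij => by have := Sum.inl.inj hij; omega)
  have hindX : iIndepFun
      (fun i : ℕ => fun ω => κ (n + 1 + i) ω * (a (n + 1 + i)) ^ 2) P :=
    hindκ.comp (fun i x => x * (a (n + 1 + i)) ^ 2)
      (fun i => measurable_id.mul_const _)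
  have hEX : ∀ i : ℕ, ∫ ω, κ (n + 1 + i) ω * (a (n + 1 + i)) ^ 2 ∂P
      = (1 - α) * (a (n + 1 + i)) ^ 2 := by
    intro i
    rw [integral_mul_const, my_integral_bernoulli (hκm _) hα0 hα1.le
      (hvals _) (hκP _), mul_comm]
  exact my_main_aux (fun i ω => κ (n + 1 + i) ω * (a (n + 1 + i)) ^ 2)
    (fun i => (a (n + 1 + i)) ^ 2) (1 - α) (a n) (a (n + 1))
    (fun i => (hκm _).mul_const _) hindX
    (fun i ω => mul_nonneg (hκ0 _ ω) (sq_nonneg _))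
    (fun i ω => by
      have := mul_le_mul_of_nonneg_right (hκ1 (n + 1 + i) ω) (sq_nonneg (a (n + 1 + i)))
      simpa using this)
    (fun i => sq_nonneg _)
    (hsum.comp_injective (fun i j hij => by omega))
    (fun i => pow_le_pow_left₀ (ha0 _) (hamono (Nat.le_add_right (n + 1) i)) 2)
    hEX (by linarith) (ha0 _) (ha0 _) (hamono (Nat.le_succ n)) hp
end

section
/- There exists a universal constant C ∈ (0,∞) with the following property. Assume ∑_{k≥1} a_k² < ∞. Then for every n ≥ 1 and every real p ≥ 2, ( 𝔼 | ∑_{k>n} (κ_k − (1−α)) a_k² |^{p/2} )^{2/p} ≤ C ( p·a_n² + √p · ( α(1−α) ∑_{k>n} a_k⁴ )^{1/2} ), where the series ∑_{k>n} (κ_k − (1−α)) a_k² converges almost surely and in L². -/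
open MeasureTheory ProbabilityTheory Filter Topology

private lemma exp_le_one_add_sq {x : ℝ} (hx : x ≤ 1) : Real.exp x ≤ 1 + x + x ^ 2 := by
  rcases le_or_gt (-1) x with h | h
  · have hb := Real.exp_bound (x := x) (by rw [abs_le]; exact ⟨h, hx⟩) (n := 2) (by norm_num)
    rw [Finset.sum_range_succ, Finset.sum_range_one] at hb
    norm_num at hb
    have h2 := (abs_le.mp hb).2
    nlinarith [sq_nonneg x, sq_abs x]
  · have h1 : Real.exp x ≤ Real.exp (-1) := Real.exp_le_exp.mpr h.le
    have h2 : Real.exp (-1) * Real.exp 1 = 1 := by rw [← Real.exp_add]; norm_num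
    have h3 : (2 : ℝ) ≤ Real.exp 1 := by have := Real.add_one_le_exp 1; linarith
    have h4 : 0 < Real.exp (-1) := Real.exp_pos _
    nlinarith [sq_nonneg (x + 1/2)]

private lemma iIndepFun_precomp {Ω ι ι' : Type*} {mΩ : MeasurableSpace Ω} {μ : Measure Ω}
    {f : ι' → Ω → ℝ} (h : iIndepFun f μ)
    {u : ι → ι'} (hu : Function.Injective u) :
    iIndepFun (fun i => f (u i)) μ := by
  rw [iIndepFun_iff_measure_inter_preimage_eq_mul] at h ⊢
  intro S sets hsets
  classical
  set T : ι' → Set ℝ := fun j => ⋂ i ∈ S, ⋂ (_ : u i = j), sets i with hT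
  have hTmeas : ∀ j, MeasurableSet (T j) := fun j =>
    MeasurableSet.biInter S.countable_toSet fun i hi =>
      MeasurableSet.iInter fun _ => hsets i hi
  have hTu : ∀ i ∈ S, T (u i) = sets i := by
    intro i hi
    ext x
    simp only [hT, Set.mem_iInter]
    constructor
    · intro hx; exact hx i hi rfl
    · intro hx i' hi' he; rwa [hu he]
  have key := h (S.image u) (sets := T) (fun j _ => hTmeas j)
  have e1 : (⋂ j ∈ S.image u, f j ⁻¹' T j) = ⋂ i ∈ S, (fun i => f (u i)) i ⁻¹' sets i := by
    ext x
    simp only [Set.mem_iInter, Finset.mem_image]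
    constructor
    · intro hx i hi
      have := hx (u i) ⟨i, hi, rfl⟩
      rwa [hTu i hi] at this
    · rintro hx j ⟨i, hi, rfl⟩
      rw [hTu i hi]; exact hx i hi
  have e2 : ∏ j ∈ S.image u, μ (f j ⁻¹' T j)
      = ∏ i ∈ S, μ ((fun i => f (u i)) i ⁻¹' sets i) := by
    rw [Finset.prod_image (fun i _ i' _ hii => hu hii)]
    exact Finset.prod_congr rfl fun i hi => by rw [hTu i hi]
  rw [← e1, ← e2]; exact key

private lemma integral_two_point {Ω : Type*} {mΩ : MeasurableSpace Ω} {P : Measure Ω}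
    [IsProbabilityMeasure P] {κ : Ω → ℝ} (hκ : Measurable κ)
    (h01 : ∀ ω, κ ω = 0 ∨ κ ω = 1) {α : ℝ} (h0 : 0 ≤ α)
    (hP : P {ω | κ ω = 0} = ENNReal.ofReal α) (g : ℝ → ℝ) :
    ∫ ω, g (κ ω) ∂P = α * g 0 + (1 - α) * g 1 := by
  have hms : MeasurableSet {ω | κ ω = 0} := hκ (measurableSet_singleton 0)
  have hfun : ∀ ω, g (κ ω)
      = Set.indicator {ω | κ ω = 0} (fun _ => g 0 - g 1) ω + g 1 := by
    intro ω
    rcases h01 ω with h | h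
    · rw [Set.indicator_of_mem (by exact h)]; rw [h]; ring
    · rw [Set.indicator_of_notMem (by simp [h])]; rw [h]; ring
  rw [show (fun ω => g (κ ω)) = fun ω =>
      Set.indicator {ω | κ ω = 0} (fun _ => g 0 - g 1) ω + g 1 from funext hfun]
  rw [integral_add ((integrable_const (g 0 - g 1)).indicator hms) (integrable_const _),
    integral_indicator_const _ hms, integral_const]
  simp only [measureReal_def, measure_univ, ENNReal.toReal_one, one_smul, smul_eq_mul, hP,
    ENNReal.toReal_ofReal h0]
  ring

private lemma two_point_mgf_le {α c t : ℝ} (h0 : 0 ≤ α) (h1 : α ≤ 1) (hc : 0 ≤ c)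
    (ht : |t| * c ≤ 1) :
    α * Real.exp (t * ((0 - (1 - α)) * c)) + (1 - α) * Real.exp (t * ((1 - (1 - α)) * c))
      ≤ Real.exp (t ^ 2 * (α * (1 - α) * c ^ 2)) := by
  have hta : -|t| ≤ t := neg_abs_le t
  have htb : t ≤ |t| := le_abs_self t
  have htc : 0 ≤ |t| * c := mul_nonneg (abs_nonneg t) hc
  have hx1 : t * ((0 - (1 - α)) * c) ≤ 1 := by
    have k1 : (-t) * ((1 - α) * c) ≤ |t| * ((1 - α) * c) :=
      mul_le_mul_of_nonneg_right (neg_le_abs t) (by nlinarith)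
    have k2 : |t| * ((1 - α) * c) ≤ |t| * c := by
      apply mul_le_mul_of_nonneg_left _ (abs_nonneg t)
      nlinarith
    nlinarith
  have hx2 : t * ((1 - (1 - α)) * c) ≤ 1 := by
    have k1 : t * (α * c) ≤ |t| * (α * c) :=
      mul_le_mul_of_nonneg_right (le_abs_self t) (by nlinarith)
    have k2 : |t| * (α * c) ≤ |t| * c := by
      apply mul_le_mul_of_nonneg_left _ (abs_nonneg t)
      nlinarith
    nlinarith
  have e1 := exp_le_one_add_sq hx1
  have e2 := exp_le_one_add_sq hx2
  have e3 := Real.add_one_le_exp (t ^ 2 * (α * (1 - α) * c ^ 2))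
  nlinarith [mul_le_mul_of_nonneg_left e1 h0,
    mul_le_mul_of_nonneg_left e2 (by linarith : (0:ℝ) ≤ 1 - α)]

private lemma abs_rpow_le_exp {q lam s : ℝ} (hq : 1 ≤ q) (hlam : 0 < lam) :
    |s| ^ q ≤ (q / lam) ^ q * Real.exp (-q) * (Real.exp (lam * s) + Real.exp (-(lam * s))) := by
  have hq0 : (0 : ℝ) < q := lt_of_lt_of_le one_pos hq
  have key : ∀ u : ℝ, 0 ≤ u → u ^ q ≤ (q / lam) ^ q * Real.exp (lam * u - q) := by
    intro u hu
    rcases eq_or_lt_of_le hu with h | h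
    · rw [← h, Real.zero_rpow (ne_of_gt hq0)]
      positivity
    · have hql : (0 : ℝ) < q / lam := div_pos hq0 hlam
      rw [Real.rpow_def_of_pos h, Real.rpow_def_of_pos hql, ← Real.exp_add, Real.exp_le_exp]
      have hlog := Real.log_le_sub_one_of_pos (show (0:ℝ) < u * lam / q by positivity)
      rw [Real.log_div (by positivity) (ne_of_gt hq0),
        Real.log_mul (ne_of_gt h) (ne_of_gt hlam)] at hlog
      rw [Real.log_div (ne_of_gt hq0) (ne_of_gt hlam)]
      have hmul := mul_le_mul_of_nonneg_left hlog hq0.le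
      have heq : q * (u * lam / q) = u * lam := by field_simp
      nlinarith
  have h1 : |s| ^ q ≤ (q / lam) ^ q * Real.exp (lam * |s| - q) := key _ (abs_nonneg s)
  have h2 : Real.exp (lam * |s|) ≤ Real.exp (lam * s) + Real.exp (-(lam * s)) := by
    rcases abs_cases s with ⟨h, _⟩ | ⟨h, _⟩
    · rw [h]; exact le_add_of_nonneg_right (Real.exp_pos _).le
    · rw [h, mul_neg]; exact le_add_of_nonneg_left (Real.exp_pos _).le
  calc |s| ^ q ≤ (q / lam) ^ q * Real.exp (lam * |s| - q) := h1
    _ = (q / lam) ^ q * Real.exp (-q) * Real.exp (lam * |s|) := by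
        rw [mul_assoc, ← Real.exp_add]; ring_nf
    _ ≤ (q / lam) ^ q * Real.exp (-q) * (Real.exp (lam * s) + Real.exp (-(lam * s))) := by
        apply mul_le_mul_of_nonneg_left h2
        positivity

set_option maxHeartbeats 1000000 in
theorem stmt4 :
    ∃ C : ℝ, 0 < C ∧
    ∀ (Ω : Type) (_mΩ : MeasurableSpace Ω) (P : Measure Ω),
      IsProbabilityMeasure P →
      ∀ (α : ℝ) (κ θ : ℕ → Ω → ℝ) (a : ℕ → ℝ),
        0 ≤ α → α < 1 →
        (∀ n, Measurable (κ n)) →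
        (∀ n, Measurable (θ n)) →
        iIndepFun (Sum.elim κ θ) P →
        (∀ n ω, κ n ω = 0 ∨ κ n ω = 1) →
        (∀ n, P {ω | κ n ω = 0} = ENNReal.ofReal α) →
        (∀ n t, 0 ≤ t → P {ω | t < θ n ω} = ENNReal.ofReal (Real.exp (-t))) →
        (∀ n, 0 ≤ a n) → Antitone a →
        Summable (fun n => (a n) ^ 2) →
        ∀ n : ℕ, ∃ Y : Ω → ℝ,
          (∀ᵐ ω ∂P, Tendsto (fun N => ∑ k ∈ Finset.range N, (κ (n + 1 + k) ω - (1 - α)) * (a (n + 1 + k)) ^ 2) atTop (𝓝 (Y ω))) ∧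
          Tendsto (fun N => ∫ ω, (∑ k ∈ Finset.range N, (κ (n + 1 + k) ω - (1 - α)) * (a (n + 1 + k)) ^ 2 - Y ω) ^ 2 ∂P) atTop (𝓝 (0 : ℝ)) ∧
          ∀ p : ℝ, 2 ≤ p →
            (∫ ω, |Y ω| ^ (p / 2) ∂P) ^ (2 / p)
              ≤ C * (p * (a n) ^ 2 + Real.sqrt p * Real.sqrt (α * (1 - α) * ∑' k, (a (n + 1 + k)) ^ 4)) := by
  refine ⟨2, by norm_num, ?_⟩
  intro Ω mΩ P hPprob α κ θ a hα0 hα1 hκm hθm hindep h01 hκ0 hθd ha0 hmono hsum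
  intro n
  set X : ℕ → Ω → ℝ := fun k ω => (κ (n + 1 + k) ω - (1 - α)) * (a (n + 1 + k)) ^ 2 with hXdef
  have hXm : ∀ k, Measurable (X k) := fun k => ((hκm _).sub measurable_const).mul_const _
  have hXbd : ∀ k ω, |X k ω| ≤ (a (n + 1 + k)) ^ 2 := by
    intro k ω
    rw [hXdef]
    simp only []
    rw [abs_mul, abs_of_nonneg (sq_nonneg (a (n + 1 + k)))]
    have hk : |κ (n + 1 + k) ω - (1 - α)| ≤ 1 := by
      rcases h01 (n + 1 + k) ω with h | h <;> rw [h, abs_le] <;> constructor <;> linarith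
    nlinarith [sq_nonneg (a (n + 1 + k))]
  have hsum2 : Summable (fun k => (a (n + 1 + k)) ^ 2) := by
    refine Summable.congr ((summable_nat_add_iff (n + 1)).mpr hsum) fun k => ?_
    rw [add_comm k (n + 1)]
  have hXsummable : ∀ ω, Summable (fun k => X k ω) := fun ω =>
    Summable.of_norm_bounded hsum2 (fun k => by
      rw [Real.norm_eq_abs]; exact hXbd k ω)
  set Y : Ω → ℝ := fun ω => ∑' k, X k ω with hYdef
  set S : ℕ → Ω → ℝ := fun N ω => ∑ k ∈ Finset.range N, X k ω with hSdef
  have hSm : ∀ N, Measurable (S N) := fun N => by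
    apply Finset.measurable_sum
    exact fun k _ => hXm k
  have hTend : ∀ ω, Tendsto (fun N => S N ω) atTop (𝓝 (Y ω)) := fun ω =>
    (hXsummable ω).hasSum.tendsto_sum_nat
  have hYm : Measurable Y := measurable_of_tendsto_metrizable hSm
    (tendsto_pi_nhds.mpr hTend)
  set M : ℝ := ∑' k, (a (n + 1 + k)) ^ 2 with hMdef
  have hM0 : 0 ≤ M := tsum_nonneg fun k => sq_nonneg _
  have hSbd : ∀ N ω, |S N ω| ≤ M := by
    intro N ω
    calc |S N ω| ≤ ∑ k ∈ Finset.range N, |X k ω| := Finset.abs_sum_le_sum_abs _ _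
      _ ≤ ∑ k ∈ Finset.range N, (a (n + 1 + k)) ^ 2 :=
          Finset.sum_le_sum fun k _ => hXbd k ω
      _ ≤ M := Summable.sum_le_tsum _ (fun k _ => sq_nonneg _) hsum2
  refine ⟨Y, Eventually.of_forall hTend, ?_, ?_⟩
  · -- L² convergence
    set R : ℕ → ℝ := fun N => ∑' k, (a (n + 1 + (k + N))) ^ 2 with hRdef
    have hdiff : ∀ N ω, |S N ω - Y ω| ≤ R N := by
      intro N ω
      have hsplit := Summable.sum_add_tsum_nat_add N (hXsummable ω)
      have heq : S N ω - Y ω = -∑' k, X (k + N) ω := by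
        rw [hSdef, hYdef]; simp only []; linarith [hsplit]
      rw [heq, abs_neg]
      exact tsum_of_norm_bounded (Summable.congr ((summable_nat_add_iff N).mpr hsum2)
        (fun k => rfl)).hasSum (fun k => by rw [Real.norm_eq_abs]; exact hXbd (k + N) ω)
    have hRtend : Tendsto R atTop (𝓝 0) := by
      have h := tendsto_sum_nat_add (fun k => (a (n + 1 + k)) ^ 2)
      exact h
    have hint : ∀ N, Integrable (fun ω => (S N ω - Y ω) ^ 2) P := by
      intro N
      refine Integrable.mono' (integrable_const ((R N) ^ 2))
        (((hSm N).sub hYm).pow_const 2).aestronglyMeasurable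
        (Eventually.of_forall fun ω => ?_)
      rw [Real.norm_eq_abs, abs_of_nonneg (sq_nonneg _)]
      have h := hdiff N ω
      nlinarith [neg_abs_le (S N ω - Y ω), le_abs_self (S N ω - Y ω)]
    have hsq : Tendsto (fun N => R N ^ 2) atTop (𝓝 0) := by
      have := hRtend.mul hRtend
      rw [mul_zero] at this
      exact this.congr fun N => (sq (R N)).symm
    exact squeeze_zero (fun N => integral_nonneg fun ω => sq_nonneg _)
      (fun N => by
        calc ∫ ω, (S N ω - Y ω) ^ 2 ∂P ≤ ∫ _ω, (R N) ^ 2 ∂P := by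
              refine integral_mono (hint N) (integrable_const _) fun ω => ?_
              have h := hdiff N ω
              nlinarith [neg_abs_le (S N ω - Y ω), le_abs_self (S N ω - Y ω)]
          _ = (R N) ^ 2 := by simp) hsq
  · -- moment bound
    intro p hp
    have hp0 : (0 : ℝ) < p := by linarith
    set q : ℝ := p / 2 with hqdef
    have hq1 : (1 : ℝ) ≤ q := by rw [hqdef]; linarith
    have hq0 : (0 : ℝ) < q := lt_of_lt_of_le one_pos hq1
    set σ2 : ℝ := α * (1 - α) * ∑' k, (a (n + 1 + k)) ^ 4 with hσ2def
    have htsum4 : (0:ℝ) ≤ ∑' k, (a (n + 1 + k)) ^ 4 := tsum_nonneg fun k => by positivity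
    have hσ2 : 0 ≤ σ2 := mul_nonneg (mul_nonneg hα0 (by linarith)) htsum4
    set σ : ℝ := Real.sqrt σ2 with hσdef
    have hσ0 : 0 ≤ σ := Real.sqrt_nonneg _
    have hσsq : σ ^ 2 = σ2 := Real.sq_sqrt hσ2
    have hsqp0 : 0 ≤ Real.sqrt p := Real.sqrt_nonneg _
    rcases eq_or_lt_of_le (ha0 n) with hc0 | hc0
    · -- a n = 0 : everything vanishes
      have hak : ∀ k, a (n + 1 + k) = 0 := fun k =>
        le_antisymm (by rw [hc0]; exact hmono (by omega)) (ha0 _)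
      have hYzero : ∀ ω, Y ω = 0 := by
        intro ω
        rw [hYdef]
        simp only []
        convert tsum_zero with k
        rw [hXdef]; simp [hak k]
      have hzero : (∫ ω, |Y ω| ^ q ∂P) = 0 := by
        rw [show (fun ω => |Y ω| ^ q) = fun _ => (0:ℝ) from funext fun ω => by
          rw [hYzero ω, abs_zero, Real.zero_rpow (ne_of_gt hq0)]]
        simp
      rw [hzero, Real.zero_rpow (by positivity)]
      positivity
    · -- main case
      set c : ℝ := (a n) ^ 2 with hcdef
      have hc : 0 < c := by positivity
      have hak_le : ∀ k, (a (n + 1 + k)) ^ 2 ≤ c := by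
        intro k
        rw [hcdef]
        have h1 : a (n + 1 + k) ≤ a n := hmono (by omega)
        nlinarith [ha0 (n + 1 + k)]
      have hsum4 : Summable (fun k => (a (n + 1 + k)) ^ 4) := by
        refine Summable.of_nonneg_of_le (fun k => by positivity) (fun k => ?_)
          (hsum2.mul_left c)
        have h := hak_le k
        nlinarith [sq_nonneg (a (n + 1 + k)), sq_nonneg ((a (n+1+k))^2)]
      -- choose lambda
      obtain ⟨lam, hlam, hlamc, hvar, hqlam⟩ :
          ∃ lam : ℝ, 0 < lam ∧ lam * c ≤ 1 ∧ lam ^ 2 * σ2 ≤ q ∧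
            q / lam ≤ q * c + Real.sqrt q * σ := by
        have hsq : Real.sqrt q ^ 2 = q := Real.sq_sqrt hq0.le
        have hsq0 : 0 < Real.sqrt q := Real.sqrt_pos.mpr hq0
        rcases le_or_gt σ (Real.sqrt q * c) with hcase | hcase
        · refine ⟨1 / c, by positivity, by rw [one_div_mul_cancel hc.ne'], ?_, ?_⟩
          · have h1 : σ2 ≤ q * c ^ 2 := by nlinarith
            rw [div_pow, one_pow, div_mul_eq_mul_div, one_mul, div_le_iff₀ (by positivity)]
            nlinarith
          · rw [div_div_eq_mul_div, div_one]
            nlinarith [mul_nonneg hsq0.le hσ0]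
        · have hσpos : 0 < σ := lt_of_le_of_lt (by positivity) hcase
          refine ⟨Real.sqrt q / σ, by positivity, ?_, ?_, ?_⟩
          · rw [div_mul_eq_mul_div, div_le_one hσpos]; exact hcase.le
          · have heq : (Real.sqrt q / σ) ^ 2 * σ2 = q := by
              rw [div_pow, hsq, ← hσsq, div_mul_cancel₀ _ (pow_ne_zero 2 hσpos.ne')]
            exact heq.le
          · have hdiv : q / (Real.sqrt q / σ) = Real.sqrt q * σ := by
              rw [div_div_eq_mul_div, mul_comm q σ, mul_div_assoc, Real.div_sqrt, mul_comm]
            rw [hdiv]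
            nlinarith [mul_nonneg hq0.le hc.le]
      -- independence
      have hκindep : iIndepFun (fun k : ℕ => κ (n + 1 + k)) P := by
        have h := iIndepFun_precomp hindep
          (u := fun k : ℕ => (Sum.inl (n + 1 + k) : ℕ ⊕ ℕ))
          (fun x y hxy => by simp only [Sum.inl.injEq] at hxy; omega)
        exact h
      have hXindep : iIndepFun X P := by
        have h2 := hκindep.comp (fun k => fun y => (y - (1 - α)) * (a (n + 1 + k)) ^ 2)
          (fun k => (measurable_id.sub_const _).mul_const _)
        exact h2
      -- per-factor mgf bound
      have hfactor : ∀ (k : ℕ) (t : ℝ), |t| ≤ lam →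
          mgf (X k) P t ≤ Real.exp (t ^ 2 * (α * (1 - α) * (a (n + 1 + k)) ^ 4)) := by
        intro k t ht
        have hmgf : mgf (X k) P t
            = ∫ ω, (fun y => Real.exp (t * ((y - (1 - α)) * (a (n + 1 + k)) ^ 2))) (κ (n + 1 + k) ω) ∂P := rfl
        rw [hmgf, integral_two_point (hκm (n+1+k)) (h01 (n+1+k)) hα0 (hκ0 (n+1+k)) (fun y => Real.exp (t * ((y - (1 - α)) * (a (n + 1 + k)) ^ 2)))]
        have habs : |t| * (a (n + 1 + k)) ^ 2 ≤ 1 := by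
          calc |t| * (a (n + 1 + k)) ^ 2 ≤ lam * c :=
              mul_le_mul ht (hak_le k) (sq_nonneg _) hlam.le
            _ ≤ 1 := hlamc
        have hb := two_point_mgf_le hα0 hα1.le (sq_nonneg (a (n + 1 + k))) habs
        calc α * Real.exp (t * ((0 - (1 - α)) * (a (n + 1 + k)) ^ 2))
              + (1 - α) * Real.exp (t * ((1 - (1 - α)) * (a (n + 1 + k)) ^ 2))
            ≤ Real.exp (t ^ 2 * (α * (1 - α) * ((a (n + 1 + k)) ^ 2) ^ 2)) := hb
          _ = Real.exp (t ^ 2 * (α * (1 - α) * (a (n + 1 + k)) ^ 4)) := by ring_nf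
      -- mgf of partial sums
      have hmgfS : ∀ (N : ℕ) (t : ℝ), |t| ≤ lam →
          (∫ ω, Real.exp (t * S N ω) ∂P) ≤ Real.exp (t ^ 2 * σ2) := by
        intro N t ht
        have hm : (∫ ω, Real.exp (t * S N ω) ∂P)
            = mgf (∑ k ∈ Finset.range N, X k) P t := by
          unfold mgf
          congr 1
          funext ω
          rw [hSdef]
          simp [Finset.sum_apply]
        rw [hm, hXindep.mgf_sum hXm]
        calc ∏ k ∈ Finset.range N, mgf (X k) P t
            ≤ ∏ k ∈ Finset.range N, Real.exp (t ^ 2 * (α * (1 - α) * (a (n + 1 + k)) ^ 4)) :=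
              Finset.prod_le_prod (fun k _ => mgf_nonneg) (fun k _ => hfactor k t ht)
          _ = Real.exp (∑ k ∈ Finset.range N, t ^ 2 * (α * (1 - α) * (a (n + 1 + k)) ^ 4)) :=
              (Real.exp_sum _ _).symm
          _ ≤ Real.exp (t ^ 2 * σ2) := by
              rw [Real.exp_le_exp]
              have hfac : ∑ k ∈ Finset.range N, t ^ 2 * (α * (1 - α) * (a (n + 1 + k)) ^ 4)
                  = t ^ 2 * (α * (1 - α)) * ∑ k ∈ Finset.range N, (a (n + 1 + k)) ^ 4 := by
                rw [Finset.mul_sum]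
                exact Finset.sum_congr rfl fun k _ => by ring
              rw [hfac, hσ2def]
              have hsle : ∑ k ∈ Finset.range N, (a (n + 1 + k)) ^ 4
                  ≤ ∑' k, (a (n + 1 + k)) ^ 4 :=
                Summable.sum_le_tsum _ (fun k _ => by positivity) hsum4
              have hnn : (0:ℝ) ≤ t ^ 2 * (α * (1 - α)) := by
                apply mul_nonneg (sq_nonneg t) (mul_nonneg hα0 (by linarith))
              nlinarith
      -- integrability
      have hIexp : ∀ (N : ℕ) (t : ℝ), Integrable (fun ω => Real.exp (t * S N ω)) P := by
        intro N t
        refine Integrable.mono' (integrable_const (Real.exp (|t| * M)))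
          (((hSm N).const_mul t).exp).aestronglyMeasurable
          (Eventually.of_forall fun ω => ?_)
        rw [Real.norm_eq_abs, Real.abs_exp, Real.exp_le_exp]
        calc t * S N ω ≤ |t * S N ω| := le_abs_self _
          _ = |t| * |S N ω| := abs_mul _ _
          _ ≤ |t| * M := mul_le_mul_of_nonneg_left (hSbd N ω) (abs_nonneg t)
      have hIabsS : ∀ N : ℕ, Integrable (fun ω => |S N ω| ^ q) P := by
        intro N
        refine Integrable.mono' (integrable_const (M ^ q))
          ((Real.continuous_rpow_const hq0.le).measurable.comp (hSm N).abs).aestronglyMeasurable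
          (Eventually.of_forall fun ω => ?_)
        rw [Real.norm_eq_abs, abs_of_nonneg (Real.rpow_nonneg (abs_nonneg _) q)]
        exact Real.rpow_le_rpow (abs_nonneg _) (hSbd N ω) hq0.le
      -- key uniform moment bound
      set K : ℝ := 2 * (p * c + Real.sqrt p * σ) with hKdef
      have hK0 : 0 ≤ K := by positivity
      have hB0 : 0 ≤ q * c + Real.sqrt q * σ := by positivity
      have hSmom : ∀ N : ℕ, ∫ ω, |S N ω| ^ q ∂P ≤ K ^ q := by
        intro N
        have step1 : ∫ ω, |S N ω| ^ q ∂P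
            ≤ (q / lam) ^ q * Real.exp (-q)
              * ((∫ ω, Real.exp (lam * S N ω) ∂P) + ∫ ω, Real.exp (-(lam * S N ω)) ∂P) := by
          have hrhs : Integrable (fun ω => (q / lam) ^ q * Real.exp (-q)
              * (Real.exp (lam * S N ω) + Real.exp (-(lam * S N ω)))) P := by
            refine Integrable.const_mul ?_ _
            refine (hIexp N lam).add ?_
            have h := hIexp N (-lam)
            refine h.congr (Eventually.of_forall fun ω => ?_)
            simp only [neg_mul]
          calc ∫ ω, |S N ω| ^ q ∂P
              ≤ ∫ ω, (q / lam) ^ q * Real.exp (-q)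
                  * (Real.exp (lam * S N ω) + Real.exp (-(lam * S N ω))) ∂P :=
                integral_mono (hIabsS N) hrhs fun ω => abs_rpow_le_exp hq1 hlam
            _ = (q / lam) ^ q * Real.exp (-q)
                * ((∫ ω, Real.exp (lam * S N ω) ∂P) + ∫ ω, Real.exp (-(lam * S N ω)) ∂P) := by
                rw [integral_const_mul]
                congr 1
                refine integral_add (hIexp N lam) ?_
                have h := hIexp N (-lam)
                refine h.congr (Eventually.of_forall fun ω => ?_)
                simp only [neg_mul]
        have hmgf1 : (∫ ω, Real.exp (lam * S N ω) ∂P) ≤ Real.exp (lam ^ 2 * σ2) :=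
          hmgfS N lam (by rw [abs_of_pos hlam])
        have hmgf2 : (∫ ω, Real.exp (-(lam * S N ω)) ∂P) ≤ Real.exp (lam ^ 2 * σ2) := by
          have h := hmgfS N (-lam) (by rw [abs_neg, abs_of_pos hlam])
          rw [show ((-lam) ^ 2 : ℝ) = lam ^ 2 by ring] at h
          calc (∫ ω, Real.exp (-(lam * S N ω)) ∂P)
              = ∫ ω, Real.exp (-lam * S N ω) ∂P := by
                congr 1; funext ω; rw [neg_mul]
            _ ≤ Real.exp (lam ^ 2 * σ2) := h
        have hql0 : 0 ≤ (q / lam) ^ q * Real.exp (-q) := by positivity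
        have step2 : ∫ ω, |S N ω| ^ q ∂P
            ≤ (q / lam) ^ q * Real.exp (-q) * (2 * Real.exp (lam ^ 2 * σ2)) := by
          refine le_trans step1 (mul_le_mul_of_nonneg_left ?_ hql0)
          linarith
        have step3 : (q / lam) ^ q * Real.exp (-q) * (2 * Real.exp (lam ^ 2 * σ2))
            ≤ 2 * (q / lam) ^ q := by
          have hexp : Real.exp (-q) * Real.exp (lam ^ 2 * σ2) ≤ 1 := by
            rw [← Real.exp_add]
            rw [show (-q + lam ^ 2 * σ2 : ℝ) = lam ^ 2 * σ2 - q by ring]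
            rw [← Real.exp_zero]
            exact Real.exp_le_exp.mpr (by linarith)
          have hpow0 : 0 ≤ (q / lam) ^ q := Real.rpow_nonneg (by positivity) q
          calc (q / lam) ^ q * Real.exp (-q) * (2 * Real.exp (lam ^ 2 * σ2))
              = 2 * ((q / lam) ^ q * (Real.exp (-q) * Real.exp (lam ^ 2 * σ2))) := by ring
            _ ≤ 2 * ((q / lam) ^ q * 1) := by
                apply mul_le_mul_of_nonneg_left _ (by norm_num : (0:ℝ) ≤ 2)
                exact mul_le_mul_of_nonneg_left hexp hpow0
            _ = 2 * (q / lam) ^ q := by ring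
        have step4 : 2 * (q / lam) ^ q ≤ K ^ q := by
          have h1 : (q / lam) ^ q ≤ (q * c + Real.sqrt q * σ) ^ q :=
            Real.rpow_le_rpow (by positivity) hqlam hq0.le
          have h2 : (2:ℝ) ≤ (2:ℝ) ^ q := by
            calc (2:ℝ) = (2:ℝ) ^ (1:ℝ) := (Real.rpow_one 2).symm
              _ ≤ (2:ℝ) ^ q := Real.rpow_le_rpow_of_exponent_le (by norm_num) hq1
          have h3 : (2:ℝ) * (q * c + Real.sqrt q * σ) ^ q
              ≤ (2:ℝ) ^ q * (q * c + Real.sqrt q * σ) ^ q :=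
            mul_le_mul_of_nonneg_right h2 (Real.rpow_nonneg hB0 q)
          have h4 : (2:ℝ) ^ q * (q * c + Real.sqrt q * σ) ^ q
              = (2 * (q * c + Real.sqrt q * σ)) ^ q :=
            (Real.mul_rpow (by norm_num) hB0).symm
          have h5 : (2 * (q * c + Real.sqrt q * σ)) ^ q ≤ K ^ q := by
            apply Real.rpow_le_rpow (by positivity) _ hq0.le
            rw [hKdef]
            have hqp : q ≤ p := by rw [hqdef]; linarith
            have hsqrtle : Real.sqrt q ≤ Real.sqrt p := Real.sqrt_le_sqrt hqp
            have := mul_le_mul_of_nonneg_right hsqrtle hσ0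
            nlinarith [mul_le_mul_of_nonneg_right hqp hc.le]
          calc 2 * (q / lam) ^ q ≤ 2 * (q * c + Real.sqrt q * σ) ^ q := by linarith
            _ ≤ (2 * (q * c + Real.sqrt q * σ)) ^ q := by rw [← h4]; exact h3
            _ ≤ K ^ q := h5
        linarith
      -- pass to the limit
      have hlim : Tendsto (fun N => ∫ ω, |S N ω| ^ q ∂P) atTop (𝓝 (∫ ω, |Y ω| ^ q ∂P)) := by
        refine tendsto_integral_of_dominated_convergence (fun _ => M ^ q)
          (fun N => ((Real.continuous_rpow_const hq0.le).measurable.comp (hSm N).abs).aestronglyMeasurable)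
          (integrable_const _)
          (fun N => Eventually.of_forall fun ω => ?_)
          (Eventually.of_forall fun ω => ?_)
        · rw [Real.norm_eq_abs, abs_of_nonneg (Real.rpow_nonneg (abs_nonneg _) q)]
          exact Real.rpow_le_rpow (abs_nonneg _) (hSbd N ω) hq0.le
        · have t1 : Tendsto (fun N => |S N ω|) atTop (𝓝 |Y ω|) :=
            (continuous_abs.tendsto _).comp (hTend ω)
          exact ((Real.continuousAt_rpow_const _ q (Or.inr hq0.le)).tendsto).comp t1
      have hfinal : ∫ ω, |Y ω| ^ q ∂P ≤ K ^ q :=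
        le_of_tendsto hlim (Eventually.of_forall hSmom)
      have hInt0 : 0 ≤ ∫ ω, |Y ω| ^ q ∂P :=
        integral_nonneg fun ω => Real.rpow_nonneg (abs_nonneg _) q
      have h2p : (2:ℝ) / p = 1 / q := by rw [hqdef, one_div_div]
      calc (∫ ω, |Y ω| ^ q ∂P) ^ ((2:ℝ) / p)
          = (∫ ω, |Y ω| ^ q ∂P) ^ ((1:ℝ) / q) := by rw [h2p]
        _ ≤ (K ^ q) ^ ((1:ℝ) / q) := Real.rpow_le_rpow hInt0 hfinal (by positivity)
        _ = K := by
            rw [← Real.rpow_mul hK0, mul_one_div_cancel hq0.ne', Real.rpow_one]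
        _ = 2 * (p * c + Real.sqrt p * σ) := hKdef
end

section
/- There exist universal constants β ∈ [1,∞) and γ ∈ (0,∞) with the following property. Assume ∑_{n≥1} a_n < ∞ and a_1 > 0, and set σ = a_1 θ_1 + ∑_{n≥2} a_n κ_n θ_n. Then for every real p ≥ 2, ℙ( σ ≥ γ · ( p·a_1 + (1−α) ∑_{n≥2} a_n ) ) ≥ (1/2) e^{−β p}. -/
open MeasureTheory ProbabilityTheory Filter Topology

namespace Stmt10Aux

/-- truncation function -/
noncomputable def g (y : ℝ) : ℝ := if 1 < y then 1 else 0

lemma measurable_g : Measurable g :=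
  Measurable.ite (measurableSet_lt measurable_const measurable_id) measurable_const
    measurable_const

lemma g_nonneg (y : ℝ) : 0 ≤ g y := by unfold g; split <;> norm_num

lemma g_le (y : ℝ) (hy : 0 ≤ y) : g y ≤ y := by
  unfold g; split <;> [linarith; exact hy]

lemma g_preimage (x y : ℝ) (hx : x = 0 ∨ x = 1) :
    x * g y = if x = 1 ∧ 1 < y then 1 else 0 := by
  unfold g
  rcases hx with h | h <;> subst h
  · simp
  · by_cases hy : 1 < y <;> simp [hy]

end Stmt10Aux

open Stmt10Aux

set_option maxHeartbeats 1000000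

theorem stmt10 :
    ∃ β γ : ℝ, 1 ≤ β ∧ 0 < γ ∧
    ∀ (Ω : Type) (_mΩ : MeasurableSpace Ω) (P : Measure Ω),
      IsProbabilityMeasure P →
      ∀ (α : ℝ) (κ θ : ℕ → Ω → ℝ) (a : ℕ → ℝ),
        0 ≤ α → α < 1 →
        (∀ n, Measurable (κ n)) →
        (∀ n, Measurable (θ n)) →
        iIndepFun (Sum.elim κ θ) P →
        (∀ n ω, κ n ω = 0 ∨ κ n ω = 1) →
        (∀ n, P {ω | κ n ω = 0} = ENNReal.ofReal α) →
        (∀ n t, 0 ≤ t → P {ω | t < θ n ω} = ENNReal.ofReal (Real.exp (-t))) →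
        (∀ n, 0 ≤ a n) → Antitone a →
        Summable a → 0 < a 0 →
        ∀ p : ℝ, 2 ≤ p →
          ENNReal.ofReal ((1 / 2) * Real.exp (-β * p))
            ≤ P {ω | γ * (p * a 0 + (1 - α) * ∑' n, a (n + 1)) ≤ a 0 * θ 0 ω + ∑' n, a (n + 1) * κ (n + 1) ω * θ (n + 1) ω} := by
  refine ⟨3, 1/12, by norm_num, by norm_num, ?_⟩
  intro Ω mΩ P hP α κ θ a hα0 hα1 hκm hθm hindep hκ01 hκ0 hθtail ha0 hanti hsum ha1pos p hp
  haveI := hP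
  classical
  -- notation
  set T : ℝ := ∑' n, a (n + 1) with hT
  have hsum' : Summable (fun n => a (n + 1)) := (summable_nat_add_iff 1).2 hsum
  have hT0 : 0 ≤ T := tsum_nonneg (fun n => ha0 _)
  set μR : ℝ := (1 - α) * T with hμR
  have hμR0 : 0 ≤ μR := mul_nonneg (by linarith) hT0
  have hp0 : 0 < p := by linarith
  -- measurability of the combined family
  have hfmeas : ∀ i, Measurable (Sum.elim κ θ i) := by
    rintro (n | n)
    · exact hκm n
    · exact hθm n
  -- θ's are a.s. positive
  have hθpos : ∀ᵐ ω ∂P, ∀ n, 0 < θ n ω := by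
    rw [ae_all_iff]
    intro n
    have h1 : P {ω | 0 < θ n ω} = 1 := by
      have := hθtail n 0 le_rfl
      simpa using this
    have hms : MeasurableSet {ω | 0 < θ n ω} := measurableSet_lt measurable_const (hθm n)
    rw [ae_iff]
    have : {ω | ¬ 0 < θ n ω} = {ω | 0 < θ n ω}ᶜ := rfl
    rw [this, measure_compl hms (measure_ne_top _ _), h1, measure_univ]
    simp
  -- terms of the series
  set h : ℕ → Ω → ℝ := fun n ω => a (n + 1) * κ (n + 1) ω * θ (n + 1) ω with hh
  have hhmeas : ∀ n, Measurable (h n) :=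
    fun n => (measurable_const.mul (hκm (n + 1))).mul (hθm (n + 1))
  -- a.s. summability of the series
  have hsummable : ∀ᵐ ω ∂P, Summable (fun n => h n ω) := by
    set F : ℕ → Ω → ENNReal := fun n ω => ENNReal.ofReal (h n ω) with hF
    have hFmeas : ∀ n, Measurable (F n) := fun n => (hhmeas n).ennreal_ofReal
    have hgeo : Summable (fun k : ℕ => Real.exp (-(k:ℝ))) := by
      have : ∀ k : ℕ, Real.exp (-(k:ℝ)) = (Real.exp (-1))^k := by
        intro k
        rw [← Real.exp_nat_mul]
        ring_nf
      have hlt : Real.exp (-1) < 1 := by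
        have h1 : Real.exp (-1) * Real.exp 1 = 1 := by
          rw [← Real.exp_add]; norm_num
        nlinarith [Real.exp_one_gt_d9, Real.exp_pos (-1)]
      exact (summable_geometric_of_lt_one (Real.exp_pos _).le hlt).congr
        (fun k => (this k).symm)
    set C : ENNReal := ENNReal.ofReal (∑' k : ℕ, Real.exp (-(k:ℝ))) with hC
    have hθint : ∀ m, ∫⁻ ω, ENNReal.ofReal (θ m ω) ∂P ≤ C := by
      intro m
      have hpt : ∀ ω, ENNReal.ofReal (θ m ω)
          ≤ ∑' k : ℕ, ({ω' | (k:ℝ) < θ m ω'}.indicator (fun _ => (1:ENNReal)) ω) := by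
        intro ω
        by_cases hy : θ m ω ≤ 0
        · rw [ENNReal.ofReal_of_nonpos hy]; exact zero_le
        push_neg at hy
        have h1 : ENNReal.ofReal (θ m ω) ≤ (⌈θ m ω⌉₊ : ENNReal) := by
          rw [← ENNReal.ofReal_natCast]
          exact ENNReal.ofReal_le_ofReal (Nat.le_ceil _)
        refine h1.trans ?_
        have h2 : ∀ k ∈ Finset.range ⌈θ m ω⌉₊,
            ({ω' | (k:ℝ) < θ m ω'}.indicator (fun _ => (1:ENNReal)) ω) = 1 := by
          intro k hk
          have hmem : ω ∈ {ω' | (k:ℝ) < θ m ω'} := Nat.lt_ceil.mp (Finset.mem_range.mp hk)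
          exact Set.indicator_of_mem hmem _
        have h3 : (⌈θ m ω⌉₊ : ENNReal)
            = ∑ k ∈ Finset.range ⌈θ m ω⌉₊,
              ({ω' | (k:ℝ) < θ m ω'}.indicator (fun _ => (1:ENNReal)) ω) := by
          rw [Finset.sum_congr rfl h2, Finset.sum_const, Finset.card_range, nsmul_eq_mul, mul_one]
        rw [h3]
        exact ENNReal.sum_le_tsum _
      calc ∫⁻ ω, ENNReal.ofReal (θ m ω) ∂P
          ≤ ∫⁻ ω, ∑' k : ℕ, ({ω' | (k:ℝ) < θ m ω'}.indicator (fun _ => (1:ENNReal)) ω) ∂P :=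
            lintegral_mono hpt
        _ = ∑' k : ℕ, P {ω' | (k:ℝ) < θ m ω'} := by
            rw [lintegral_tsum (fun k => ((Measurable.indicator measurable_const
              (measurableSet_lt measurable_const (hθm m))).aemeasurable))]
            refine tsum_congr (fun k => ?_)
            rw [lintegral_indicator_const (measurableSet_lt measurable_const (hθm m)), one_mul]
        _ = ∑' k : ℕ, ENNReal.ofReal (Real.exp (-(k:ℝ))) :=
            tsum_congr (fun k => hθtail m k (by positivity))
        _ = C := (ENNReal.ofReal_tsum_of_nonneg (fun k => (Real.exp_pos _).le) hgeo).symm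
    have hFbound : ∀ n, ∫⁻ ω, F n ω ∂P ≤ ENNReal.ofReal (a (n+1)) * C := by
      intro n
      have hpt : ∀ ω, F n ω ≤ ENNReal.ofReal (a (n+1)) * ENNReal.ofReal (θ (n+1) ω) := by
        intro ω
        rcases hκ01 (n+1) ω with hk | hk <;> rw [hF, hh] <;> simp only [hk]
        · simp
        · rw [mul_one, ENNReal.ofReal_mul (ha0 _)]
      calc ∫⁻ ω, F n ω ∂P
          ≤ ∫⁻ ω, ENNReal.ofReal (a (n+1)) * ENNReal.ofReal (θ (n+1) ω) ∂P := lintegral_mono hpt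
        _ = ENNReal.ofReal (a (n+1)) * ∫⁻ ω, ENNReal.ofReal (θ (n+1) ω) ∂P :=
            lintegral_const_mul _ ((hθm _).ennreal_ofReal)
        _ ≤ _ := mul_le_mul_right (hθint (n+1)) _
    have hlint : ∫⁻ ω, ∑' n, F n ω ∂P ≠ ⊤ := by
      rw [lintegral_tsum (fun n => (hFmeas n).aemeasurable)]
      have hb : ∑' n, ∫⁻ ω, F n ω ∂P ≤ ENNReal.ofReal T * C := by
        calc ∑' n, ∫⁻ ω, F n ω ∂P
            ≤ ∑' n, ENNReal.ofReal (a (n+1)) * C := ENNReal.tsum_le_tsum hFbound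
          _ = (∑' n, ENNReal.ofReal (a (n+1))) * C := ENNReal.tsum_mul_right
          _ = ENNReal.ofReal T * C := by
              rw [hT, ENNReal.ofReal_tsum_of_nonneg (fun n => ha0 _) hsum']
      exact ne_top_of_le_ne_top (by finiteness) hb
    have hae := ae_lt_top (Measurable.ennreal_tsum hFmeas) hlint
    filter_upwards [hae, hθpos] with ω hω hθω
    have hnn : ∀ n, 0 ≤ h n ω := by
      intro n
      rcases hκ01 (n+1) ω with hk | hk <;> rw [hh] <;> simp only [hk]
      · simp
      · have := (hθω (n+1)).le
        have := ha0 (n+1)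
        nlinarith
    exact (ENNReal.summable_toReal hω.ne).congr
      (fun n => ENNReal.toReal_ofReal (hnn n))
  -- the good a.s. event
  have hGae : ∀ᵐ ω ∂P, (∀ n, 0 < θ n ω) ∧ Summable (fun n => h n ω) := hθpos.and hsummable
  set G : Set Ω := {ω | (∀ n, 0 < θ n ω) ∧ Summable (fun n => h n ω)} with hG
  have hGc : P Gᶜ = 0 := by
    rw [ae_iff] at hGae
    simpa [G, Set.compl_setOf] using hGae
  -- the target set
  set Tgt : Set Ω := {ω | (1:ℝ)/12 * (p * a 0 + (1 - α) * ∑' n, a (n + 1)) ≤ a 0 * θ 0 ω + ∑' n, a (n + 1) * κ (n + 1) ω * θ (n + 1) ω} with hTgt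
  -- uniform facts about the tsum on G
  have htsum_ge : ∀ ω ∈ G, ∀ N : ℕ, (∑ i ∈ Finset.range N, a (i+1) * (κ (i+1) ω * g (θ (i+1) ω)))
      ≤ ∑' n, a (n + 1) * κ (n + 1) ω * θ (n + 1) ω := by
    intro ω hω N
    obtain ⟨hθw, hsw⟩ := hω
    have hterm : ∀ n, a (n+1) * (κ (n+1) ω * g (θ (n+1) ω)) ≤ h n ω := by
      intro n
      rcases hκ01 (n+1) ω with hk | hk <;> rw [hh] <;> simp only [hk]
      · simp [g_nonneg]
      · have := g_le (θ (n+1) ω) (hθw (n+1)).le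
        have := ha0 (n+1)
        nlinarith
    have hnn : ∀ n, 0 ≤ h n ω := by
      intro n
      rcases hκ01 (n+1) ω with hk | hk <;> rw [hh] <;> simp only [hk]
      · simp
      · have := (hθw (n+1)).le
        have := ha0 (n+1)
        nlinarith
    calc (∑ i ∈ Finset.range N, a (i+1) * (κ (i+1) ω * g (θ (i+1) ω)))
        ≤ ∑ i ∈ Finset.range N, h i ω := Finset.sum_le_sum (fun i _ => hterm i)
      _ ≤ ∑' n, h n ω := Summable.sum_le_tsum _ (fun i _ => hnn i) hsw
  have hAmeas : MeasurableSet {ω | (13:ℝ)/6 * p < θ 0 ω} :=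
    measurableSet_lt measurable_const (hθm 0)
  have hPA : P {ω | (13:ℝ)/6 * p < θ 0 ω} = ENNReal.ofReal (Real.exp (-(13/6 * p))) :=
    hθtail 0 _ (by positivity)
  -- final lower bound for the constant
  have hconst : (1:ℝ)/2 * Real.exp (-3 * p) ≤ 1/2 * Real.exp (-(13/6 * p)) := by
    have : (-3 : ℝ) * p ≤ -(13/6 * p) := by linarith
    have := Real.exp_le_exp.2 this
    linarith
  by_cases hcase : μR ≤ 50 * a 0
  · -- small tail case : use only θ 0
    have hsub : {ω | (13:ℝ)/6 * p < θ 0 ω} ∩ G ⊆ Tgt := by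
      intro ω ⟨hA, hωG⟩
      have h0 := htsum_ge ω hωG 0
      simp only [Finset.range_zero, Finset.sum_empty] at h0
      have : (1:ℝ)/12 * (p * a 0 + μR) ≤ a 0 * θ 0 ω + ∑' n, a (n + 1) * κ (n + 1) ω * θ (n + 1) ω := by
        have hA' : 13/6 * p < θ 0 ω := hA
        nlinarith [ha1pos, hp, hcase, hμR0]
      simpa [Tgt, hμR, hT] using this
    calc ENNReal.ofReal ((1/2) * Real.exp (-3 * p))
        ≤ ENNReal.ofReal (Real.exp (-(13/6 * p))) := by
          apply ENNReal.ofReal_le_ofReal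
          have := Real.exp_pos (-(13/6 * p))
          linarith
      _ = P ({ω | (13:ℝ)/6 * p < θ 0 ω} ∩ G) := by
          rw [measure_inter_conull hGc, hPA]
      _ ≤ P Tgt := measure_mono hsub
  · -- large tail case
    push_neg at hcase
    have hcase2 : 50 * a 0 < (1 - α) * T := by rw [← hμR]; exact hcase
    have hTpos : 0 < T := by nlinarith [mul_nonneg hα0 hT0, ha1pos]
    -- choose N with partial sum at least T/2
    obtain ⟨N, hN⟩ := (Filter.Tendsto.eventually_const_le (by linarith : T/2 < T)
      hsum'.hasSum.tendsto_sum_nat).exists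
    set TN : ℝ := ∑ i ∈ Finset.range N, a (i + 1) with hTN
    set q : ℝ := (1 - α) * Real.exp (-1) with hq
    have hexp1 : Real.exp (-1) * Real.exp 1 = 1 := by rw [← Real.exp_add]; norm_num
    have hexpinv : 1/3 ≤ Real.exp (-1) := by
      nlinarith [hexp1, Real.exp_one_lt_d9, Real.exp_pos (-1), Real.exp_pos 1]
    have hexple : Real.exp (-1) ≤ 1 := by
      nlinarith [hexp1, Real.exp_one_gt_d9, Real.exp_pos (-1)]
    have hqpos : 0 < q := by rw [hq]; exact mul_pos (by linarith) (Real.exp_pos _)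
    have hq1 : q ≤ 1 := by
      rw [hq]
      nlinarith [Real.exp_pos (-1), hα0, hα1, hexple]
    have hTNpos : 0 < TN := by linarith
    -- the elementary events
    set E : ℕ → Set Ω := fun i => κ (i+1) ⁻¹' {1} ∩ θ (i+1) ⁻¹' Set.Ioi 1 with hE
    have hEmeas : ∀ i, MeasurableSet (E i) := by
      intro i
      rw [hE]
      exact ((hκm _) (measurableSet_singleton 1)).inter ((hθm _) measurableSet_Ioi)
    have hκ1 : ∀ m, P (κ m ⁻¹' {1}) = ENNReal.ofReal (1 - α) := by
      intro m
      have hset : κ m ⁻¹' {1} = (κ m ⁻¹' {0})ᶜ := by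
        ext ω
        simp only [Set.mem_preimage, Set.mem_singleton_iff, Set.mem_compl_iff]
        rcases hκ01 m ω with hk | hk <;> simp [hk]
      have h0 : P (κ m ⁻¹' {0}) = ENNReal.ofReal α := hκ0 m
      rw [hset, measure_compl ((hκm m) (measurableSet_singleton 0)) (measure_ne_top _ _),
        measure_univ, h0, show (1:ENNReal) = ENNReal.ofReal 1 by simp,
        ← ENNReal.ofReal_sub 1 hα0]
    have hPE : ∀ i, P (E i) = ENNReal.ofReal q := by
      intro i
      have hind : IndepFun (κ (i+1)) (θ (i+1)) P :=
        hindep.indepFun (i := Sum.inl (i+1)) (j := Sum.inr (i+1)) (by simp)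
      have hIoi : P (θ (i+1) ⁻¹' Set.Ioi 1) = ENNReal.ofReal (Real.exp (-1)) :=
        hθtail (i+1) 1 zero_le_one
      rw [hE]
      rw [hind.measure_inter_preimage_eq_mul _ _ (measurableSet_singleton 1) measurableSet_Ioi,
        hκ1 (i+1), hIoi, ← ENNReal.ofReal_mul (by linarith : (0:ℝ) ≤ 1 - α), hq]
    -- the Bernoulli variables
    set Y : ℕ → Ω → ℝ := fun i ω => κ (i+1) ω * g (θ (i+1) ω) with hY
    have hYind : ∀ i, Y i = (E i).indicator (fun _ => (1:ℝ)) := by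
      intro i
      funext ω
      rw [hY]
      simp only
      rw [g_preimage _ _ (hκ01 (i+1) ω)]
      by_cases hmem : ω ∈ E i
      · rw [Set.indicator_of_mem hmem]
        have hm : κ (i+1) ω = 1 ∧ 1 < θ (i+1) ω := hmem
        simp [hm]
      · rw [Set.indicator_of_notMem hmem]
        have hm : ¬(κ (i+1) ω = 1 ∧ 1 < θ (i+1) ω) := hmem
        simp [hm]
    have hYmem : ∀ i, MemLp (Y i) 2 P :=
      fun i => (hYind i) ▸ (memLp_const (1:ℝ)).indicator (hEmeas i)
    have hYint : ∀ i, ∫ ω, Y i ω ∂P = q := by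
      intro i
      rw [hYind i, integral_indicator_const (1:ℝ) (hEmeas i), measureReal_def, hPE i,
        ENNReal.toReal_ofReal hqpos.le, smul_eq_mul, mul_one]
    have hYsq : ∀ i, (Y i)^2 = Y i := by
      intro i
      funext ω
      have hv : Y i ω = 0 ∨ Y i ω = 1 := by
        rw [hYind i]
        by_cases hm : ω ∈ E i
        · right; rw [Set.indicator_of_mem hm]
        · left; rw [Set.indicator_of_notMem hm]
      rcases hv with hv | hv <;> simp [Pi.pow_apply, hv]
    have hVarY : ∀ i, variance (Y i) P = q - q^2 := by
      intro i
      rw [variance_eq_sub (hYmem i), hYsq i, hYint i]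
    -- the scaled variables and their sum
    set Xi : ℕ → Ω → ℝ := fun i ω => a (i+1) * Y i ω with hXi
    have hXimem : ∀ i, MemLp (Xi i) 2 P := by
      intro i
      simp only [hXi]
      exact (hYmem i).const_mul _
    set X : Ω → ℝ := ∑ i ∈ Finset.range N, Xi i with hX
    have hXapp : ∀ ω, X ω = ∑ i ∈ Finset.range N, a (i+1) * Y i ω := by
      intro ω
      simp only [hX, hXi, Finset.sum_apply]
    have hXmem : MemLp X 2 P := by
      rw [hX]; exact memLp_finset_sum' _ (fun i _ => hXimem i)
    have hXmeas : Measurable X := by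
      have hXfun : X = fun ω => ∑ i ∈ Finset.range N, a (i+1) * Y i ω := funext hXapp
      rw [hXfun]
      refine Finset.measurable_sum _ (fun i _ => ?_)
      simp only [hY]
      exact ((hκm _).mul (measurable_g.comp (hθm _))).const_mul _
    have hEX : ∫ ω, X ω ∂P = q * TN := by
      have hint : ∀ i ∈ Finset.range N, Integrable (fun ω => a (i+1) * Y i ω) P :=
        fun i _ => ((hYmem i).integrable one_le_two).const_mul _
      calc ∫ ω, X ω ∂P = ∫ ω, ∑ i ∈ Finset.range N, a (i+1) * Y i ω ∂P := by
            simp only [hXapp]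
        _ = ∑ i ∈ Finset.range N, ∫ ω, a (i+1) * Y i ω ∂P := integral_finset_sum _ hint
        _ = ∑ i ∈ Finset.range N, a (i+1) * q := by
            refine Finset.sum_congr rfl fun i _ => ?_
            rw [integral_const_mul, hYint i]
        _ = q * TN := by
            rw [hTN, Finset.mul_sum]
            exact Finset.sum_congr rfl fun i _ => mul_comm _ _
    -- pairwise independence and variance bound
    have hpairind : (↑(Finset.range N) : Set ℕ).Pairwise
        (fun i j => IndepFun (Xi i) (Xi j) P) := by
      intro i _ j _ hij
      have hbase : IndepFun (fun ω => (κ (i+1) ω, θ (i+1) ω))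
          (fun ω => (κ (j+1) ω, θ (j+1) ω)) P :=
        hindep.indepFun_prodMk_prodMk hfmeas (Sum.inl (i+1)) (Sum.inr (i+1))
          (Sum.inl (j+1)) (Sum.inr (j+1))
          (by simp [hij]) (by simp) (by simp) (by simp [hij])
      have hφi : Measurable (fun pr : ℝ × ℝ => a (i+1) * (pr.1 * g pr.2)) :=
        measurable_const.mul (measurable_fst.mul (measurable_g.comp measurable_snd))
      have hφj : Measurable (fun pr : ℝ × ℝ => a (j+1) * (pr.1 * g pr.2)) :=
        measurable_const.mul (measurable_fst.mul (measurable_g.comp measurable_snd))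
      have := hbase.comp hφi hφj
      simp only [hXi, hY]
      exact this
    have hVarX : variance X P ≤ q * (a 0 * TN) := by
      have h1 : variance X P = ∑ i ∈ Finset.range N, variance (Xi i) P := by
        rw [hX]
        exact IndepFun.variance_sum (fun i _ => hXimem i) hpairind
      have h2 : ∀ i, variance (Xi i) P = (a (i+1))^2 * (q - q^2) := by
        intro i
        have he : Xi i = (a (i+1)) • Y i := by
          funext ω
          simp [hXi, smul_eq_mul]
        rw [he, variance_smul, hVarY]
      rw [h1]
      calc ∑ i ∈ Finset.range N, variance (Xi i) P
          ≤ ∑ i ∈ Finset.range N, q * (a 0 * a (i+1)) := by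
            refine Finset.sum_le_sum fun i _ => ?_
            rw [h2]
            have hai : a (i+1) ≤ a 0 := hanti (Nat.zero_le _)
            have hai0 : 0 ≤ a (i+1) := ha0 _
            have e1 : a (i+1)^2 ≤ a 0 * a (i+1) := by nlinarith
            have e2 : 0 ≤ q - q^2 := by nlinarith [hq1, hqpos]
            have t1 := mul_le_mul_of_nonneg_right e1 e2
            have t2 : a 0 * a (i+1) * (q - q^2) ≤ a 0 * a (i+1) * q :=
              mul_le_mul_of_nonneg_left (by nlinarith [sq_nonneg q])
                (mul_nonneg ha1pos.le hai0)
            nlinarith [t1, t2]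
        _ = q * (a 0 * TN) := by
            rw [hTN, Finset.mul_sum, Finset.mul_sum]
    -- Chebyshev
    set r : ℝ := q * TN / 2 with hr
    have hrpos : 0 < r := by rw [hr]; positivity
    have hcheb := meas_ge_le_variance_div_sq hXmem hrpos
    have hhalf : variance X P / r^2 ≤ 1/2 := by
      rw [div_le_iff₀ (by positivity)]
      have hqT : 25 * a 0 * Real.exp (-1) ≤ q * TN := by
        have h1 : q * (T/2) ≤ q * TN := mul_le_mul_of_nonneg_left hN hqpos.le
        have h3 : q * (T/2) = Real.exp (-1) * ((1-α) * T) / 2 := by rw [hq]; ring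
        nlinarith [Real.exp_pos (-1), hcase2]
      have h8 : 8 * a 0 ≤ q * TN := by nlinarith [hqT, hexpinv, ha1pos]
      have h9 : q * (a 0 * TN) * 8 ≤ (q * TN) * (q * TN) := by
        nlinarith [hTNpos, hqpos, ha1pos, h8]
      rw [hr]
      nlinarith [hVarX, h9]
    have hDmeas : MeasurableSet {ω | r ≤ |X ω - ∫ x, X x ∂P|} :=
      measurableSet_le measurable_const ((hXmeas.sub measurable_const).abs)
    have hPB : ENNReal.ofReal (1/2) ≤ P {ω | r ≤ X ω} := by
      have hPD : P {ω | r ≤ |X ω - ∫ x, X x ∂P|} ≤ ENNReal.ofReal (1/2) :=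
        hcheb.trans (ENNReal.ofReal_le_ofReal hhalf)
      have hsubc : {ω | r ≤ |X ω - ∫ x, X x ∂P|}ᶜ ⊆ {ω | r ≤ X ω} := by
        intro ω hω
        simp only [Set.mem_compl_iff, Set.mem_setOf_eq, not_le] at hω
        have habs := (abs_lt.1 hω).1
        rw [hEX] at habs
        simp only [Set.mem_setOf_eq]
        rw [hr] at habs ⊢
        linarith
      calc ENNReal.ofReal (1/2) = 1 - ENNReal.ofReal (1/2) := by
            rw [show (1:ENNReal) = ENNReal.ofReal 1 by simp,
              ← ENNReal.ofReal_sub 1 (by norm_num : (0:ℝ) ≤ 1/2)]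
            norm_num
        _ ≤ 1 - P {ω | r ≤ |X ω - ∫ x, X x ∂P|} := tsub_le_tsub_left hPD 1
        _ = P {ω | r ≤ |X ω - ∫ x, X x ∂P|}ᶜ := by
            rw [measure_compl hDmeas (measure_ne_top _ _), measure_univ]
        _ ≤ P {ω | r ≤ X ω} := measure_mono hsubc
    -- independence of θ 0 and X
    set S1 : Finset (ℕ ⊕ ℕ) := {Sum.inr 0} with hS1
    set T1 : Finset (ℕ ⊕ ℕ) := (Finset.range N).image (fun i => Sum.inl (i+1))
        ∪ (Finset.range N).image (fun i => Sum.inr (i+1)) with hT1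
    have hdisj : Disjoint S1 T1 := by
      rw [hS1, hT1, Finset.disjoint_left]
      intro x hx hx'
      simp only [Finset.mem_singleton] at hx
      subst hx
      simp at hx'
    have h0S1 : (Sum.inr 0 : ℕ ⊕ ℕ) ∈ S1 := by rw [hS1]; exact Finset.mem_singleton_self _
    have hmem1 : ∀ i ∈ Finset.range N, Sum.inl (i+1) ∈ T1 := by
      intro i hi
      rw [hT1]
      exact Finset.mem_union_left _ (Finset.mem_image_of_mem _ hi)
    have hmem2 : ∀ i ∈ Finset.range N, Sum.inr (i+1) ∈ T1 := by
      intro i hi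
      rw [hT1]
      exact Finset.mem_union_right _ (Finset.mem_image_of_mem _ hi)
    have hbase := hindep.indepFun_finset S1 T1 hdisj hfmeas
    have hψmeas : Measurable (fun v : (T1 → ℝ) =>
        ∑ i ∈ (Finset.range N).attach,
          a (i.1+1) * (v ⟨Sum.inl (i.1+1), hmem1 i.1 i.2⟩
            * g (v ⟨Sum.inr (i.1+1), hmem2 i.1 i.2⟩))) := by
      refine Finset.measurable_sum _ (fun i _ => ?_)
      exact measurable_const.mul ((measurable_pi_apply _).mul
        (measurable_g.comp (measurable_pi_apply _)))
    have hcomp := hbase.comp (_mγ := Real.measurableSpace) (_mγ' := Real.measurableSpace) (φ := fun v : (S1 → ℝ) => v ⟨Sum.inr 0, h0S1⟩)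
      (ψ := fun v : (T1 → ℝ) =>
        ∑ i ∈ (Finset.range N).attach,
          a (i.1+1) * (v ⟨Sum.inl (i.1+1), hmem1 i.1 i.2⟩
            * g (v ⟨Sum.inr (i.1+1), hmem2 i.1 i.2⟩)))
      (by exact measurable_pi_apply _) hψmeas
    have hindθX : IndepFun (θ 0) X P := by
      have e2 : X = (fun v : (T1 → ℝ) =>
          ∑ i ∈ (Finset.range N).attach,
            a (i.1+1) * (v ⟨Sum.inl (i.1+1), hmem1 i.1 i.2⟩
              * g (v ⟨Sum.inr (i.1+1), hmem2 i.1 i.2⟩)))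
          ∘ (fun ω (i : T1) => Sum.elim κ θ (↑i) ω) := by
        funext ω
        show X ω = ∑ i ∈ (Finset.range N).attach,
          a (i.1+1) * (κ (i.1+1) ω * g (θ (i.1+1) ω))
        rw [hXapp, ← Finset.sum_attach (Finset.range N) (fun n => a (n+1) * Y n ω)]
      rw [e2]
      exact hcomp
    have hABmul : P ({ω | (13:ℝ)/6 * p < θ 0 ω} ∩ {ω | r ≤ X ω})
        = P {ω | (13:ℝ)/6 * p < θ 0 ω} * P {ω | r ≤ X ω} :=
      hindθX.measure_inter_preimage_eq_mul (Set.Ioi ((13:ℝ)/6 * p)) (Set.Ici r)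
        measurableSet_Ioi measurableSet_Ici
    -- inclusion into the target event
    have hrge : μR / 12 ≤ r := by
      have hs0 : (0:ℝ) ≤ (1-α) * TN := mul_nonneg (by linarith) hTNpos.le
      have h1 : (1-α) * (T/2) ≤ (1-α) * TN := mul_le_mul_of_nonneg_left hN (by linarith)
      have h2 : (1-α) * TN * (1/3) ≤ (1-α) * TN * Real.exp (-1) :=
        mul_le_mul_of_nonneg_left hexpinv hs0
      rw [hr, hq, hμR]
      nlinarith [h1, h2]
    have hsub : ({ω | (13:ℝ)/6 * p < θ 0 ω} ∩ {ω | r ≤ X ω}) ∩ G ⊆ Tgt := by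
      rintro ω ⟨⟨hA, hB⟩, hωG⟩
      have hge := htsum_ge ω hωG N
      have hXeq : X ω = ∑ i ∈ Finset.range N, a (i+1) * (κ (i+1) ω * g (θ (i+1) ω)) := by
        rw [hXapp]
      have hA' : 13/6 * p < θ 0 ω := hA
      have hB' : r ≤ X ω := hB
      have h1 : r ≤ ∑' n, a (n + 1) * κ (n + 1) ω * θ (n + 1) ω := by
        rw [hXeq] at hB'
        linarith
      have hfinal : (1:ℝ)/12 * (p * a 0 + μR)
          ≤ a 0 * θ 0 ω + ∑' n, a (n + 1) * κ (n + 1) ω * θ (n + 1) ω := by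
        nlinarith [h1, hrge, ha1pos, hp, mul_lt_mul_of_pos_left hA' ha1pos]
      simpa [Tgt, hμR, hT] using hfinal
    -- final computation
    calc ENNReal.ofReal ((1/2) * Real.exp (-3 * p))
        ≤ ENNReal.ofReal (Real.exp (-(13/6 * p)) * (1/2)) := by
          apply ENNReal.ofReal_le_ofReal
          linarith [hconst]
      _ = ENNReal.ofReal (Real.exp (-(13/6 * p))) * ENNReal.ofReal (1/2) :=
          ENNReal.ofReal_mul (Real.exp_pos _).le
      _ ≤ P {ω | (13:ℝ)/6 * p < θ 0 ω} * P {ω | r ≤ X ω} := by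
          rw [hPA]
          exact mul_le_mul_right hPB _
      _ = P (({ω | (13:ℝ)/6 * p < θ 0 ω} ∩ {ω | r ≤ X ω})) := hABmul.symm
      _ = P (({ω | (13:ℝ)/6 * p < θ 0 ω} ∩ {ω | r ≤ X ω}) ∩ G) :=
          (measure_inter_conull hGc).symm
      _ ≤ P Tgt := measure_mono hsub
end

section
/- There exist universal constants β ∈ [1,∞) and γ ∈ (0,∞) with the following property. Assume ∑_{n≥1} a_n < ∞ and let T = ∑_{n≥1} a_n κ_n θ_n. For t > 0 define p_n(t) = ( t − (1−α) ∑_{k>n} a_k ) / a_n when a_n > 0 and p_n(t) = +∞ when a_n = 0. Then for every t > 0, ℙ( T ≥ γ·t ) ≤ (1−α) [ ∑_{n : p_n(t) < 2} α^{n−1} + ∑_{n : p_n(t) ≥ 2} α^{n−1} e^{−β p_n(t)} ]. -/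
open MeasureTheory ProbabilityTheory Filter Topology Set
open scoped ENNReal NNReal

lemma expMomentBound {Ω : Type} {mΩ : MeasurableSpace Ω} (P : Measure Ω) [IsProbabilityMeasure P]
    (θ : Ω → ℝ) (hθ : Measurable θ)
    (hTail : ∀ s, 0 ≤ s → P {ω | s < θ ω} = ENNReal.ofReal (Real.exp (-s)))
    (c : ℝ) (hc0 : 0 ≤ c) (hc : c ≤ 1/2) :
    ∫⁻ ω, ENNReal.ofReal (Real.exp (c * θ ω)) ∂P ≤ ENNReal.ofReal (1 / (1 - c)) := by
  rcases eq_or_lt_of_le hc0 with h0 | h0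
  · simp [← h0]
  have hc1 : c < 1 := lt_of_le_of_lt hc (by norm_num)
  have h1c : 0 < 1 - c := by linarith
  have hexp : (-1/c) < -1 := by rw [div_lt_iff₀ h0]; nlinarith
  rw [lintegral_eq_lintegral_meas_lt P (Filter.Eventually.of_forall fun ω => (Real.exp_pos _).le)
      ((Real.measurable_exp.comp (hθ.const_mul c)).aemeasurable)]
  have hsplit : (Ioi (0:ℝ)) = Ioc (0:ℝ) 1 ∪ Ioi 1 := (Set.Ioc_union_Ioi_eq_Ioi (by norm_num)).symm
  rw [hsplit, lintegral_union measurableSet_Ioi (Set.Ioc_disjoint_Ioi le_rfl)]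
  have hIoc : ∫⁻ s in Ioc (0:ℝ) 1, P {a | s < Real.exp (c * θ a)} ≤ 1 := by
    calc ∫⁻ s in Ioc (0:ℝ) 1, P {a | s < Real.exp (c * θ a)}
        ≤ ∫⁻ _ in Ioc (0:ℝ) 1, 1 := by
          refine setLIntegral_mono' measurableSet_Ioc fun s _ => prob_le_one
      _ = 1 := by simp
  have hIoi : ∫⁻ s in Ioi (1:ℝ), P {a | s < Real.exp (c * θ a)}
      = ENNReal.ofReal (c / (1 - c)) := by
    have hcongr : ∀ s ∈ Ioi (1:ℝ), P {a | s < Real.exp (c * θ a)}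
        = ENNReal.ofReal (s ^ (-1/c)) := by
      intro s hs
      have hs1 : (1:ℝ) < s := hs
      have hspos : (0:ℝ) < s := by linarith
      have hset : {a | s < Real.exp (c * θ a)} = {a | Real.log s / c < θ a} := by
        ext a
        simp only [Set.mem_setOf_eq]
        rw [div_lt_iff₀ h0, mul_comm, ← Real.log_lt_iff_lt_exp hspos]
      rw [hset, hTail _ (div_nonneg (Real.log_nonneg hs1.le) hc0)]
      congr 1
      rw [Real.rpow_def_of_pos hspos]
      ring_nf
    rw [setLIntegral_congr_fun measurableSet_Ioi hcongr]
    rw [← ofReal_integral_eq_lintegral_ofReal]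
    · rw [integral_Ioi_rpow_of_lt hexp one_pos]
      congr 1
      rw [Real.one_rpow]
      have hC : (-1:ℝ) + c ≠ 0 := by linarith
      have hB : c ≠ 0 := ne_of_gt h0
      field_simp
      ring
    · exact integrableOn_Ioi_rpow_of_lt hexp one_pos
    · refine Filter.eventually_of_mem (self_mem_ae_restrict measurableSet_Ioi) fun s hs => ?_
      exact Real.rpow_nonneg (by linarith [Set.mem_Ioi.mp hs]) _
  rw [hIoi]
  calc _ ≤ 1 + ENNReal.ofReal (c / (1-c)) := add_le_add_left hIoc _
    _ = ENNReal.ofReal (1 + c / (1-c)) := by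
        rw [ENNReal.ofReal_add (by norm_num) (by positivity), ENNReal.ofReal_one]
    _ = ENNReal.ofReal (1 / (1-c)) := by congr 1; field_simp; ring

lemma indep_prod_lintegral {Ω : Type} {mΩ : MeasurableSpace Ω} {P : Measure Ω} [IsProbabilityMeasure P]
    {κ θ : ℕ → Ω → ℝ} (hκ : ∀ n, Measurable (κ n)) (hθ : ∀ n, Measurable (θ n))
    (hindep : iIndepFun (Sum.elim κ θ) P)
    (F : ℕ → ℝ × ℝ → ℝ≥0∞) (hF : ∀ k, Measurable (F k)) (s : Finset ℕ) :
    ∫⁻ ω, ∏ k ∈ s, F k (κ k ω, θ k ω) ∂P = ∏ k ∈ s, ∫⁻ ω, F k (κ k ω, θ k ω) ∂P := by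
  classical
  have hX : ∀ i, Measurable (Sum.elim κ θ i) := by
    intro i; cases i with
    | inl k => exact hκ k
    | inr k => exact hθ k
  have hWm : ∀ k, Measurable fun ω => F k (κ k ω, θ k ω) :=
    fun k => (hF k).comp ((hκ k).prodMk (hθ k))
  induction s using Finset.induction_on with
  | empty => simp
  | @insert j s hj ih =>
    simp only [Finset.prod_insert hj]
    rw [← ih]
    have hdisj : Disjoint ({Sum.inl j, Sum.inr j} : Finset (ℕ ⊕ ℕ))
        (s.image Sum.inl ∪ s.image Sum.inr) := by
      simp only [Finset.disjoint_left, Finset.mem_insert, Finset.mem_singleton,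
        Finset.mem_union, Finset.mem_image]
      rintro i (rfl | rfl) <;> rintro (⟨k, hk, h⟩ | ⟨k, hk, h⟩) <;>
        first
        | (injection h with h'; exact hj (h' ▸ hk))
        | cases h
    have base := hindep.indepFun_finset _ _ hdisj hX
    set S : Finset (ℕ ⊕ ℕ) := ({Sum.inl j, Sum.inr j} : Finset (ℕ ⊕ ℕ))
    set Tt : Finset (ℕ ⊕ ℕ) := s.image Sum.inl ∪ s.image Sum.inr
    have hinlS : Sum.inl j ∈ S := by simp [S]
    have hinrS : Sum.inr j ∈ S := by simp [S]
    have hinlT : ∀ k ∈ s, Sum.inl k ∈ Tt := fun k hk =>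
      Finset.mem_union_left _ (Finset.mem_image_of_mem _ hk)
    have hinrT : ∀ k ∈ s, Sum.inr k ∈ Tt := fun k hk =>
      Finset.mem_union_right _ (Finset.mem_image_of_mem _ hk)
    set φ : ((i : S) → ℝ) → ℝ≥0∞ := fun x => F j (x ⟨Sum.inl j, hinlS⟩, x ⟨Sum.inr j, hinrS⟩)
    set ψ : ((i : Tt) → ℝ) → ℝ≥0∞ := fun x =>
      ∏ k ∈ s.attach, F k.1 (x ⟨Sum.inl k.1, hinlT k.1 k.2⟩, x ⟨Sum.inr k.1, hinrT k.1 k.2⟩)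
    have hφ : Measurable φ :=
      (hF j).comp ((measurable_pi_apply _).prodMk (measurable_pi_apply _))
    have hψ : Measurable ψ :=
      Finset.measurable_prod _ fun k _ =>
        (hF k.1).comp ((measurable_pi_apply _).prodMk (measurable_pi_apply _))
    have hcomp := (base.comp hφ hψ)
    have hind : IndepFun (fun ω => F j (κ j ω, θ j ω))
        (fun ω => ∏ k ∈ s, F k (κ k ω, θ k ω)) P := by
      have h2 : (fun ω => ∏ k ∈ s, F k (κ k ω, θ k ω))
          = ψ ∘ fun a (i : Tt) => Sum.elim κ θ (i : ℕ ⊕ ℕ) a := by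
        funext ω
        show _ = ∏ k ∈ s.attach, F k.1 _
        rw [← Finset.prod_attach s (fun k => F k (κ k ω, θ k ω))]
        rfl
      rw [h2]
      exact hcomp
    have := lintegral_mul_eq_lintegral_mul_lintegral_of_indepFun (hWm j)
      (Finset.measurable_prod s fun k _ => hWm k) hind
    simpa using this

lemma meas_biInter_kappa {Ω : Type} {mΩ : MeasurableSpace Ω} {P : Measure Ω}
    {κ θ : ℕ → Ω → ℝ}
    (hindep : iIndepFun (Sum.elim κ θ) P)
    (S : Finset ℕ) (B : ℕ → Set ℝ) (hB : ∀ k, MeasurableSet (B k)) :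
    P (⋂ k ∈ S, κ k ⁻¹' B k) = ∏ k ∈ S, P (κ k ⁻¹' B k) := by
  classical
  have h := hindep.meas_biInter (S := S.image (Sum.inl : ℕ → ℕ ⊕ ℕ))
    (s := fun i => Sum.elim (fun k => κ k ⁻¹' B k) (fun _ => Set.univ) i)
    (by
      rintro i hi
      simp only [Finset.mem_image] at hi
      obtain ⟨k, hk, rfl⟩ := hi
      exact ⟨B k, hB k, rfl⟩)
  have hset : (⋂ i ∈ S.image (Sum.inl : ℕ → ℕ ⊕ ℕ), Sum.elim (fun k => κ k ⁻¹' B k) (fun _ => Set.univ) i)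
      = ⋂ k ∈ S, κ k ⁻¹' B k := by
    ext ω
    simp [Finset.mem_image]
  rw [hset] at h
  rw [h, Finset.prod_image (by simp)]
  rfl

lemma ofReal_prod_exp {ι : Type*} (s : Finset ι) (g : ι → ℝ) :
    ∏ k ∈ s, ENNReal.ofReal (Real.exp (g k)) = ENNReal.ofReal (Real.exp (∑ k ∈ s, g k)) := by
  classical
  induction s using Finset.induction_on with
  | empty => simp
  | @insert j s hj ih =>
    rw [Finset.prod_insert hj, Finset.sum_insert hj, ih, Real.exp_add,
      ENNReal.ofReal_mul (Real.exp_pos _).le]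

theorem stmt11 :
    ∃ β γ : ℝ, 1 ≤ β ∧ 0 < γ ∧
    ∀ (Ω : Type) (_mΩ : MeasurableSpace Ω) (P : Measure Ω),
      IsProbabilityMeasure P →
      ∀ (α : ℝ) (κ θ : ℕ → Ω → ℝ) (a : ℕ → ℝ),
        0 ≤ α → α < 1 →
        (∀ n, Measurable (κ n)) →
        (∀ n, Measurable (θ n)) →
        iIndepFun (Sum.elim κ θ) P →
        (∀ n ω, κ n ω = 0 ∨ κ n ω = 1) →
        (∀ n, P {ω | κ n ω = 0} = ENNReal.ofReal α) →
        (∀ n t, 0 ≤ t → P {ω | t < θ n ω} = ENNReal.ofReal (Real.exp (-t))) →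
        (∀ n, 0 ≤ a n) → Antitone a →
        Summable a →
        ∀ t : ℝ, 0 < t →
          P {ω | γ * t ≤ ∑' n, a n * κ n ω * θ n ω}
            ≤ ENNReal.ofReal ((1 - α) *
              ∑' n, if 0 < a n then
                  (if (t - (1 - α) * ∑' k, a (n + 1 + k)) / a n < 2 then (α ^ n : ℝ)
                   else α ^ n * Real.exp (-β * ((t - (1 - α) * ∑' k, a (n + 1 + k)) / a n)))
                else 0) := by
  classical
  refine ⟨1, 3, le_refl 1, by norm_num, ?_⟩
  intro Ω mΩ P hP α κ θ a hα0 hα1 hκm hθm hindep hκ01 hκ0 hθtail ha0 hamono hasum t ht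
  have hα1' : (0:ℝ) < 1 - α := by linarith
  set T : Ω → ℝ := fun ω => ∑' n, a n * κ n ω * θ n ω with hTdef
  let R : ℕ → ℝ := fun n => ∑' k, a (n + 1 + k)
  let p : ℕ → ℝ := fun n => (t - (1 - α) * R n) / a n
  let f : ℕ → ℝ := fun n =>
    if 0 < a n then (if p n < 2 then (α ^ n : ℝ) else α ^ n * Real.exp (-1 * p n)) else 0
  show P {ω | 3 * t ≤ T ω} ≤ ENNReal.ofReal ((1 - α) * ∑' n, f n)
  set E : Set Ω := {ω | 3 * t ≤ T ω} with hEdef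
  set A : ℕ → Set Ω := fun n => {ω | (∀ k < n, κ k ω = 0) ∧ κ n ω = 1} with hAdef
  -- preimage basics
  have hpre0 : ∀ k, κ k ⁻¹' ({0} : Set ℝ) = {ω | κ k ω = 0} := fun k => rfl
  have hκ1 : ∀ k, P (κ k ⁻¹' ({1} : Set ℝ)) = ENNReal.ofReal (1 - α) := by
    intro k
    have hcompl : κ k ⁻¹' ({1} : Set ℝ) = {ω | κ k ω = 0}ᶜ := by
      ext ω
      simp only [Set.mem_preimage, Set.mem_singleton_iff, Set.mem_compl_iff, Set.mem_setOf_eq]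
      constructor
      · intro h h0; rw [h0] at h; norm_num at h
      · intro h; exact (hκ01 k ω).resolve_left h
    have hms : MeasurableSet {ω | κ k ω = 0} := (hκm k) (measurableSet_singleton 0)
    rw [hcompl, measure_compl hms (measure_ne_top P _),
      hκ0 k, measure_univ, ← ENNReal.ofReal_one, ← ENNReal.ofReal_sub _ hα0]
  -- Step A : covering
  have hnull : P {ω | ∀ k, κ k ω = 0} = 0 := by
    have hsub : ∀ m : ℕ, {ω | ∀ k, κ k ω = 0} ⊆ ⋂ k ∈ Finset.range m, κ k ⁻¹' ({0} : Set ℝ) := by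
      intro m ω hω
      simp only [Set.mem_iInter]
      intro k _
      exact hω k
    have hval : ∀ m : ℕ, P {ω | ∀ k, κ k ω = 0} ≤ ENNReal.ofReal α ^ m := by
      intro m
      refine (measure_mono (hsub m)).trans ?_
      rw [meas_biInter_kappa hindep _ _ (fun _ => measurableSet_singleton 0)]
      rw [Finset.prod_congr rfl (fun k _ => by rw [hpre0 k, hκ0 k]), Finset.prod_const,
        Finset.card_range]
    have hlim : Tendsto (fun m : ℕ => ENNReal.ofReal α ^ m) atTop (nhds 0) :=
      ENNReal.tendsto_pow_atTop_nhds_zero_of_lt_one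
        (by rw [← ENNReal.ofReal_one]; exact ENNReal.ofReal_lt_ofReal_iff_of_nonneg hα0 |>.mpr hα1)
    exact le_antisymm (ge_of_tendsto' hlim hval) zero_le
  have hstepA : P E ≤ ∑' n, P (A n ∩ E) := by
    have hScov : E ⊆ (⋃ n, A n ∩ E) ∪ {ω | ∀ k, κ k ω = 0} := by
      intro ω hω
      by_cases hall : ∀ k, κ k ω = 0
      · exact Or.inr hall
      · left
        push_neg at hall
        have hn := Nat.find_spec hall
        refine Set.mem_iUnion.mpr ⟨Nat.find hall, ⟨⟨?_, ?_⟩, hω⟩⟩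
        · intro k hk
          by_contra hk0
          exact Nat.find_min hall hk hk0
        · exact (hκ01 _ ω).resolve_left hn
    calc P E ≤ P ((⋃ n, A n ∩ E) ∪ {ω | ∀ k, κ k ω = 0}) := measure_mono hScov
      _ ≤ P (⋃ n, A n ∩ E) + P {ω | ∀ k, κ k ω = 0} := measure_union_le _ _
      _ = P (⋃ n, A n ∩ E) := by rw [hnull, add_zero]
      _ ≤ ∑' n, P (A n ∩ E) := measure_iUnion_le _
  -- measure of A n
  have hAn : ∀ n, P (A n) = ENNReal.ofReal ((1 - α) * α ^ n) := by
    intro n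
    have hAeq : A n = ⋂ k ∈ Finset.range (n+1),
        κ k ⁻¹' (if k < n then ({0} : Set ℝ) else {1}) := by
      ext ω
      simp only [hAdef, Set.mem_setOf_eq, Set.mem_iInter, Finset.mem_range, Set.mem_preimage]
      constructor
      · rintro ⟨h1, h2⟩ k hk
        by_cases hkn : k < n
        · simp [hkn, h1 k hkn]
        · have hkn' : k = n := by omega
          simp [hkn, hkn', h2]
      · intro h
        constructor
        · intro k hk
          have := h k (by omega)
          simpa [hk] using this
        · have := h n (by omega)
          simpa using this
    rw [hAeq, meas_biInter_kappa hindep _ _ (fun k => by split <;> exact measurableSet_singleton _),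
      Finset.prod_range_succ]
    have hlast : P (κ n ⁻¹' (if n < n then ({0} : Set ℝ) else {1})) = ENNReal.ofReal (1 - α) := by
      rw [if_neg (lt_irrefl n)]; exact hκ1 n
    have hfirst : ∀ k ∈ Finset.range n,
        P (κ k ⁻¹' (if k < n then ({0} : Set ℝ) else {1})) = ENNReal.ofReal α := by
      intro k hk
      rw [if_pos (Finset.mem_range.mp hk), hpre0 k, hκ0 k]
    rw [Finset.prod_congr rfl hfirst, Finset.prod_const, Finset.card_range, hlast,
      ← ENNReal.ofReal_pow hα0, ← ENNReal.ofReal_mul (pow_nonneg hα0 n)]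
    rw [mul_comm (α ^ n) (1 - α)] -- careful direction
  -- nonnegativity of f and R
  have hRnonneg : ∀ n, 0 ≤ R n := fun n => tsum_nonneg (fun k => ha0 _)
  have hRsummable : ∀ n, Summable (fun k => a (n + 1 + k)) := by
    intro n
    have := (summable_nat_add_iff (f := a) (n+1)).mpr hasum
    simpa [add_comm] using this
  have hfnonneg : ∀ n, 0 ≤ f n := by
    intro n
    by_cases h0 : 0 < a n
    · by_cases h2 : p n < 2
      · simp only [f, if_pos h0, if_pos h2]
        positivity
      · simp only [f, if_pos h0, if_neg h2]
        positivity
    · simp [f, h0]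
  have hfle : ∀ n, f n ≤ α ^ n := by
    intro n
    by_cases h0 : 0 < a n
    · by_cases h2 : p n < 2
      · simp [f, h0, h2]
      · simp only [f, if_pos h0, if_neg h2]
        push_neg at h2
        calc α ^ n * Real.exp (-1 * p n) ≤ α ^ n * 1 := by
              refine mul_le_mul_of_nonneg_left ?_ (pow_nonneg hα0 n)
              exact Real.exp_le_one_iff.mpr (by linarith)
          _ = α ^ n := mul_one _
    · simp only [f, if_neg h0]
      positivity
  have hsumf : Summable f :=
    Summable.of_nonneg_of_le hfnonneg hfle (summable_geometric_of_lt_one hα0 hα1)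
  -- Step B
  have hB : ∀ n, P (A n ∩ E) ≤ ENNReal.ofReal ((1 - α) * f n) := by
    intro n
    by_cases h0 : 0 < a n
    swap
    · -- a n = 0 case
      have han : a n = 0 := le_antisymm (not_lt.mp h0) (ha0 n)
      have hempty : A n ∩ E = ∅ := by
        rw [Set.eq_empty_iff_forall_notMem]
        rintro ω ⟨⟨h1, h2⟩, hE⟩
        have hT0 : T ω = 0 := by
          have hz : ∀ k, a k * κ k ω * θ k ω = 0 := by
            intro k
            rcases lt_or_ge k n with hk | hk
            · rw [h1 k hk]; ring
            · have hak : a k = 0 := le_antisymm (han ▸ hamono hk) (ha0 k)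
              rw [hak]; ring
          calc T ω = ∑' (k : ℕ), (0:ℝ) := tsum_congr hz
            _ = 0 := tsum_zero
        have : (3:ℝ) * t ≤ 0 := hT0 ▸ hE
        linarith
      rw [hempty]
      simp
    · by_cases h2 : p n < 2
      · -- easy case
        have : f n = α ^ n := by simp [f, h0, h2]
        rw [this]
        exact (measure_mono (Set.inter_subset_left)).trans (le_of_eq (hAn n))
      · -- Chernoff case
        push_neg at h2
        have hfval : f n = α ^ n * Real.exp (-1 * p n) := by simp [f, h0, not_lt.mpr h2]
        have hanne : a n ≠ 0 := ne_of_gt h0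
        set c : ℕ → ℝ := fun k => a k / (2 * a n) with hcdef
        have hcn : c n = 1/2 := by rw [hcdef]; field_simp
        have hck : ∀ k, n ≤ k → 0 ≤ c k ∧ c k ≤ 1/2 := by
          intro k hk
          constructor
          · exact div_nonneg (ha0 k) (by linarith)
          · rw [div_le_iff₀ (by linarith)]
            have := hamono hk
            linarith
        set F : ℕ → ℝ × ℝ → ℝ≥0∞ := fun k q =>
          if k < n then ({x : ℝ | x = 0}.indicator (fun _ => 1) q.1)
          else if k = n then ENNReal.ofReal q.1 * ENNReal.ofReal (Real.exp (c n * q.2))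
          else ENNReal.ofReal (Real.exp (c k * (q.1 * q.2))) with hFdef
        have hFmeas : ∀ k, Measurable (F k) := by
          intro k
          simp only [hFdef]
          split
          · exact (measurable_one.indicator (measurableSet_singleton (0:ℝ))).comp measurable_fst
          split
          · exact (ENNReal.measurable_ofReal.comp measurable_fst).mul
              (ENNReal.measurable_ofReal.comp (Real.measurable_exp.comp (measurable_snd.const_mul _)))
          · exact ENNReal.measurable_ofReal.comp
              (Real.measurable_exp.comp ((measurable_fst.mul measurable_snd).const_mul _))
        set W : ℕ → Ω → ℝ≥0∞ := fun k ω => F k (κ k ω, θ k ω) with hWdef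
        set Z : ℕ → Ω → ℝ≥0∞ := fun m ω => ∏ k ∈ Finset.range (n+1+m), W k ω with hZdef
        have hWmeas : ∀ k, Measurable (W k) := fun k => (hFmeas k).comp ((hκm k).prodMk (hθm k))
        have hZmeas : ∀ m, Measurable (Z m) := fun m => Finset.measurable_prod _ fun k _ => hWmeas k
        have hκnonneg : ∀ k ω, 0 ≤ κ k ω := by
          intro k ω
          rcases hκ01 k ω with h | h <;> rw [h] <;> norm_num
        -- integrals of factors
        have hκint : ∀ k, ∫⁻ ω, ENNReal.ofReal (κ k ω) ∂P = ENNReal.ofReal (1 - α) := by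
          intro k
          have heq : (fun ω => ENNReal.ofReal (κ k ω))
              = Set.indicator (κ k ⁻¹' ({1} : Set ℝ)) 1 := by
            funext ω
            rcases hκ01 k ω with h | h <;>
              simp [Set.indicator_apply, Set.mem_preimage, h]
          rw [heq, lintegral_indicator_one ((hκm k) (measurableSet_singleton 1))]
          exact hκ1 k
        have hpair : ∀ (k : ℕ) (g h : ℝ → ℝ≥0∞), Measurable g → Measurable h →
            ∫⁻ ω, g (κ k ω) * h (θ k ω) ∂P
              = (∫⁻ ω, g (κ k ω) ∂P) * ∫⁻ ω, h (θ k ω) ∂P := by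
          intro k g h hg hh
          have hne : (Sum.inl k : ℕ ⊕ ℕ) ≠ Sum.inr k := by simp
          have hX : ∀ i, Measurable (Sum.elim κ θ i) := by
            intro i; cases i with
            | inl j => exact hκm j
            | inr j => exact hθm j
          have hi : IndepFun (fun ω => g (κ k ω)) (fun ω => h (θ k ω)) P :=
            (hindep.indepFun hne).comp hg hh
          exact lintegral_mul_eq_lintegral_mul_lintegral_of_indepFun
            (hg.comp (hκm k)) (hh.comp (hθm k)) hi
        have hMex : ∀ k, n ≤ k →
            ∫⁻ ω, ENNReal.ofReal (Real.exp (c k * θ k ω)) ∂P ≤ ENNReal.ofReal (1/(1 - c k)) :=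
          fun k hk => expMomentBound P (θ k) (hθm k) (hθtail k) (c k) (hck k hk).1 (hck k hk).2
        -- bound on each factor integral
        have hWlt : ∀ k, k < n → ∫⁻ ω, W k ω ∂P = ENNReal.ofReal α := by
          intro k hk
          have heq : W k = Set.indicator {ω | κ k ω = 0} 1 := by
            funext ω
            simp only [hWdef, hFdef, if_pos hk]
            by_cases h : κ k ω = 0 <;> simp [Set.indicator_apply, h]
          rw [heq, lintegral_indicator_one (show MeasurableSet {ω | κ k ω = 0} from (hκm k) (measurableSet_singleton 0))]
          exact hκ0 k
        have hWn : ∫⁻ ω, W n ω ∂P ≤ ENNReal.ofReal ((1 - α) * 2) := by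
          have heq : W n = fun ω => ENNReal.ofReal (κ n ω)
              * ENNReal.ofReal (Real.exp (c n * θ n ω)) := by
            funext ω
            simp only [hWdef, hFdef, if_neg (lt_irrefl n)]
            simp
          rw [heq, hpair n ENNReal.ofReal (fun x => ENNReal.ofReal (Real.exp (c n * x)))
            ENNReal.measurable_ofReal
            (ENNReal.measurable_ofReal.comp (Real.measurable_exp.comp (measurable_id.const_mul _))),
            hκint n]
          rw [ENNReal.ofReal_mul hα1'.le]
          refine mul_le_mul_right ?_ _
          refine (hMex n le_rfl).trans (le_of_eq ?_)
          rw [hcn]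
          norm_num
        have hWgt : ∀ k, n < k →
            ∫⁻ ω, W k ω ∂P ≤ ENNReal.ofReal (Real.exp (2 * (1 - α) * c k)) := by
          intro k hk
          have heq : W k = fun ω => Set.indicator {ω | κ k ω = 0} (1 : Ω → ℝ≥0∞) ω
              + ENNReal.ofReal (κ k ω) * ENNReal.ofReal (Real.exp (c k * θ k ω)) := by
            funext ω
            simp only [hWdef, hFdef, if_neg (by omega : ¬ k < n), if_neg (by omega : ¬ k = n)]
            rcases hκ01 k ω with h | h
            · simp [Set.indicator_apply, h]
            · simp [Set.indicator_apply, h]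
          have hmeas1 : Measurable (Set.indicator {ω | κ k ω = 0} (1 : Ω → ℝ≥0∞)) :=
            measurable_one.indicator ((hκm k) (measurableSet_singleton 0))
          rw [heq, lintegral_add_left hmeas1,
            lintegral_indicator_one (show MeasurableSet {ω | κ k ω = 0} from (hκm k) (measurableSet_singleton 0)), hκ0 k,
            hpair k ENNReal.ofReal (fun x => ENNReal.ofReal (Real.exp (c k * x)))
              ENNReal.measurable_ofReal
              (ENNReal.measurable_ofReal.comp (Real.measurable_exp.comp (measurable_id.const_mul _))),
            hκint k]
          have hc1 : c k ≤ 1/2 := (hck k hk.le).2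
          have hc0' : 0 ≤ c k := (hck k hk.le).1
          have h1c : 0 < 1 - c k := by linarith
          calc ENNReal.ofReal α + ENNReal.ofReal (1 - α) * ∫⁻ ω, ENNReal.ofReal (Real.exp (c k * θ k ω)) ∂P
              ≤ ENNReal.ofReal α + ENNReal.ofReal (1 - α) * ENNReal.ofReal (1/(1 - c k)) :=
                add_le_add_right (mul_le_mul_right (hMex k hk.le) _) _
            _ = ENNReal.ofReal (α + (1 - α) * (1/(1 - c k))) := by
                rw [← ENNReal.ofReal_mul hα1'.le, ← ENNReal.ofReal_add hα0 (by positivity)]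
            _ ≤ ENNReal.ofReal (Real.exp (2 * (1 - α) * c k)) := by
                apply ENNReal.ofReal_le_ofReal
                have hstep : 1/(1 - c k) ≤ 1 + 2 * c k := by
                  rw [div_le_iff₀ h1c]
                  nlinarith
                have hstep2 : α + (1 - α) * (1/(1 - c k)) ≤ 1 + 2 * (1 - α) * c k := by
                  nlinarith
                refine hstep2.trans ?_
                have := Real.add_one_le_exp (2 * (1 - α) * c k)
                linarith
        -- bound on the integral of Z m
        have hZint : ∀ m, ∫⁻ ω, Z m ω ∂P
            ≤ ENNReal.ofReal (α ^ n * ((1 - α) * 2) * Real.exp ((1 - α) * R n / a n)) := by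
          intro m
          have hfact := indep_prod_lintegral hκm hθm hindep F hFmeas (Finset.range (n+1+m))
          have hZeq : ∫⁻ ω, Z m ω ∂P = ∏ k ∈ Finset.range (n+1+m), ∫⁻ ω, W k ω ∂P := hfact
          rw [hZeq, Finset.prod_range_add]
          have hblock1 : ∏ k ∈ Finset.range (n+1), ∫⁻ ω, W k ω ∂P
              ≤ ENNReal.ofReal (α ^ n) * ENNReal.ofReal ((1 - α) * 2) := by
            rw [Finset.prod_range_succ]
            refine mul_le_mul' (le_of_eq ?_) hWn
            rw [Finset.prod_congr rfl (fun k hk => hWlt k (Finset.mem_range.mp hk)),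
              Finset.prod_const, Finset.card_range, ← ENNReal.ofReal_pow hα0]
          have hblock2 : ∏ i ∈ Finset.range m, ∫⁻ ω, W (n+1+i) ω ∂P
              ≤ ENNReal.ofReal (Real.exp ((1 - α) * R n / a n)) := by
            calc ∏ i ∈ Finset.range m, ∫⁻ ω, W (n+1+i) ω ∂P
                ≤ ∏ i ∈ Finset.range m, ENNReal.ofReal (Real.exp (2 * (1 - α) * c (n+1+i))) :=
                  Finset.prod_le_prod' fun i _ => hWgt (n+1+i) (by omega)
              _ = ENNReal.ofReal (Real.exp (∑ i ∈ Finset.range m, 2 * (1 - α) * c (n+1+i))) :=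
                  ofReal_prod_exp _ _
              _ ≤ ENNReal.ofReal (Real.exp ((1 - α) * R n / a n)) := by
                  apply ENNReal.ofReal_le_ofReal
                  apply Real.exp_le_exp.mpr
                  have hsum : ∑ i ∈ Finset.range m, a (n+1+i) ≤ R n :=
                    Summable.sum_le_tsum _ (fun i _ => ha0 _) (hRsummable n)
                  have : ∑ i ∈ Finset.range m, 2 * (1 - α) * c (n+1+i)
                      = (1 - α) * (∑ i ∈ Finset.range m, a (n+1+i)) / a n := by
                    rw [Finset.mul_sum, Finset.sum_div]
                    apply Finset.sum_congr rfl
                    intro i _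
                    simp only [hcdef]
                    field_simp
                  rw [this]
                  gcongr
          calc (∏ k ∈ Finset.range (n+1), ∫⁻ ω, W k ω ∂P) * ∏ i ∈ Finset.range m, ∫⁻ ω, W (n+1+i) ω ∂P
              ≤ (ENNReal.ofReal (α ^ n) * ENNReal.ofReal ((1 - α) * 2))
                * ENNReal.ofReal (Real.exp ((1 - α) * R n / a n)) := mul_le_mul' hblock1 hblock2
            _ = ENNReal.ofReal (α ^ n * ((1 - α) * 2) * Real.exp ((1 - α) * R n / a n)) := by
                rw [← ENNReal.ofReal_mul (pow_nonneg hα0 n), ← ENNReal.ofReal_mul (by positivity)]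
        -- null set where some θ is negative
        have hθnull : P {ω | ¬ ∀ k, 0 ≤ θ k ω} = 0 := by
          have hsingle : ∀ k, P {ω | θ k ω < 0} = 0 := by
            intro k
            have h1 : P {ω | (0:ℝ) < θ k ω} = 1 := by
              rw [hθtail k 0 le_rfl]; simp
            have hms : MeasurableSet {ω | (0:ℝ) < θ k ω} :=
              measurableSet_lt measurable_const (hθm k)
            have hcompl : P {ω | (0:ℝ) < θ k ω}ᶜ = 0 := by
              rw [measure_compl hms (measure_ne_top P _), h1, measure_univ, tsub_self]
            refine le_antisymm (le_trans (measure_mono ?_) hcompl.le) zero_le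
            intro ω hω
            simp only [Set.mem_compl_iff, Set.mem_setOf_eq, not_lt] at *
            linarith
          have hcover : {ω | ¬ ∀ k, 0 ≤ θ k ω} ⊆ ⋃ k, {ω | θ k ω < 0} := by
            intro ω hω
            push_neg at hω
            obtain ⟨k, hk⟩ := hω
            exact Set.mem_iUnion.mpr ⟨k, hk⟩
          refine le_antisymm ((measure_mono hcover).trans ?_) zero_le
          refine (measure_iUnion_le _).trans ?_
          simp [hsingle]
        -- a.e. monotonicity of Z
        have hmono : ∀ᵐ ω ∂P, Monotone fun m => Z m ω := by
          have hae : ∀ᵐ ω ∂P, ∀ k, 0 ≤ θ k ω := by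
            rw [ae_iff]
            exact hθnull
          filter_upwards [hae] with ω hω
          intro m m' hmm'
          refine Finset.prod_le_prod_of_subset_of_one_le'
            (Finset.range_subset_range.mpr (by omega)) ?_
          intro k hk hk'
          have hkn : n < k := by
            simp only [Finset.mem_range, not_lt] at hk hk'
            omega
          simp only [hWdef, hFdef, if_neg (by omega : ¬ k < n), if_neg (by omega : ¬ k = n)]
          rw [show (1:ℝ≥0∞) = ENNReal.ofReal (Real.exp 0) by simp]
          apply ENNReal.ofReal_le_ofReal
          apply Real.exp_le_exp.mpr
          have hc0' := (hck k hkn.le).1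
          have hκ0' := hκnonneg k ω
          have hθ0' := hω k
          positivity
        set lam : ℝ := 1/(2 * a n) with hlamdef
        have hlam0 : 0 < lam := by positivity
        set D := ENNReal.ofReal (Real.exp (lam * (3 * t))) with hDdef
        -- on the good part of the event, the sup of Z dominates D
        have hDev : ∀ ω, ω ∈ A n ∩ E → (∀ k, 0 ≤ θ k ω) → D ≤ ⨆ m, Z m ω := by
          rintro ω ⟨hAn', hE'⟩ hθ0
          obtain ⟨h1, h2'⟩ := hAn'
          have hTω : 3 * t ≤ T ω := hE'
          have hsummable : Summable (fun k => a k * κ k ω * θ k ω) := by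
            by_contra hns
            have hz : T ω = 0 := tsum_eq_zero_of_not_summable hns
            rw [hz] at hTω
            linarith
          have hZeq : ∀ m, Z m ω = ENNReal.ofReal
              (Real.exp (∑ k ∈ Finset.range (n+1+m), lam * (a k * κ k ω * θ k ω))) := by
            intro m
            rw [← ofReal_prod_exp]
            apply Finset.prod_congr rfl
            intro k _
            rcases lt_trichotomy k n with hk | hk | hk
            · simp [hWdef, hFdef, hk, h1 k hk]
            · subst hk
              have hval : lam * (a k * κ k ω * θ k ω) = c k * θ k ω := by
                rw [h2', hcn, hlamdef]
                field_simp
              rw [hval]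
              simp [hWdef, hFdef, h2']
            · have hval : lam * (a k * κ k ω * θ k ω) = c k * (κ k ω * θ k ω) := by
                simp only [hlamdef, hcdef]
                field_simp
              rw [hval]
              simp only [hWdef, hFdef, if_neg (by omega : ¬ k < n), if_neg (by omega : ¬ k = n)]
          have hshift : Tendsto (fun m : ℕ => ∑ k ∈ Finset.range (n+1+m), a k * κ k ω * θ k ω)
              atTop (𝓝 (T ω)) := by
            have h' := hsummable.hasSum.tendsto_sum_nat.comp (tendsto_add_atTop_nat (n+1))
            have hfeq : (fun m : ℕ => ∑ k ∈ Finset.range (n+1+m), a k * κ k ω * θ k ω)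
                = (fun m : ℕ => ∑ k ∈ Finset.range m, a k * κ k ω * θ k ω)
                  ∘ (fun m => m + (n+1)) := by
              funext m
              simp only [Function.comp]
              rw [Nat.add_comm (n+1) m]
            rw [hfeq]
            exact h'
          have hZlim : Tendsto (fun m => Z m ω) atTop
              (𝓝 (ENNReal.ofReal (Real.exp (lam * T ω)))) := by
            simp only [hZeq]
            refine (ENNReal.continuous_ofReal.tendsto _).comp
              ((Real.continuous_exp.tendsto _).comp ?_)
            have h'' := hshift.const_mul lam
            simpa [Finset.mul_sum] using h''
          have hle1 : D ≤ ENNReal.ofReal (Real.exp (lam * T ω)) := by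
            apply ENNReal.ofReal_le_ofReal
            apply Real.exp_le_exp.mpr
            exact mul_le_mul_of_nonneg_left hTω hlam0.le
          exact hle1.trans (le_of_tendsto hZlim
            (Filter.Eventually.of_forall fun m => le_iSup (fun m => Z m ω) m))
        -- Markov
        have hmarkov : P (A n ∩ E) * D
            ≤ ENNReal.ofReal (α ^ n * ((1 - α) * 2) * Real.exp ((1 - α) * R n / a n)) := by
          have hsub2 : (A n ∩ E) ∩ {ω | ∀ k, 0 ≤ θ k ω} ⊆ {ω | D ≤ ⨆ m, Z m ω} := by
            rintro ω ⟨hω1, hω2⟩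
            exact hDev ω hω1 hω2
          have hPE : P (A n ∩ E) ≤ P {ω | D ≤ ⨆ m, Z m ω} := by
            calc P (A n ∩ E)
                ≤ P (((A n ∩ E) ∩ {ω | ∀ k, 0 ≤ θ k ω}) ∪ {ω | ¬ ∀ k, 0 ≤ θ k ω}) := by
                  apply measure_mono
                  intro ω hω
                  by_cases hg : ∀ k, 0 ≤ θ k ω
                  · exact Or.inl ⟨hω, hg⟩
                  · exact Or.inr hg
              _ ≤ P ((A n ∩ E) ∩ {ω | ∀ k, 0 ≤ θ k ω}) + P {ω | ¬ ∀ k, 0 ≤ θ k ω} :=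
                  measure_union_le _ _
              _ = P ((A n ∩ E) ∩ {ω | ∀ k, 0 ≤ θ k ω}) := by rw [hθnull, add_zero]
              _ ≤ P {ω | D ≤ ⨆ m, Z m ω} := measure_mono hsub2
          calc P (A n ∩ E) * D ≤ P {ω | D ≤ ⨆ m, Z m ω} * D := mul_le_mul_left hPE _
            _ = D * P {ω | D ≤ ⨆ m, Z m ω} := mul_comm _ _
            _ ≤ ∫⁻ ω, ⨆ m, Z m ω ∂P := mul_meas_ge_le_lintegral (Measurable.iSup hZmeas) D
            _ = ⨆ m, ∫⁻ ω, Z m ω ∂P := lintegral_iSup' (fun m => (hZmeas m).aemeasurable) hmono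
            _ ≤ _ := iSup_le hZint
        -- final arithmetic
        have hD0 : D ≠ 0 := (ENNReal.ofReal_pos.mpr (Real.exp_pos _)).ne'
        have hDtop : D ≠ ⊤ := ENNReal.ofReal_ne_top
        rw [← ENNReal.mul_le_mul_iff_left hD0 hDtop]
        refine hmarkov.trans ?_
        rw [hDdef, ← ENNReal.ofReal_mul (mul_nonneg hα1'.le (hfnonneg n))]
        apply ENNReal.ofReal_le_ofReal
        rw [hfval]
        have hpn : p n = (t - (1 - α) * R n) / a n := rfl
        have h2a : 2 * a n ≤ t := by
          have h2' := h2
          rw [hpn, le_div_iff₀ h0] at h2'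
          have hRa : 0 ≤ (1 - α) * R n := mul_nonneg hα1'.le (hRnonneg n)
          linarith
        have hexp2 : (2:ℝ) ≤ Real.exp (t/(2 * a n)) := by
          have h1le : (1:ℝ) ≤ t/(2*a n) := by
            rw [le_div_iff₀ (by positivity)]
            linarith
          calc (2:ℝ) ≤ Real.exp 1 := by linarith [Real.add_one_le_exp 1]
            _ ≤ Real.exp (t/(2*a n)) := Real.exp_le_exp.mpr h1le
        have hsplit2 : -1 * p n + lam * (3*t) = t/(2*a n) + (1-α) * R n / a n := by
          rw [hpn, hlamdef]
          field_simp
          ring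
        have e1 : Real.exp (-1 * p n) * Real.exp (lam * (3*t))
            = Real.exp (t/(2*a n)) * Real.exp ((1-α) * R n / a n) := by
          rw [← Real.exp_add, ← Real.exp_add, hsplit2]
        calc α ^ n * ((1 - α) * 2) * Real.exp ((1 - α) * R n / a n)
            ≤ α ^ n * ((1 - α) * Real.exp (t/(2*a n))) * Real.exp ((1-α) * R n / a n) := by
              refine mul_le_mul_of_nonneg_right
                (mul_le_mul_of_nonneg_left ?_ (pow_nonneg hα0 n)) (Real.exp_pos _).le
              exact mul_le_mul_of_nonneg_left hexp2 hα1'.le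
          _ = (1-α) * α^n * (Real.exp (t/(2*a n)) * Real.exp ((1-α) * R n / a n)) := by ring
          _ = (1-α) * α^n * (Real.exp (-1 * p n) * Real.exp (lam * (3*t))) := by rw [e1]
          _ = (1 - α) * (α ^ n * Real.exp (-1 * p n)) * Real.exp (lam * (3 * t)) := by ring
  calc P E ≤ ∑' n, P (A n ∩ E) := hstepA
    _ ≤ ∑' n, ENNReal.ofReal ((1 - α) * f n) := ENNReal.tsum_le_tsum hB
    _ = ENNReal.ofReal (∑' n, (1 - α) * f n) :=
        (ENNReal.ofReal_tsum_of_nonneg (fun n => mul_nonneg hα1'.le (hfnonneg n))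
          (hsumf.mul_left _)).symm
    _ = ENNReal.ofReal ((1 - α) * ∑' n, f n) := by rw [tsum_mul_left]
end

section
/- Assume ∑_{n≥1} a_n < ∞ and let T = ∑_{n≥1} a_n κ_n θ_n (the series converges almost surely). Then for every real t > 0, ℙ( T ≥ t ) = ∑_{n≥1} (1−α) α^{n−1} ℙ( a_n θ_n + ∑_{k>n} a_k κ_k θ_k ≥ t ). -/
open MeasureTheory ProbabilityTheory Filter Topology

lemma stmt13_aux {Ω β : Type*} [MeasurableSpace β] {ι : Type*}
    {F : ι → Ω → β} (s : Set ι) (i : ι) (hi : i ∈ s) :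
    Measurable[⨆ j ∈ s, MeasurableSpace.comap (F j) inferInstance] (F i) :=
  (Measurable.of_comap_le le_rfl).mono
    (le_biSup (fun j => MeasurableSpace.comap (F j) inferInstance) hi) le_rfl

set_option maxHeartbeats 1000000 in
theorem stmt13 (Ω : Type) (_mΩ : MeasurableSpace Ω) (P : Measure Ω)
    [IsProbabilityMeasure P]
    (α : ℝ) (κ θ : ℕ → Ω → ℝ) (a : ℕ → ℝ)
    (hα0 : 0 ≤ α) (hα1 : α < 1)
    (hκm : ∀ n, Measurable (κ n)) (hθm : ∀ n, Measurable (θ n))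
    (hindep : iIndepFun (Sum.elim κ θ) P)
    (hκ01 : ∀ n ω, κ n ω = 0 ∨ κ n ω = 1)
    (hκα : ∀ n, P {ω | κ n ω = 0} = ENNReal.ofReal α)
    (hθexp : ∀ n t, 0 ≤ t → P {ω | t < θ n ω} = ENNReal.ofReal (Real.exp (-t)))
    (ha0 : ∀ n, 0 ≤ a n) (hmono : Antitone a)
    (hsum : Summable a) :
    (∀ᵐ ω ∂P, Summable fun n => a n * κ n ω * θ n ω) ∧
    ∀ t : ℝ, 0 < t →
      P {ω | t ≤ ∑' n, a n * κ n ω * θ n ω}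
        = ∑' n, ENNReal.ofReal ((1 - α) * α ^ n) *
            P {ω | t ≤ a n * θ n ω + ∑' k, a (n + 1 + k) * κ (n + 1 + k) ω * θ (n + 1 + k) ω} := by
  classical
  have hκnn : ∀ n ω, 0 ≤ κ n ω := fun n ω => by
    rcases hκ01 n ω with h | h <;> rw [h] <;> norm_num
  -- θ is a.s. positive
  have hθpos : ∀ n, ∀ᵐ ω ∂P, 0 < θ n ω := by
    intro n
    have h0 : P {ω | 0 < θ n ω} = 1 := by simpa using hθexp n 0 le_rfl
    have hms : MeasurableSet {ω | 0 < θ n ω} :=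
      measurableSet_lt measurable_const (hθm n)
    have hc : P {ω | 0 < θ n ω}ᶜ = 0 := (prob_compl_eq_zero_iff hms).2 h0
    rw [ae_iff]
    exact hc
  -- expectation of θ n is 1
  have hθint : ∀ n, ∫⁻ ω, ENNReal.ofReal (θ n ω) ∂P = 1 := by
    intro n
    rw [lintegral_eq_lintegral_meas_lt P ((hθpos n).mono fun ω h => h.le)
      (hθm n).aemeasurable]
    have h1 : ∫⁻ s in Set.Ioi (0:ℝ), P {a | s < θ n a}
        = ∫⁻ s in Set.Ioi (0:ℝ), ENNReal.ofReal (Real.exp (-s)) := by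
      refine setLIntegral_congr_fun measurableSet_Ioi (fun s hs => ?_)
      exact hθexp n s (le_of_lt hs)
    rw [h1, ← ofReal_integral_eq_lintegral_ofReal]
    · rw [integral_exp_neg_Ioi_zero, ENNReal.ofReal_one]
    · have := exp_neg_integrableOn_Ioi (0:ℝ) (one_pos (α := ℝ))
      have h' : IntegrableOn (fun x : ℝ => Real.exp (-x)) (Set.Ioi 0) := by simpa using this
      exact h'
    · exact ae_of_all _ fun s => (Real.exp_pos _).le
  -- measurability of the ENNReal-valued series
  have hgm : ∀ k, Measurable fun ω => ENNReal.ofReal (a k * κ k ω * θ k ω) :=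
    fun k => ((measurable_const.mul (hκm k)).mul (hθm k)).ennreal_ofReal
  have hGm : Measurable fun ω => ∑' k, ENNReal.ofReal (a k * κ k ω * θ k ω) :=
    Measurable.ennreal_tsum hgm
  have hbound : ∀ k ω, ENNReal.ofReal (a k * κ k ω * θ k ω)
      ≤ ENNReal.ofReal (a k) * ENNReal.ofReal (θ k ω) := by
    intro k ω
    rcases hκ01 k ω with h | h
    · simp [h]
    · rw [h, mul_one, ENNReal.ofReal_mul (ha0 k)]
  have hGfin : ∫⁻ ω, (∑' k, ENNReal.ofReal (a k * κ k ω * θ k ω)) ∂P ≠ ⊤ := by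
    rw [lintegral_tsum fun k => (hgm k).aemeasurable]
    have hle : ∑' k, ∫⁻ ω, ENNReal.ofReal (a k * κ k ω * θ k ω) ∂P
        ≤ ∑' k, ENNReal.ofReal (a k) := by
      refine ENNReal.tsum_le_tsum fun k => ?_
      calc ∫⁻ ω, ENNReal.ofReal (a k * κ k ω * θ k ω) ∂P
          ≤ ∫⁻ ω, ENNReal.ofReal (a k) * ENNReal.ofReal (θ k ω) ∂P :=
            lintegral_mono fun ω => hbound k ω
        _ = ENNReal.ofReal (a k) * 1 := by
            rw [lintegral_const_mul _ (hθm k).ennreal_ofReal, hθint k]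
        _ = ENNReal.ofReal (a k) := mul_one _
    refine ne_top_of_le_ne_top ?_ hle
    rw [← ENNReal.ofReal_tsum_of_nonneg ha0 hsum]
    exact ENNReal.ofReal_ne_top
  have hfinae : ∀ᵐ ω ∂P, (∑' k, ENNReal.ofReal (a k * κ k ω * θ k ω)) < ⊤ :=
    ae_lt_top hGm hGfin
  have hθallpos : ∀ᵐ ω ∂P, ∀ k, 0 < θ k ω := ae_all_iff.2 hθpos
  have hsummand_nn : ∀ (ω : Ω), (∀ k, 0 < θ k ω) → ∀ k, 0 ≤ a k * κ k ω * θ k ω :=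
    fun ω hθ k => mul_nonneg (mul_nonneg (ha0 k) (hκnn k ω)) (hθ k).le
  have hAEsummable : ∀ᵐ ω ∂P, Summable fun n => a n * κ n ω * θ n ω := by
    filter_upwards [hfinae, hθallpos] with ω hfin hθp
    have h := ENNReal.summable_toReal hfin.ne
    refine h.congr fun k => ?_
    exact ENNReal.toReal_ofReal (hsummand_nn ω hθp k)
  refine ⟨hAEsummable, ?_⟩
  intro t ht
  -- the events of first success
  set C : ℕ → Set Ω := fun n => {ω | κ n ω = 1 ∧ ∀ k < n, κ k ω = 0} with hC
  have hmemC : ∀ n ω, ω ∈ C n ↔ (κ n ω = 1 ∧ ∀ k < n, κ k ω = 0) := fun n ω => Iff.rfl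
  have hCalt : ∀ n, C n = {ω | κ n ω = 1} ∩ ⋂ (k : ℕ), ⋂ (_ : k < n), {ω | κ k ω = 0} := by
    intro n
    ext ω
    simp [hC, Set.mem_iInter]
  have hCmeas : ∀ n, MeasurableSet (C n) := by
    intro n
    rw [hCalt]
    refine ((hκm n) (measurableSet_singleton 1)).inter ?_
    exact MeasurableSet.iInter fun k =>
      MeasurableSet.iInter fun _ => (hκm k) (measurableSet_singleton 0)
  have hCdisj : Pairwise (Function.onFun Disjoint C) := by
    intro m n hmn
    wlog h : m < n generalizing m n
    · exact (this hmn.symm (by omega)).symm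
    refine Set.disjoint_left.2 fun ω hm hn => ?_
    have h1 : κ m ω = 1 := hm.1
    have h0 : κ m ω = 0 := hn.2 m h
    rw [h0] at h1
    norm_num at h1
  -- product formula for events depending on the κ's
  have hprod : ∀ (N : ℕ) (sA : ℕ → Set Ω),
      (∀ k, MeasurableSet[MeasurableSpace.comap (κ k) inferInstance] (sA k)) →
      P (⋂ k ∈ Finset.range N, sA k) = ∏ k ∈ Finset.range N, P (sA k) := by
    intro N sA hsA
    have h := hindep.meas_biInter (S := (Finset.range N).image Sum.inl)
      (s := Sum.elim sA fun _ => Set.univ) ?_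
    · rw [Finset.set_biInter_finset_image,
        Finset.prod_image (fun x _ y _ h => Sum.inl.inj h)] at h
      simpa using h
    · rintro (k | k) hk
      · exact hsA k
      · simp at hk
  have hktail : ∀ N : ℕ, P (⋂ k ∈ Finset.range N, {ω | κ k ω = 0})
      = ENNReal.ofReal α ^ N := by
    intro N
    rw [hprod N (fun k => {ω | κ k ω = 0}) (fun k => ⟨{0}, measurableSet_singleton 0, rfl⟩)]
    simp [hκα, Finset.prod_const]
  -- almost every ω lies in some C n
  have hUnull : P (⋃ n, C n)ᶜ = 0 := by
    have hUc : (⋃ n, C n)ᶜ ⊆ ⋂ k, {ω | κ k ω = 0} := by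
      intro ω hω
      simp only [Set.mem_compl_iff, Set.mem_iUnion, not_exists] at hω
      simp only [Set.mem_iInter, Set.mem_setOf_eq]
      intro k
      induction k using Nat.strong_induction_on with
      | _ k ih =>
        by_contra hk
        have hk1 : κ k ω = 1 := (hκ01 k ω).resolve_left hk
        exact hω k ⟨hk1, fun j hj => ih j hj⟩
    have hmono' : ∀ N : ℕ, P (⋃ n, C n)ᶜ ≤ ENNReal.ofReal α ^ N := by
      intro N
      refine le_trans (measure_mono ?_) (le_of_eq (hktail N))
      refine hUc.trans fun ω hω => ?_
      simp only [Set.mem_iInter] at hω ⊢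
      intro k _
      exact hω k
    have hlim : Tendsto (fun N : ℕ => ENNReal.ofReal α ^ N) atTop (𝓝 0) := by
      have h2 : Tendsto (fun N : ℕ => ENNReal.ofReal (α ^ N)) atTop
          (𝓝 (ENNReal.ofReal 0)) :=
        (ENNReal.continuous_ofReal.tendsto 0).comp
          (tendsto_pow_atTop_nhds_zero_of_lt_one hα0 hα1)
      simpa [ENNReal.ofReal_pow hα0] using h2
    have := ge_of_tendsto' hlim hmono'
    exact le_antisymm this zero_le
  have hUae : ∀ᵐ ω ∂P, ω ∈ ⋃ n, C n := by
    rw [ae_iff]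
    exact hUnull
  -- a.e. identification of the real event with the ENNReal event
  have hLHSae : {ω | t ≤ ∑' n, a n * κ n ω * θ n ω}
      =ᵐ[P] {ω | ENNReal.ofReal t ≤ ∑' k, ENNReal.ofReal (a k * κ k ω * θ k ω)} := by
    rw [eventuallyEq_set]
    filter_upwards [hθallpos, hAEsummable] with ω hθp hs
    have hnn := hsummand_nn ω hθp
    have hOG : (∑' k, ENNReal.ofReal (a k * κ k ω * θ k ω))
        = ENNReal.ofReal (∑' n, a n * κ n ω * θ n ω) :=
      (ENNReal.ofReal_tsum_of_nonneg hnn hs).symm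
    simp only [Set.mem_setOf_eq, hOG]
    rw [ENNReal.ofReal_le_ofReal_iff (tsum_nonneg hnn)]
  have hRHSae : ∀ n : ℕ,
      {ω | t ≤ a n * θ n ω + ∑' k, a (n + 1 + k) * κ (n + 1 + k) ω * θ (n + 1 + k) ω}
      =ᵐ[P] {ω | ENNReal.ofReal t ≤ ENNReal.ofReal (a n * θ n ω)
          + ∑' k, ENNReal.ofReal (a (n + 1 + k) * κ (n + 1 + k) ω * θ (n + 1 + k) ω)} := by
    intro n
    rw [eventuallyEq_set]
    filter_upwards [hθallpos, hAEsummable] with ω hθp hs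
    have hnn := hsummand_nn ω hθp
    have htails : Summable fun k => a (n + 1 + k) * κ (n + 1 + k) ω * θ (n + 1 + k) ω := by
      refine ((summable_nat_add_iff
        (f := fun k => a k * κ k ω * θ k ω) (n + 1)).2 hs).congr fun k => ?_
      rw [Nat.add_comm k (n + 1)]
    have hGt : (∑' k, ENNReal.ofReal (a (n + 1 + k) * κ (n + 1 + k) ω * θ (n + 1 + k) ω))
        = ENNReal.ofReal (∑' k, a (n + 1 + k) * κ (n + 1 + k) ω * θ (n + 1 + k) ω) :=
      (ENNReal.ofReal_tsum_of_nonneg (fun k => hnn _) htails).symm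
    have h1 : (0:ℝ) ≤ a n * θ n ω := mul_nonneg (ha0 n) (hθp n).le
    have h2 : (0:ℝ) ≤ ∑' k, a (n + 1 + k) * κ (n + 1 + k) ω * θ (n + 1 + k) ω :=
      tsum_nonneg fun k => hnn _
    simp only [Set.mem_setOf_eq, hGt]
    rw [← ENNReal.ofReal_add h1 h2,
      ENNReal.ofReal_le_ofReal_iff (add_nonneg h1 h2)]
  -- splitting the series on C n
  have hCE : ∀ n : ℕ,
      C n ∩ {ω | ENNReal.ofReal t ≤ ∑' k, ENNReal.ofReal (a k * κ k ω * θ k ω)}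
      = C n ∩ {ω | ENNReal.ofReal t ≤ ENNReal.ofReal (a n * θ n ω)
          + ∑' k, ENNReal.ofReal (a (n + 1 + k) * κ (n + 1 + k) ω * θ (n + 1 + k) ω)} := by
    intro n
    have hsplit : ∀ ω ∈ C n, (∑' k, ENNReal.ofReal (a k * κ k ω * θ k ω))
        = ENNReal.ofReal (a n * θ n ω)
          + ∑' k, ENNReal.ofReal (a (n + 1 + k) * κ (n + 1 + k) ω * θ (n + 1 + k) ω) := by
      intro ω hω
      obtain ⟨h1, h0⟩ := (hmemC n ω).1 hω
      have hHS : HasSum (fun k => ENNReal.ofReal (a k * κ k ω * θ k ω))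
          ((∑ k ∈ Finset.range (n + 1), ENNReal.ofReal (a k * κ k ω * θ k ω))
            + ∑' k, ENNReal.ofReal (a (k + (n + 1)) * κ (k + (n + 1)) ω * θ (k + (n + 1)) ω)) :=
        HasSum.sum_range_add (ENNReal.summable.hasSum)
      rw [hHS.tsum_eq]
      congr 1
      · rw [Finset.sum_range_succ]
        have hz : ∀ k ∈ Finset.range n, ENNReal.ofReal (a k * κ k ω * θ k ω) = 0 := by
          intro k hk
          rw [h0 k (Finset.mem_range.1 hk), mul_zero, zero_mul, ENNReal.ofReal_zero]
        rw [Finset.sum_eq_zero hz, zero_add, h1, mul_one]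
      · exact tsum_congr fun k => by rw [Nat.add_comm k (n + 1)]
    ext ω
    simp only [Set.mem_inter_iff, Set.mem_setOf_eq]
    constructor
    · rintro ⟨hCω, hle'⟩
      exact ⟨hCω, by rw [← hsplit ω hCω]; exact hle'⟩
    · rintro ⟨hCω, hle'⟩
      exact ⟨hCω, by rw [hsplit ω hCω]; exact hle'⟩
  -- independence of C n and the tail event
  have hle : ∀ i : ℕ ⊕ ℕ,
      MeasurableSpace.comap (Sum.elim κ θ i) inferInstance ≤ _mΩ := by
    rintro (k | k)
    · exact (hκm k).comap_le
    · exact (hθm k).comap_le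
  have hindepCE : ∀ n : ℕ,
      P (C n ∩ {ω | ENNReal.ofReal t ≤ ENNReal.ofReal (a n * θ n ω)
          + ∑' k, ENNReal.ofReal (a (n + 1 + k) * κ (n + 1 + k) ω * θ (n + 1 + k) ω)})
      = P (C n) * P {ω | ENNReal.ofReal t ≤ ENNReal.ofReal (a n * θ n ω)
          + ∑' k, ENNReal.ofReal (a (n + 1 + k) * κ (n + 1 + k) ω * θ (n + 1 + k) ω)} := by
    intro n
    have hInd := ProbabilityTheory.indep_biSup_compl hle hindep.iIndep
      (Sum.inl '' {k | k ≤ n})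
    refine (Indep_iff _ _ _).1 hInd _ _ ?_ ?_
    · have hκM : ∀ k, k ≤ n →
          Measurable[⨆ i ∈ Sum.inl '' {k | k ≤ n},
            MeasurableSpace.comap (Sum.elim κ θ i) inferInstance] (κ k) :=
        fun k hk => stmt13_aux _ (Sum.inl k) (Set.mem_image_of_mem _ hk)
      rw [hCalt]
      refine MeasurableSet.inter ((hκM n le_rfl) (measurableSet_singleton 1)) ?_
      exact MeasurableSet.iInter fun k => MeasurableSet.iInter fun hk =>
        (hκM k hk.le) (measurableSet_singleton 0)
    · have hfm : ∀ i : ℕ ⊕ ℕ, i ∈ (Sum.inl '' {k | k ≤ n} : Set (ℕ ⊕ ℕ))ᶜ →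
          Measurable[⨆ i ∈ (Sum.inl '' {k | k ≤ n} : Set (ℕ ⊕ ℕ))ᶜ,
            MeasurableSpace.comap (Sum.elim κ θ i) inferInstance] (Sum.elim κ θ i) :=
        fun i hi => stmt13_aux _ i hi
      have hθn : Measurable[⨆ i ∈ (Sum.inl '' {k | k ≤ n} : Set (ℕ ⊕ ℕ))ᶜ,
          MeasurableSpace.comap (Sum.elim κ θ i) inferInstance] (θ n) :=
        hfm (Sum.inr n) (by simp)
      have hκk : ∀ k, Measurable[⨆ i ∈ (Sum.inl '' {k | k ≤ n} : Set (ℕ ⊕ ℕ))ᶜ,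
          MeasurableSpace.comap (Sum.elim κ θ i) inferInstance] (κ (n + 1 + k)) :=
        fun k => hfm (Sum.inl (n + 1 + k)) (by simp; omega)
      have hθk : ∀ k, Measurable[⨆ i ∈ (Sum.inl '' {k | k ≤ n} : Set (ℕ ⊕ ℕ))ᶜ,
          MeasurableSpace.comap (Sum.elim κ θ i) inferInstance] (θ (n + 1 + k)) :=
        fun k => hfm (Sum.inr (n + 1 + k)) (by simp)
      have hEm : Measurable[⨆ i ∈ (Sum.inl '' {k | k ≤ n} : Set (ℕ ⊕ ℕ))ᶜ,
          MeasurableSpace.comap (Sum.elim κ θ i) inferInstance]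
          fun ω => ENNReal.ofReal (a n * θ n ω)
            + ∑' k, ENNReal.ofReal (a (n + 1 + k) * κ (n + 1 + k) ω * θ (n + 1 + k) ω) := by
        refine Measurable.add (f := fun ω => ENNReal.ofReal (a n * θ n ω)) ?_ ?_
        · exact (measurable_const.mul hθn).ennreal_ofReal
        · exact Measurable.ennreal_tsum fun k =>
            ((measurable_const.mul (hκk k)).mul (hθk k)).ennreal_ofReal
      exact hEm measurableSet_Ici
  -- P (C n) = (1 - α) α ^ n
  have hPC : ∀ n : ℕ, P (C n) = ENNReal.ofReal ((1 - α) * α ^ n) := by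
    intro n
    have hone : P {ω | κ n ω = 1} = ENNReal.ofReal (1 - α) := by
      have hset : {ω | κ n ω = 1} = {ω | κ n ω = 0}ᶜ := by
        ext ω
        simp only [Set.mem_setOf_eq, Set.mem_compl_iff]
        constructor
        · intro h
          rw [h]
          norm_num
        · intro h
          exact (hκ01 n ω).resolve_left h
      have hms0 : MeasurableSet {ω | κ n ω = 0} := (hκm n) (measurableSet_singleton 0)
      rw [hset, prob_compl_eq_one_sub hms0, hκα n,
        ENNReal.ofReal_sub 1 hα0, ENNReal.ofReal_one]
    set sA : ℕ → Set Ω :=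
      fun k => if k = n then {ω | κ n ω = 1} else {ω | κ k ω = 0} with hsA
    have hCeq : C n = ⋂ k ∈ Finset.range (n + 1), sA k := by
      ext ω
      simp only [hmemC, Set.mem_iInter, Finset.mem_range, hsA]
      constructor
      · rintro ⟨h1, h0⟩ k hk
        by_cases hkn : k = n
        · subst hkn
          simp [h1]
        · have hlt : k < n := by omega
          simp [hkn, h0 k hlt]
      · intro h
        refine ⟨?_, fun k hk => ?_⟩
        · have := h n (by omega)
          simpa using this
        · have := h k (by omega)
          simpa [show k ≠ n by omega] using this
    have hmeas : ∀ k, MeasurableSet[MeasurableSpace.comap (κ k) inferInstance] (sA k) := by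
      intro k
      by_cases hkn : k = n
      · subst hkn
        refine ⟨{1}, measurableSet_singleton 1, ?_⟩
        simp only [hsA, if_pos rfl]
        rfl
      · refine ⟨{0}, measurableSet_singleton 0, ?_⟩
        simp only [hsA, if_neg hkn]
        rfl
    rw [hCeq, hprod (n + 1) sA hmeas, Finset.prod_range_succ]
    have hlt : ∀ k ∈ Finset.range n, P (sA k) = ENNReal.ofReal α := by
      intro k hk
      have hkn : k ≠ n := by
        have := Finset.mem_range.1 hk
        omega
      simp only [hsA, if_neg hkn]
      exact hκα k
    rw [Finset.prod_congr rfl hlt, Finset.prod_const, Finset.card_range]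
    have hsAn : P (sA n) = ENNReal.ofReal (1 - α) := by
      simp only [hsA, if_pos rfl]
      exact hone
    rw [hsAn, ENNReal.ofReal_mul (by linarith : (0:ℝ) ≤ 1 - α),
      ENNReal.ofReal_pow hα0, mul_comm]
  -- assembling everything
  calc P {ω | t ≤ ∑' n, a n * κ n ω * θ n ω}
      = P {ω | ENNReal.ofReal t ≤ ∑' k, ENNReal.ofReal (a k * κ k ω * θ k ω)} :=
        measure_congr hLHSae
    _ = P (⋃ n, C n ∩ {ω | ENNReal.ofReal t
          ≤ ∑' k, ENNReal.ofReal (a k * κ k ω * θ k ω)}) := by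
        refine measure_congr ?_
        rw [eventuallyEq_set]
        filter_upwards [hUae] with ω hω
        simp only [Set.mem_iUnion, Set.mem_inter_iff, Set.mem_setOf_eq]
        constructor
        · intro h
          obtain ⟨n, hn⟩ := Set.mem_iUnion.1 hω
          exact ⟨n, hn, h⟩
        · rintro ⟨n, _, h⟩
          exact h
    _ = ∑' n, P (C n ∩ {ω | ENNReal.ofReal t
          ≤ ∑' k, ENNReal.ofReal (a k * κ k ω * θ k ω)}) := by
        refine measure_iUnion ?_ ?_
        · intro m n hmn
          exact (hCdisj hmn).mono Set.inter_subset_left Set.inter_subset_left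
        · exact fun n => (hCmeas n).inter (hGm measurableSet_Ici)
    _ = ∑' n, ENNReal.ofReal ((1 - α) * α ^ n) *
          P {ω | t ≤ a n * θ n ω
            + ∑' k, a (n + 1 + k) * κ (n + 1 + k) ω * θ (n + 1 + k) ω} := by
        refine tsum_congr fun n => ?_
        rw [hCE n, hindepCE n, hPC n, ← measure_congr (hRHSae n)]
end
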